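/- arXiv:1712.04653 — 10 statements merged into one kernel-verified Lean document; each statement's English description precedes it below -/
import Mathlib

section
/- There exist strictly increasing functions f, g : [0,1] → [0,1] that are Lipschitz with a Lipschitz constant strictly smaller than 1 (contractions), such that f([0,1]) ∩ g([0,1]) = ∅, and such that the attractor of the iterated function system {f, g} — that is, the unique nonempty compact set A ⊆ ℝ with A = f(A) ∪ g(A) — has positive one-dimensional Lebesgue measure. -/
open Set MeasureTheory Filter ENNReal NNReal

noncomputable section

namespace CIFS

def b (n : ℕ) : ℝ := (1/2)^(n+2) + 3 * ((1/8) * (1/4)^n)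
def r (n : ℕ) : ℝ := (1/2)^(n+1) + (1/2) * (1/4)^n

lemma b_pos (n : ℕ) : 0 < b n := by unfold b; positivity
lemma r_pos (n : ℕ) : 0 < r n := by unfold r; positivity
lemma r_zero : r 0 = 1 := by norm_num [r]
lemma r_succ (n : ℕ) : r n = b n + r (n+1) := by
  simp only [r, b, pow_succ]; ring
lemma gap_eq (n : ℕ) : b n - r (n+1) = (1/4)^(n+1) := by
  simp only [r, b, pow_succ]; ring
lemma r_lt_b (n : ℕ) : r (n+1) < b n := by
  have := gap_eq n; nlinarith [pow_pos (by norm_num : (0:ℝ) < 1/4) (n+1)]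
lemma r_le_pow (n : ℕ) : r n ≤ (1/2)^n := by
  have h : ((1:ℝ)/4)^n ≤ (1/2)^n := by
    apply pow_le_pow_left₀ (by norm_num) (by norm_num)
  simp only [r, pow_succ]
  nlinarith [pow_pos (by norm_num : (0:ℝ) < 1/2) n]

lemma summable_b : Summable b := by
  have h1 : Summable (fun n : ℕ => ((1:ℝ)/2)^(n+2)) :=
    ((summable_geometric_of_lt_one (by norm_num) (by norm_num : (1:ℝ)/2 < 1)).mul_left
      (((1:ℝ)/2)^2)).congr (fun n => by rw [pow_add]; ring)
  have h2 : Summable (fun n : ℕ => 3 * (((1:ℝ)/8) * (1/4)^n)) :=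
    ((summable_geometric_of_lt_one (by norm_num) (by norm_num : (1:ℝ)/4 < 1)).mul_left
      ((3:ℝ)/8)).congr (fun n => by ring)
  exact h1.add h2

lemma summable_b_add (m : ℕ) : Summable (fun n => b (n + m)) :=
  (_root_.summable_nat_add_iff m).2 summable_b

lemma tsum_b_add (m : ℕ) : ∑' n, b (n + m) = r m := by
  have hgeo2 : ∑' n : ℕ, ((1:ℝ)/2)^n = 2 := by
    rw [tsum_geometric_of_lt_one (by norm_num) (by norm_num)]; norm_num
  have hgeo4 : ∑' n : ℕ, ((1:ℝ)/4)^n = 4/3 := by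
    rw [tsum_geometric_of_lt_one (by norm_num) (by norm_num)]; norm_num
  have hb : ∀ n : ℕ, b (n + m) =
      ((1/2)^(m+2) : ℝ) * (1/2)^n + ((3/8) * (1/4)^m) * (1/4)^n := by
    intro n; simp only [b, pow_add]; ring
  calc ∑' n, b (n + m)
      = ∑' n : ℕ, (((1/2)^(m+2) : ℝ) * (1/2)^n + ((3/8) * (1/4)^m) * (1/4)^n) := by
        exact tsum_congr hb
    _ = ((1/2)^(m+2) : ℝ) * (∑' n : ℕ, ((1:ℝ)/2)^n) + ((3/8) * (1/4)^m) * ∑' n : ℕ, ((1:ℝ)/4)^n := by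
        rw [Summable.tsum_add (((summable_geometric_of_lt_one (by norm_num) (by norm_num)).mul_left _))
          (((summable_geometric_of_lt_one (by norm_num) (by norm_num)).mul_left _)),
          _root_.tsum_mul_left, _root_.tsum_mul_left]
    _ = r m := by rw [hgeo2, hgeo4, r]; ring


def pim (m : ℕ) (ε : ℕ → Bool) : ℝ := ∑' n, if ε n then b (n + m) else 0

lemma term_nonneg (m : ℕ) (ε : ℕ → Bool) (n : ℕ) : 0 ≤ if ε n then b (n + m) else 0 := by
  split <;> [exact (b_pos _).le; rfl]

lemma term_le (m : ℕ) (ε : ℕ → Bool) (n : ℕ) : (if ε n then b (n + m) else 0) ≤ b (n + m) := by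
  split <;> [rfl; exact (b_pos _).le]

lemma summable_pim (m : ℕ) (ε : ℕ → Bool) :
    Summable (fun n => if ε n then b (n + m) else 0) :=
  Summable.of_nonneg_of_le (term_nonneg m ε) (term_le m ε) (summable_b_add m)

lemma pim_nonneg (m : ℕ) (ε : ℕ → Bool) : 0 ≤ pim m ε :=
  tsum_nonneg (term_nonneg m ε)

lemma pim_le (m : ℕ) (ε : ℕ → Bool) : pim m ε ≤ r m := by
  calc pim m ε ≤ ∑' n, b (n + m) :=
        Summable.tsum_le_tsum (term_le m ε) (summable_pim m ε) (summable_b_add m)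
    _ = r m := tsum_b_add m

def cons (c : Bool) (δ : ℕ → Bool) : ℕ → Bool := fun n => Nat.rec c (fun k _ => δ k) n

@[simp] lemma cons_zero (c : Bool) (δ : ℕ → Bool) : cons c δ 0 = c := rfl
@[simp] lemma cons_succ (c : Bool) (δ : ℕ → Bool) (n : ℕ) : cons c δ (n+1) = δ n := rfl

lemma cons_eta (δ : ℕ → Bool) : cons (δ 0) (fun n => δ (n+1)) = δ := by
  funext n; cases n <;> rfl

lemma pim_succ (m : ℕ) (ε : ℕ → Bool) :
    pim m ε = (if ε 0 then b m else 0) + pim (m+1) (fun n => ε (n+1)) := by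
  rw [pim, Summable.tsum_eq_zero_add (summable_pim m ε)]
  congr 1
  · simp
  · rw [pim]
    apply tsum_congr
    intro n
    rw [show n + 1 + m = n + (m+1) by omega]

lemma pim_cons (m : ℕ) (c : Bool) (δ : ℕ → Bool) :
    pim m (cons c δ) = (if c then b m else 0) + pim (m+1) δ := by
  rw [pim_succ]; rfl

lemma pim_split (m n : ℕ) (ε : ℕ → Bool) :
    pim m ε = (∑ k ∈ Finset.range n, if ε k then b (k + m) else 0)
      + pim (m + n) (fun j => ε (j + n)) := by
  induction n generalizing m ε with
  | zero => simp [pim]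
  | succ n ih =>
    rw [ih m ε, Finset.sum_range_succ, pim_succ (m+n) (fun j => ε (j+n)), ← add_assoc]
    congr 1
    · simp [Nat.add_comm]
    · rw [show m + n + 1 = m + (n+1) by omega]
      congr 1
      funext j
      rw [show j + 1 + n = j + (n+1) by omega]


lemma pim_lt {n : ℕ} (m : ℕ) {ε δ : ℕ → Bool} (hpre : ∀ k < n, ε k = δ k)
    (he : ε n = false) (hd : δ n = true) :
    pim m ε + (1/4)^(m+n+1) ≤ pim m δ := by
  rw [pim_split m n ε, pim_split m n δ]
  have hP : (∑ k ∈ Finset.range n, if ε k then b (k+m) else 0)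
      = ∑ k ∈ Finset.range n, if δ k then b (k+m) else 0 :=
    Finset.sum_congr rfl (fun k hk => by rw [hpre k (Finset.mem_range.1 hk)])
  rw [hP]
  have h1 : pim (m+n) (fun j => ε (j+n)) ≤ r (m+n+1) := by
    rw [pim_succ]
    simp only [Nat.zero_add, he, if_false, Bool.false_eq_true, zero_add]
    exact pim_le _ _
  have h2 : b (m+n) ≤ pim (m+n) (fun j => δ (j+n)) := by
    rw [pim_succ]
    simp only [Nat.zero_add, hd, if_true]
    have := pim_nonneg (m+n+1) (fun j => δ (j+1+n))
    linarith
  have h3 := gap_eq (m+n)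
  have : (1/4 : ℝ)^(m+n+1) = (1/4)^(m+n+1) := rfl
  linarith

lemma continuous_pim (m : ℕ) : Continuous (pim m) := by
  apply continuous_tsum (u := fun n => b (n+m))
  · intro i
    exact Continuous.comp (continuous_of_discreteTopology
      (f := fun t : Bool => if t then b (i+m) else 0)) (continuous_apply i)
  · exact summable_b_add m
  · intro n ε
    rw [Real.norm_eq_abs, abs_of_nonneg (term_nonneg m ε n)]
    exact term_le m ε n

def T (m : ℕ) : Set ℝ := Set.range (pim m)

lemma isCompact_T (m : ℕ) : IsCompact (T m) := isCompact_range (continuous_pim m)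

lemma T_subset (m : ℕ) : T m ⊆ Icc 0 (r m) := by
  rintro x ⟨ε, rfl⟩; exact ⟨pim_nonneg m ε, pim_le m ε⟩

lemma T_succ (m : ℕ) : T m = T (m+1) ∪ (fun x => b m + x) '' T (m+1) := by
  ext x
  constructor
  · rintro ⟨ε, rfl⟩
    rw [← cons_eta ε, pim_cons]
    cases h : ε 0
    · left; simp only [h, Bool.false_eq_true, if_false, zero_add]
      exact ⟨_, rfl⟩
    · right; exact ⟨pim (m+1) (fun n => ε (n+1)), ⟨_, rfl⟩, by simp [h]⟩
  · rintro (⟨δ, rfl⟩ | ⟨y, ⟨δ, rfl⟩, rfl⟩)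
    · exact ⟨cons false δ, by simp [pim_cons]⟩
    · exact ⟨cons true δ, by simp [pim_cons]⟩


lemma vol_translate (a : ℝ) (s : Set ℝ) : volume ((fun x => a + x) '' s) = volume s := by
  rw [Set.image_add_left]; exact MeasureTheory.measure_preimage_add volume (-a) s

lemma vol_T_succ (m : ℕ) : volume (T m) = 2 * volume (T (m+1)) := by
  rw [T_succ m]
  have hdisj : Disjoint (T (m+1)) ((fun x => b m + x) '' T (m+1)) := by
    rw [Set.disjoint_left]
    rintro x hx ⟨y, hy, rfl⟩
    have h1 : b m + y ≤ r (m+1) := (T_subset (m+1) hx).2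
    have h2 : 0 ≤ y := (T_subset (m+1) hy).1
    have := r_lt_b m
    linarith
  have hmeas : MeasurableSet ((fun x => b m + x) '' T (m+1)) :=
    (((isCompact_T (m+1)).image (continuous_const.add continuous_id)).isClosed).measurableSet
  rw [measure_union hdisj hmeas, vol_translate, two_mul]

lemma vol_T_pow (m : ℕ) : volume (T 0) = 2^m * volume (T m) := by
  induction m with
  | zero => simp
  | succ m ih => rw [ih, vol_T_succ m, pow_succ]; ring

lemma vol_T_ne_top (m : ℕ) : volume (T m) ≠ ⊤ := by
  have h := measure_mono (μ := volume) (T_subset m)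
  rw [Real.volume_Icc] at h
  exact (h.trans_lt ENNReal.ofReal_lt_top).ne

lemma vol_T0_le : volume (T 0) ≤ ENNReal.ofReal (1/2) := by
  apply ENNReal.le_of_forall_pos_le_add
  intro ε hε _
  obtain ⟨m, hm⟩ := exists_pow_lt_of_lt_one (show (0:ℝ) < (ε:ℝ) by exact_mod_cast hε)
    (by norm_num : (1:ℝ)/2 < 1)
  have h1 : volume (T 0) ≤ ENNReal.ofReal (2^m * r m) := by
    rw [vol_T_pow m]
    calc (2:ℝ≥0∞)^m * volume (T m) ≤ 2^m * ENNReal.ofReal (r m) := by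
          apply mul_le_mul_right
          have h := measure_mono (μ := volume) (T_subset m)
          rwa [Real.volume_Icc, sub_zero] at h
      _ = ENNReal.ofReal (2^m * r m) := by
          rw [ENNReal.ofReal_mul (by positivity)]
          congr 1
          rw [ENNReal.ofReal_pow (by norm_num)]
          norm_num
  refine h1.trans ?_
  have h2 : (2:ℝ)^m * r m ≤ 1/2 + (1/2)^(m+1) := by
    have he : (2:ℝ)^m * r m = 1/2 + (1/2) * (1/2)^m := by
      simp only [r]
      rw [show ((1:ℝ)/4) = (1/2)*(1/2) by norm_num, mul_pow, pow_succ]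
      have h2m : (2:ℝ)^m * (1/2)^m = 1 := by
        rw [← mul_pow]; norm_num
      linear_combination (1/2 + (1/2)*(1/2:ℝ)^m) * h2m
    rw [he, pow_succ]; nlinarith [pow_pos (by norm_num : (0:ℝ) < 1/2) m]
  have h3 : ENNReal.ofReal ((1/2:ℝ)^(m+1)) ≤ (ε : ℝ≥0∞) := by
    have hle : ((1:ℝ)/2)^(m+1) ≤ (ε:ℝ) := by
      have : ((1:ℝ)/2)^(m+1) ≤ (1/2)^m := by
        apply pow_le_pow_of_le_one (by norm_num) (by norm_num)
        omega
      linarith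
    calc ENNReal.ofReal ((1/2:ℝ)^(m+1)) ≤ ENNReal.ofReal (ε:ℝ) :=
          ENNReal.ofReal_le_ofReal hle
      _ = (ε : ℝ≥0∞) := ENNReal.ofReal_coe_nnreal
  calc ENNReal.ofReal (2^m * r m) ≤ ENNReal.ofReal (1/2 + (1/2)^(m+1)) :=
        ENNReal.ofReal_le_ofReal h2
    _ ≤ ENNReal.ofReal (1/2) + ENNReal.ofReal ((1/2)^(m+1)) := ENNReal.ofReal_add_le
    _ ≤ ENNReal.ofReal (1/2) + ε := add_le_add_right h3 _


def greedy (x : ℝ) : ℕ → ℝ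
  | 0 => 0
  | n+1 => if greedy x n + b n ≤ x then greedy x n + b n else greedy x n

def geps (x : ℝ) (n : ℕ) : Bool := decide (greedy x n + b n ≤ x)

lemma greedy_succ (x : ℝ) (n : ℕ) :
    greedy x (n+1) = greedy x n + (if geps x n then b n else 0) := by
  rw [greedy, geps]
  by_cases h : greedy x n + b n ≤ x <;> simp [h]

lemma greedy_sum (x : ℝ) (n : ℕ) :
    greedy x n = ∑ k ∈ Finset.range n, (if geps x k then b k else 0) := by
  induction n with
  | zero => simp [greedy]
  | succ n ih => rw [greedy_succ, Finset.sum_range_succ, ih]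

lemma greedy_sum_filter (x : ℝ) (n : ℕ) :
    greedy x n = ∑ k ∈ (Finset.range n).filter (fun k => geps x k = true), b k := by
  rw [greedy_sum, Finset.sum_filter]

def G : Set ℝ := ⋃ (n : ℕ), ⋃ (t ∈ (Finset.range n).powerset),
  Ioo ((∑ k ∈ t, b k) + r (n+1)) ((∑ k ∈ t, b k) + b n)

lemma greedy_invariant {x : ℝ} (h0 : 0 ≤ x) (h1 : x ≤ 1) (hG : x ∉ G) :
    ∀ n, greedy x n ≤ x ∧ x ≤ greedy x n + r n := by
  intro n
  induction n with
  | zero => simpa [greedy, r_zero] using ⟨h0, h1⟩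
  | succ n ih =>
    obtain ⟨ihl, ihr⟩ := ih
    by_cases h : greedy x n + b n ≤ x
    · have hg : greedy x (n+1) = greedy x n + b n := by rw [greedy, if_pos h]
      refine ⟨by rw [hg]; exact h, ?_⟩
      rw [hg]
      have := r_succ n
      linarith
    · have hg : greedy x (n+1) = greedy x n := by rw [greedy, if_neg h]
      refine ⟨by rw [hg]; exact ihl, ?_⟩
      rw [hg]
      by_contra hc
      push_neg at hc
      apply hG
      refine Set.mem_iUnion.2 ⟨n, Set.mem_iUnion.2
        ⟨(Finset.range n).filter (fun k => geps x k = true), Set.mem_iUnion.2 ⟨?_, ?_⟩⟩⟩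
      · exact Finset.mem_powerset.2 (Finset.filter_subset _ _)
      · rw [← greedy_sum_filter]
        exact ⟨hc, by push_neg at h; exact h⟩

lemma mem_T0_of_notG {x : ℝ} (h0 : 0 ≤ x) (h1 : x ≤ 1) (hG : x ∉ G) : x ∈ T 0 := by
  refine ⟨geps x, ?_⟩
  have key : ∀ n, |pim 0 (geps x) - x| ≤ r n := by
    intro n
    obtain ⟨hl, hr⟩ := greedy_invariant h0 h1 hG n
    have hsplit := pim_split 0 n (geps x)
    have hpre : (∑ k ∈ Finset.range n, if geps x k then b (k + 0) else 0) = greedy x n := by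
      rw [greedy_sum]
      exact Finset.sum_congr rfl (fun k _ => by rw [Nat.add_zero])
    rw [hpre] at hsplit
    simp only [Nat.zero_add] at hsplit
    have ht0 : 0 ≤ pim n (fun j => geps x (j + n)) := pim_nonneg _ _
    have ht1 : pim n (fun j => geps x (j + n)) ≤ r n := pim_le _ _
    rw [abs_le]
    constructor <;> [linarith [hsplit]; linarith [hsplit]]
  have habs : |pim 0 (geps x) - x| ≤ 0 := by
    by_contra hc
    push_neg at hc
    obtain ⟨n, hn⟩ := exists_pow_lt_of_lt_one hc (by norm_num : (1:ℝ)/2 < 1)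
    exact absurd ((key n).trans (r_le_pow n)) (not_le.2 hn)
  have : pim 0 (geps x) = x := by
    have := abs_nonneg (pim 0 (geps x) - x)
    have h2 : |pim 0 (geps x) - x| = 0 := le_antisymm habs this
    linarith [abs_eq_zero.1 h2, sub_eq_zero.1 (abs_eq_zero.1 h2)]
  exact this


lemma vol_G_le : volume G ≤ ENNReal.ofReal (1/2) := by
  have hstep : ∀ n : ℕ, volume (⋃ (t ∈ (Finset.range n).powerset),
      Ioo ((∑ k ∈ t, b k) + r (n+1)) ((∑ k ∈ t, b k) + b n))
      ≤ (2:ℝ≥0∞)^n * ENNReal.ofReal ((1/4)^(n+1)) := by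
    intro n
    calc volume (⋃ (t ∈ (Finset.range n).powerset),
        Ioo ((∑ k ∈ t, b k) + r (n+1)) ((∑ k ∈ t, b k) + b n))
        ≤ ∑ t ∈ (Finset.range n).powerset,
          volume (Ioo ((∑ k ∈ t, b k) + r (n+1)) ((∑ k ∈ t, b k) + b n)) :=
          measure_biUnion_finset_le _ _
      _ = ∑ t ∈ (Finset.range n).powerset, ENNReal.ofReal ((1/4)^(n+1)) := by
          apply Finset.sum_congr rfl
          intro t _
          rw [Real.volume_Ioo]
          congr 1
          have := gap_eq n
          linarith
      _ = (2:ℝ≥0∞)^n * ENNReal.ofReal ((1/4)^(n+1)) := by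
          rw [Finset.sum_const, Finset.card_powerset, Finset.card_range, nsmul_eq_mul]
          norm_cast
  calc volume G ≤ ∑' n : ℕ, volume (⋃ (t ∈ (Finset.range n).powerset),
        Ioo ((∑ k ∈ t, b k) + r (n+1)) ((∑ k ∈ t, b k) + b n)) := measure_iUnion_le _
    _ ≤ ∑' n : ℕ, (2:ℝ≥0∞)^n * ENNReal.ofReal ((1/4)^(n+1)) := ENNReal.tsum_le_tsum hstep
    _ = ∑' n : ℕ, ENNReal.ofReal ((1/4) * (1/2)^n) := by
        apply tsum_congr
        intro n
        rw [show ((1:ℝ)/4) * (1/2)^n = (2:ℝ)^n * (1/4)^(n+1) by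
          rw [pow_succ]
          have : (2:ℝ)^n * (1/4)^n = (1/2)^n := by
            rw [← mul_pow]; norm_num
          nlinarith [this]]
        rw [ENNReal.ofReal_mul (by positivity)]
        congr 1
        rw [ENNReal.ofReal_pow (by norm_num)]
        norm_num
    _ = ENNReal.ofReal (1/2) := by
        have hsum : ∀ n : ℕ, ENNReal.ofReal ((1/4:ℝ) * (1/2)^n)
            = ENNReal.ofReal (1/4) * (ENNReal.ofReal (1/2))^n := by
          intro n
          rw [ENNReal.ofReal_mul (by norm_num), ENNReal.ofReal_pow (by norm_num)]
        simp_rw [hsum]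
        rw [ENNReal.tsum_mul_left, ENNReal.tsum_geometric]
        have h12 : ENNReal.ofReal (1/2) = 2⁻¹ := by
          rw [show (1/2:ℝ) = 2⁻¹ by norm_num, ENNReal.ofReal_inv_of_pos (by norm_num)]
          norm_num
        have h14 : ENNReal.ofReal (1/4) = 4⁻¹ := by
          rw [show (1/4:ℝ) = 4⁻¹ by norm_num, ENNReal.ofReal_inv_of_pos (by norm_num)]
          norm_num
        rw [h12, h14, ENNReal.one_sub_inv_two, inv_inv,
          show (4:ℝ≥0∞) = 2*2 by norm_num,
          ENNReal.mul_inv (Or.inl (by norm_num)) (Or.inl (by norm_num)),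
          mul_assoc, ENNReal.inv_mul_cancel (by norm_num) (by norm_num), mul_one]

lemma vol_T0_ge : ENNReal.ofReal (1/2) ≤ volume (T 0) := by
  have hsub : Icc (0:ℝ) 1 ⊆ T 0 ∪ G := by
    intro x hx
    by_cases hG : x ∈ G
    · exact Or.inr hG
    · exact Or.inl (mem_T0_of_notG hx.1 hx.2 hG)
  have h1 : (1 : ℝ≥0∞) ≤ volume (T 0) + volume G := by
    calc (1:ℝ≥0∞) = volume (Icc (0:ℝ) 1) := by
          rw [Real.volume_Icc]; norm_num
      _ ≤ volume (T 0 ∪ G) := measure_mono hsub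
      _ ≤ volume (T 0) + volume G := measure_union_le _ _
  have h2 : (1 : ℝ≥0∞) ≤ volume (T 0) + ENNReal.ofReal (1/2) :=
    h1.trans (add_le_add_right vol_G_le _)
  have h3 : (1:ℝ≥0∞) - ENNReal.ofReal (1/2) ≤ volume (T 0) :=
    tsub_le_iff_right.2 h2
  refine le_trans (le_of_eq ?_) h3
  rw [show (1:ℝ≥0∞) = ENNReal.ofReal 1 by simp,
    ← ENNReal.ofReal_sub _ (by norm_num : (0:ℝ) ≤ 1/2)]
  norm_num

lemma vol_T0 : volume (T 0) = ENNReal.ofReal (1/2) := le_antisymm vol_T0_le vol_T0_ge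

lemma vol_T (m : ℕ) : volume (T m) = ENNReal.ofReal ((1/2)^(m+1)) := by
  have h := vol_T_pow m
  rw [vol_T0] at h
  have hp : ((2:ℝ≥0∞)^m) ≠ 0 := by positivity
  have hp2 : ((2:ℝ≥0∞)^m) ≠ ⊤ := by
    exact ENNReal.pow_ne_top (by norm_num)
  have key : (2:ℝ≥0∞)^m * ENNReal.ofReal ((1/2)^(m+1)) = ENNReal.ofReal (1/2) := by
    rw [show (2:ℝ≥0∞)^m = ENNReal.ofReal ((2:ℝ)^m) by
      rw [ENNReal.ofReal_pow (by norm_num)]; norm_num]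
    rw [← ENNReal.ofReal_mul (by positivity)]
    congr 1
    rw [pow_succ]
    have : (2:ℝ)^m * (1/2)^m = 1 := by rw [← mul_pow]; norm_num
    nlinarith [this]
  rw [← key] at h
  exact ((ENNReal.mul_right_inj hp hp2).1 h.symm)


def pfx (ε : ℕ → Bool) (n : ℕ) : ℝ := ∑ k ∈ Finset.range n, if ε k then b k else 0

def piece (ε : ℕ → Bool) (n : ℕ) : Set ℝ :=
  if ε n = true then (fun x => pfx ε n + x) '' T (n+1) else ∅

lemma pim_split0 (n : ℕ) (δ : ℕ → Bool) :
    pim 0 δ = pfx δ n + pim n (fun j => δ (j + n)) := by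
  have h := pim_split 0 n δ
  rw [h, Nat.zero_add, pfx]
  rfl

lemma pfx_congr {ε δ : ℕ → Bool} (n : ℕ) (h : ∀ k < n, ε k = δ k) : pfx ε n = pfx δ n :=
  Finset.sum_congr rfl (fun k hk => by rw [h k (Finset.mem_range.1 hk)])

lemma pfx_add_b_le {ε : ℕ → Bool} {n m : ℕ} (hnm : n < m) (hεn : ε n = true) :
    pfx ε n + b n ≤ pfx ε m := by
  have hsplit : pfx ε n + ∑ k ∈ Finset.Ico n m, (if ε k then b k else 0) = pfx ε m :=
    Finset.sum_range_add_sum_Ico _ (le_of_lt hnm)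
  have hsingle : b n ≤ ∑ k ∈ Finset.Ico n m, (if ε k then b k else 0) := by
    have hmem : n ∈ Finset.Ico n m := Finset.mem_Ico.2 ⟨le_refl n, hnm⟩
    have := Finset.single_le_sum (f := fun k => if ε k then b k else 0)
      (fun k _ => by split <;> [exact (b_pos _).le; rfl]) hmem
    simpa [hεn] using this
  linarith

lemma piece_subset {ε : ℕ → Bool} {n : ℕ} (hεn : ε n = true) :
    piece ε n ⊆ Icc (pfx ε n) (pfx ε n + r (n+1)) := by
  rw [piece, if_pos hεn]
  rintro x ⟨y, hy, rfl⟩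
  have h1 := (T_subset (n+1) hy).1
  have h2 := (T_subset (n+1) hy).2
  exact ⟨by show pfx ε n ≤ pfx ε n + y; linarith,
    by show pfx ε n + y ≤ pfx ε n + r (n+1); linarith⟩

lemma decomp (ε : ℕ → Bool) :
    T 0 ∩ Icc 0 (pim 0 ε) = insert (pim 0 ε) (⋃ n, piece ε n) := by
  ext x
  constructor
  · rintro ⟨⟨δ, rfl⟩, _, hxe⟩
    by_cases hde : δ = ε
    · subst hde; exact Set.mem_insert _ _
    · have hne : ∃ n, δ n ≠ ε n := by
        by_contra hc; push_neg at hc; exact hde (funext hc)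
      set n := Nat.find hne with hn
      have hpre : ∀ k < n, δ k = ε k := fun k hk => not_not.1 (Nat.find_min hne hk)
      have hspec : δ n ≠ ε n := Nat.find_spec hne
      cases hδn : δ n <;> cases hεn : ε n
      · rw [hδn, hεn] at hspec; exact absurd rfl hspec
      · -- δ n = false, ε n = true : x in piece n
        refine Set.mem_insert_iff.2 (Or.inr (Set.mem_iUnion.2 ⟨n, ?_⟩))
        rw [piece, if_pos hεn]
        refine ⟨pim (n+1) (fun j => δ (j+1+n)), ⟨_, rfl⟩, ?_⟩
        rw [pim_split0 n δ, pfx_congr n (fun k hk => (hpre k hk).symm)]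
        congr 1
        rw [pim_succ n (fun j => δ (j+n))]
        simp only [Nat.zero_add, hδn, Bool.false_eq_true, if_false, zero_add]
      · -- δ n = true, ε n = false : contradiction with pim 0 δ ≤ pim 0 ε
        have := pim_lt 0 (fun k hk => (hpre k hk).symm) hεn hδn
        have hp : (0:ℝ) < (1/4)^(0+n+1) := by positivity
        linarith
      · rw [hδn, hεn] at hspec; exact absurd rfl hspec
  · intro hx
    rcases Set.mem_insert_iff.1 hx with rfl | hx
    · exact ⟨⟨ε, rfl⟩, pim_nonneg 0 ε, le_refl _⟩
    · obtain ⟨n, hn⟩ := Set.mem_iUnion.1 hx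
      by_cases hεn : ε n = true
      swap
      · rw [piece, if_neg hεn] at hn; exact absurd hn (Set.notMem_empty x)
      rw [piece, if_pos hεn] at hn
      obtain ⟨y, ⟨σ, rfl⟩, rfl⟩ := hn
      set δ : ℕ → Bool := fun k => if k < n then ε k else if k = n then false else σ (k - (n+1))
        with hδ
      have hδpre : ∀ k < n, δ k = ε k := fun k hk => by simp [hδ, hk]
      have hδn : δ n = false := by simp [hδ]
      have htail : (fun j => δ (j + n)) = cons false σ := by
        funext j
        cases j with
        | zero =>
          show δ (0 + n) = false
          rw [Nat.zero_add]; exact hδn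
        | succ j =>
          show δ (j + 1 + n) = σ j
          have h1 : ¬ (j + 1 + n < n) := by omega
          have h2 : ¬ (j + 1 + n = n) := by omega
          simp only [hδ, h1, h2, if_false]
          congr 1
          omega
      have hxeq : pfx ε n + pim (n+1) σ = pim 0 δ := by
        rw [pim_split0 n δ, pfx_congr n (fun k hk => (hδpre k hk).symm), htail, pim_cons]
        simp
      refine ⟨⟨δ, hxeq.symm⟩, ?_, ?_⟩
      · show (0:ℝ) ≤ pfx ε n + pim (n+1) σ
        rw [hxeq]; exact pim_nonneg 0 δ
      · show pfx ε n + pim (n+1) σ ≤ pim 0 ε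
        rw [hxeq]
        have := pim_lt 0 hδpre hδn hεn
        have hp : (0:ℝ) < (1/4)^(0+n+1) := by positivity
        linarith

lemma piece_measurable (ε : ℕ → Bool) (n : ℕ) : MeasurableSet (piece ε n) := by
  rw [piece]
  split
  · exact (((isCompact_T (n+1)).image (continuous_const.add continuous_id)).isClosed).measurableSet
  · exact MeasurableSet.empty

lemma piece_disjoint (ε : ℕ → Bool) : Pairwise (Function.onFun Disjoint (piece ε)) := by
  have key : ∀ i j, i < j → Disjoint (piece ε i) (piece ε j) := by
    intro i j hij
    by_cases hi : ε i = true
    swap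
    · have hpe : piece ε i = ∅ := by rw [piece, if_neg hi]
      rw [hpe]; exact empty_disjoint _
    by_cases hj : ε j = true
    swap
    · have hpe : piece ε j = ∅ := by rw [piece, if_neg hj]
      rw [hpe]; exact disjoint_empty _
    rw [Set.disjoint_left]
    intro x hxi hxj
    have h1 := (piece_subset hi hxi).2
    have h2 := (piece_subset hj hxj).1
    have h3 := pfx_add_b_le hij hi
    have h4 := r_lt_b i
    linarith
  intro i j hij
  rcases lt_or_gt_of_ne hij with h | h
  · exact key i j h
  · exact (key j i h).symm

lemma vol_piece (ε : ℕ → Bool) (n : ℕ) :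
    volume (piece ε n) = if ε n then ENNReal.ofReal ((1/2)^(n+2)) else 0 := by
  cases hεn : ε n
  · rw [piece, hεn]; simp
  · rw [piece, hεn]
    simp only [if_true]
    rw [vol_translate, vol_T (n+1)]

lemma vol_inter (ε : ℕ → Bool) :
    volume (T 0 ∩ Icc 0 (pim 0 ε))
      = ∑' n, if ε n then ENNReal.ofReal ((1/2)^(n+2)) else 0 := by
  rw [decomp ε]
  have h1 : volume (insert (pim 0 ε) (⋃ n, piece ε n)) = volume (⋃ n, piece ε n) := by
    apply le_antisymm
    · rw [Set.insert_eq]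
      calc volume ({pim 0 ε} ∪ ⋃ n, piece ε n)
          ≤ volume {pim 0 ε} + volume (⋃ n, piece ε n) := measure_union_le _ _
        _ = volume (⋃ n, piece ε n) := by rw [Real.volume_singleton, zero_add]
    · exact measure_mono (Set.subset_insert _ _)
  rw [h1, measure_iUnion (piece_disjoint ε) (piece_measurable ε)]
  exact tsum_congr (vol_piece ε)


def hK (x : ℝ) : ℝ := (volume (T 0 ∩ Icc 0 x)).toReal
def f0 (x : ℝ) : ℝ := x/4 + hK x/4
def g0 (x : ℝ) : ℝ := f0 x + b 0

lemma b_zero : b 0 = 5/8 := by norm_num [b]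

lemma K_sub : T 0 ⊆ Icc 0 1 := by
  have h := T_subset 0; rwa [r_zero] at h

lemma vol_fin (x : ℝ) : volume (T 0 ∩ Icc 0 x) ≠ ⊤ := by
  have h := measure_mono (μ := volume) (Set.inter_subset_right (s := T 0) (t := Icc 0 x))
  rw [Real.volume_Icc] at h
  exact (h.trans_lt ENNReal.ofReal_lt_top).ne

lemma hK_nonneg (x : ℝ) : 0 ≤ hK x := ENNReal.toReal_nonneg

lemma hK_mono : Monotone hK := by
  intro x y hxy
  exact ENNReal.toReal_mono (vol_fin y)
    (measure_mono (Set.inter_subset_inter_right _ (Icc_subset_Icc_right hxy)))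

lemma hK_lip {x y : ℝ} (hxy : x ≤ y) : hK y - hK x ≤ y - x := by
  have hsub : T 0 ∩ Icc 0 y ⊆ (T 0 ∩ Icc 0 x) ∪ Ioc x y := by
    rintro z ⟨hz, hz0, hzy⟩
    rcases le_or_gt z x with h | h
    · exact Or.inl ⟨hz, hz0, h⟩
    · exact Or.inr ⟨h, hzy⟩
  have h1 : volume (T 0 ∩ Icc 0 y) ≤ volume (T 0 ∩ Icc 0 x) + volume (Ioc x y) :=
    (measure_mono hsub).trans (measure_union_le _ _)
  have h2 : volume (Ioc x y) = ENNReal.ofReal (y - x) := Real.volume_Ioc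
  have h3 := ENNReal.toReal_mono
    (by rw [h2]; exact ENNReal.add_ne_top.2 ⟨vol_fin x, ENNReal.ofReal_ne_top⟩) h1
  rw [ENNReal.toReal_add (vol_fin x) (by rw [h2]; exact ENNReal.ofReal_ne_top)] at h3
  rw [h2, ENNReal.toReal_ofReal (by linarith)] at h3
  have : hK y ≤ hK x + (y - x) := h3
  linarith

lemma hK_le_half (x : ℝ) : hK x ≤ 1/2 := by
  have h := ENNReal.toReal_mono (by rw [vol_T0]; exact ENNReal.ofReal_ne_top)
    (measure_mono (μ := volume) (Set.inter_subset_left (s := T 0) (t := Icc 0 x)))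
  rw [vol_T0, ENNReal.toReal_ofReal (by norm_num)] at h
  exact h

lemma hK_pim (ε : ℕ → Bool) :
    hK (pim 0 ε) = ∑' n, if ε n then ((1/2):ℝ)^(n+2) else 0 := by
  rw [hK, vol_inter ε, ENNReal.tsum_toReal_eq
    (fun n => by cases hεn : ε n <;> simp [hεn])]
  apply tsum_congr
  intro n
  cases hεn : ε n <;>
    simp [hεn, ENNReal.toReal_ofReal (by positivity : (0:ℝ) ≤ (1/2:ℝ)^(n+2))]

lemma summable_half (ε : ℕ → Bool) :
    Summable (fun n => if ε n then ((1/2):ℝ)^(n+2) else 0) := by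
  have hg : Summable (fun n : ℕ => ((1:ℝ)/2)^(n+2)) :=
    ((summable_geometric_of_lt_one (by norm_num)
      (by norm_num : (1:ℝ)/2 < 1)).mul_left (((1:ℝ)/2)^2)).congr
        (fun n => by rw [pow_add]; ring)
  apply Summable.of_nonneg_of_le (fun n => by split <;> positivity) (fun n => ?_) hg
  split
  · rfl
  · positivity

lemma f0_pim (ε : ℕ → Bool) : f0 (pim 0 ε) = pim 0 (cons false ε) := by
  rw [pim_cons]
  simp only [Bool.false_eq_true, if_false, zero_add]
  rw [f0, hK_pim]
  rw [show pim 0 ε = ∑' n, (if ε n then b (n+0) else 0) from rfl]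
  rw [show pim 1 ε = ∑' n, (if ε n then b (n+1) else 0) from rfl]
  rw [← tsum_div_const, ← tsum_div_const,
    ← Summable.tsum_add ((summable_pim 0 ε).div_const 4) ((summable_half ε).div_const 4)]
  apply tsum_congr
  intro n
  cases hεn : ε n
  · simp [hεn]
  · simp only [hεn, if_true]
    rw [Nat.add_zero]
    simp only [b, pow_succ]
    ring

lemma g0_pim (ε : ℕ → Bool) : g0 (pim 0 ε) = pim 0 (cons true ε) := by
  rw [g0, f0_pim, pim_cons, pim_cons]
  simp only [if_true, Bool.false_eq_true, if_false, zero_add]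
  ring

lemma K_inv : T 0 = f0 '' T 0 ∪ g0 '' T 0 := by
  ext x
  constructor
  · rintro ⟨δ, rfl⟩
    cases hδ0 : δ 0
    · left
      refine ⟨pim 0 (fun n => δ (n+1)), ⟨_, rfl⟩, ?_⟩
      rw [f0_pim]
      congr 1
      rw [← hδ0, cons_eta]
    · right
      refine ⟨pim 0 (fun n => δ (n+1)), ⟨_, rfl⟩, ?_⟩
      rw [g0_pim]
      congr 1
      rw [← hδ0, cons_eta]
  · rintro (⟨y, ⟨δ, rfl⟩, rfl⟩ | ⟨y, ⟨δ, rfl⟩, rfl⟩)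
    · rw [f0_pim]; exact ⟨_, rfl⟩
    · rw [g0_pim]; exact ⟨_, rfl⟩

lemma f0_mono : StrictMono f0 := by
  intro x y hxy
  have := hK_mono hxy.le
  rw [f0, f0]
  have hx4 : x/4 < y/4 := by linarith
  linarith

lemma f0_lip (x y : ℝ) : |f0 x - f0 y| ≤ (1/2) * |x - y| := by
  rcases le_total x y with h | h
  · have h1 := hK_mono h
    have h2 := hK_lip h
    rw [abs_of_nonpos (by rw [f0, f0]; linarith [(f0_mono.le_iff_le).2 h]),
      abs_of_nonpos (by linarith)]
    rw [f0, f0]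
    linarith
  · have h1 := hK_mono h
    have h2 := hK_lip h
    rw [abs_of_nonneg (by rw [f0, f0]; linarith), abs_of_nonneg (by linarith)]
    rw [f0, f0]
    linarith

lemma f0_bounds {x : ℝ} (hx : x ∈ Icc (0:ℝ) 1) : f0 x ∈ Icc (0:ℝ) (3/8) := by
  obtain ⟨h0, h1⟩ := hx
  constructor
  · rw [f0]; have := hK_nonneg x; linarith
  · rw [f0]; have := hK_le_half x; linarith

lemma lipschitzWith_f0 : LipschitzWith (2⁻¹ : ℝ≥0) f0 := by
  apply LipschitzWith.of_dist_le_mul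
  intro x y
  rw [Real.dist_eq, Real.dist_eq]
  have := f0_lip x y
  have hc : ((2⁻¹ : ℝ≥0) : ℝ) = 1/2 := by norm_num
  rw [hc]
  exact this

lemma lipschitzWith_g0 : LipschitzWith (2⁻¹ : ℝ≥0) g0 := by
  apply LipschitzWith.of_dist_le_mul
  intro x y
  have h : dist (g0 x) (g0 y) = dist (f0 x) (f0 y) := by
    rw [Real.dist_eq, Real.dist_eq, g0, g0]
    congr 1
    ring
  rw [h]
  exact LipschitzWith.dist_le_mul lipschitzWith_f0 x y

lemma unique_attractor {f g : ℝ → ℝ} (hf : LipschitzWith (2⁻¹ : ℝ≥0) f)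
    (hg : LipschitzWith (2⁻¹ : ℝ≥0) g)
    {A B : Set ℝ} (hAc : IsCompact A) (hBc : IsCompact B)
    (hAne : A.Nonempty) (hBne : B.Nonempty)
    (hAeq : A = f '' A ∪ g '' A) (hBeq : B = f '' B ∪ g '' B) : B = A := by
  set H := Metric.hausdorffEDist B A with hH
  have hfin : H ≠ ⊤ := Metric.hausdorffEdist_ne_top_of_nonempty_of_bounded hBne hAne
    hBc.isBounded hAc.isBounded
  have hcoe : ((2⁻¹ : ℝ≥0) : ℝ≥0∞) = 2⁻¹ := by
    rw [ENNReal.coe_inv (by norm_num)]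
    norm_num
  have key : H ≤ 2⁻¹ * H := by
    apply EMetric.hausdorffEdist_le_of_mem_edist
    · intro x hx
      rw [hBeq] at hx
      rcases hx with ⟨u, hu, rfl⟩ | ⟨u, hu, rfl⟩
      · obtain ⟨a, ha, hae⟩ := hAc.exists_infEdist_eq_edist hAne u
        refine ⟨f a, by rw [hAeq]; exact Or.inl ⟨a, ha, rfl⟩, ?_⟩
        calc edist (f u) (f a) ≤ (2⁻¹ : ℝ≥0) * edist u a := hf.edist_le_mul u a
          _ = 2⁻¹ * Metric.infEDist u A := by rw [← hae, hcoe]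
          _ ≤ 2⁻¹ * H := mul_le_mul_right (EMetric.infEdist_le_hausdorffEdist_of_mem hu) _
      · obtain ⟨a, ha, hae⟩ := hAc.exists_infEdist_eq_edist hAne u
        refine ⟨g a, by rw [hAeq]; exact Or.inr ⟨a, ha, rfl⟩, ?_⟩
        calc edist (g u) (g a) ≤ (2⁻¹ : ℝ≥0) * edist u a := hg.edist_le_mul u a
          _ = 2⁻¹ * Metric.infEDist u A := by rw [← hae, hcoe]
          _ ≤ 2⁻¹ * H := mul_le_mul_right (EMetric.infEdist_le_hausdorffEdist_of_mem hu) _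
    · intro x hx
      rw [hAeq] at hx
      rcases hx with ⟨u, hu, rfl⟩ | ⟨u, hu, rfl⟩
      · obtain ⟨a, ha, hae⟩ := hBc.exists_infEdist_eq_edist hBne u
        refine ⟨f a, by rw [hBeq]; exact Or.inl ⟨a, ha, rfl⟩, ?_⟩
        calc edist (f u) (f a) ≤ (2⁻¹ : ℝ≥0) * edist u a := hf.edist_le_mul u a
          _ = 2⁻¹ * Metric.infEDist u B := by rw [← hae, hcoe]
          _ ≤ 2⁻¹ * H := by
              apply mul_le_mul_right
              rw [hH, EMetric.hausdorffEdist_comm]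
              exact EMetric.infEdist_le_hausdorffEdist_of_mem hu
      · obtain ⟨a, ha, hae⟩ := hBc.exists_infEdist_eq_edist hBne u
        refine ⟨g a, by rw [hBeq]; exact Or.inr ⟨a, ha, rfl⟩, ?_⟩
        calc edist (g u) (g a) ≤ (2⁻¹ : ℝ≥0) * edist u a := hg.edist_le_mul u a
          _ = 2⁻¹ * Metric.infEDist u B := by rw [← hae, hcoe]
          _ ≤ 2⁻¹ * H := by
              apply mul_le_mul_right
              rw [hH, EMetric.hausdorffEdist_comm]
              exact EMetric.infEdist_le_hausdorffEdist_of_mem hu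
  have hzero : H = 0 := by
    by_contra h0
    have hlt : 2⁻¹ * H < H := by
      rw [show (2⁻¹ : ℝ≥0∞) * H = H / 2 by rw [ENNReal.div_eq_inv_mul]]
      exact ENNReal.half_lt_self h0 hfin
    exact absurd key (not_le.2 hlt)
  exact (EMetric.hausdorffEdist_zero_iff_eq_of_closed hBc.isClosed hAc.isClosed).1 hzero

end CIFS

open CIFS in
theorem stmt_0 :
    ∃ f g : ℝ → ℝ,
      Set.MapsTo f (Set.Icc (0 : ℝ) 1) (Set.Icc (0 : ℝ) 1) ∧
      Set.MapsTo g (Set.Icc (0 : ℝ) 1) (Set.Icc (0 : ℝ) 1) ∧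
      StrictMonoOn f (Set.Icc (0 : ℝ) 1) ∧
      StrictMonoOn g (Set.Icc (0 : ℝ) 1) ∧
      (∃ L : ℝ, L < 1 ∧ ∀ x ∈ Set.Icc (0 : ℝ) 1, ∀ y ∈ Set.Icc (0 : ℝ) 1,
        |f x - f y| ≤ L * |x - y|) ∧
      (∃ L : ℝ, L < 1 ∧ ∀ x ∈ Set.Icc (0 : ℝ) 1, ∀ y ∈ Set.Icc (0 : ℝ) 1,
        |g x - g y| ≤ L * |x - y|) ∧
      f '' Set.Icc (0 : ℝ) 1 ∩ g '' Set.Icc (0 : ℝ) 1 = ∅ ∧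
      ∃ A : Set ℝ, A ⊆ Set.Icc (0 : ℝ) 1 ∧ A.Nonempty ∧ IsCompact A ∧
        A = f '' A ∪ g '' A ∧
        (∀ B : Set ℝ, B ⊆ Set.Icc (0 : ℝ) 1 → B.Nonempty → IsCompact B →
          B = f '' B ∪ g '' B → B = A) ∧
        0 < volume A := by
  refine ⟨f0, g0, ?_, ?_, ?_, ?_, ⟨1/2, by norm_num, ?_⟩, ⟨1/2, by norm_num, ?_⟩, ?_, ?_⟩
  · intro x hx
    have h := f0_bounds hx
    exact ⟨h.1, h.2.trans (by norm_num)⟩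
  · intro x hx
    have h := f0_bounds hx
    rw [Set.mem_Icc]
    rw [g0, b_zero]
    constructor <;> [linarith [h.1]; linarith [h.2]]
  · exact fun x _ y _ hxy => f0_mono hxy
  · intro x _ y _ hxy
    rw [g0, g0]
    have := f0_mono hxy
    linarith
  · exact fun x _ y _ => f0_lip x y
  · intro x _ y _
    rw [g0, g0, show f0 x + b 0 - (f0 y + b 0) = f0 x - f0 y by ring]
    exact f0_lip x y
  · ext z
    simp only [Set.mem_inter_iff, Set.mem_image, Set.mem_empty_iff_false, iff_false]
    rintro ⟨⟨x, hx, rfl⟩, ⟨y, hy, hyz⟩⟩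
    have h1 := (f0_bounds hx).2
    have h2 := (f0_bounds hy).1
    rw [g0, b_zero] at hyz
    linarith
  · refine ⟨T 0, K_sub, ⟨0, ⟨fun _ => false, by simp [pim]⟩⟩, isCompact_T 0, K_inv, ?_, ?_⟩
    · intro B _ hBne hBc hBeq
      exact unique_attractor lipschitzWith_f0 lipschitzWith_g0 (isCompact_T 0) hBc
        ⟨0, ⟨fun _ => false, by simp [pim]⟩⟩ hBne K_inv hBeq
    · rw [vol_T0]
      exact ENNReal.ofReal_pos.2 (by norm_num)
end
end

section
/- Let f₁, …, f_N : [0,1] → [0,1] be similitudes, i.e., fₙ(x) = aₙx + bₙ with aₙ ∈ (−1,0) ∪ (0,1) and bₙ ∈ [0,1], such that ⋃ₙ fₙ([0,1]) ≠ [0,1] and fᵢ((0,1)) ∩ fⱼ((0,1)) = ∅ for all i ≠ j. Then the attractor of the iterated function system {f₁, …, f_N} has Lebesgue measure zero. -/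
open Set MeasureTheory Filter

lemma affine_image_eq_preimage (a b : ℝ) (ha : a ≠ 0) (s : Set ℝ) :
    (fun x => a * x + b) '' s = (fun y => (y - b) * a⁻¹) ⁻¹' s := by
  ext y
  simp only [mem_image, mem_preimage]
  constructor
  · rintro ⟨x, hx, rfl⟩
    have : (a * x + b - b) * a⁻¹ = x := by field_simp; ring
    rwa [this]
  · intro h
    exact ⟨(y - b) * a⁻¹, h, by field_simp; ring⟩

lemma vol_affine_image (a b : ℝ) (ha : a ≠ 0) (s : Set ℝ) :
    volume ((fun x => a * x + b) '' s) = ENNReal.ofReal |a| * volume s := by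
  rw [affine_image_eq_preimage a b ha s]
  have h1 : (fun y : ℝ => (y - b) * a⁻¹) ⁻¹' s
      = (fun y : ℝ => y + (-b)) ⁻¹' ((· * a⁻¹) ⁻¹' s) := by
    ext y; simp [sub_eq_add_neg]
  rw [h1, measure_preimage_add_right volume (-b) _,
    Real.volume_preimage_mul_right (inv_ne_zero ha) s, inv_inv]

theorem stmt_1 (N : ℕ) (hN : 0 < N) (a b : Fin N → ℝ)
    (ha : ∀ n, a n ∈ Set.Ioo (-1 : ℝ) 1) (ha0 : ∀ n, a n ≠ 0)
    (hb : ∀ n, b n ∈ Set.Icc (0 : ℝ) 1)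
    (f : Fin N → ℝ → ℝ) (hf : ∀ n x, f n x = a n * x + b n)
    (hmaps : ∀ n, Set.MapsTo (f n) (Set.Icc (0 : ℝ) 1) (Set.Icc (0 : ℝ) 1))
    (hcover : (⋃ n, f n '' Set.Icc (0 : ℝ) 1) ≠ Set.Icc (0 : ℝ) 1)
    (hdisj : ∀ i j, i ≠ j → f i '' Set.Ioo (0 : ℝ) 1 ∩ f j '' Set.Ioo (0 : ℝ) 1 = ∅)
    (A : Set ℝ) (hA : A ⊆ Set.Icc (0 : ℝ) 1) (hne : A.Nonempty) (hcomp : IsCompact A)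
    (hfix : A = ⋃ n, f n '' A) :
    volume A = 0 := by
  have hfe : ∀ n, f n = fun x => a n * x + b n := fun n => funext (hf n)
  -- measurability of images
  have himg_meas : ∀ n (s : Set ℝ), MeasurableSet s → MeasurableSet (f n '' s) := by
    intro n s hs
    rw [hfe n, affine_image_eq_preimage _ _ (ha0 n)]
    exact (measurable_id.sub measurable_const).mul_const _ hs
  have hvol_img : ∀ n (s : Set ℝ),
      volume (f n '' s) = ENNReal.ofReal |a n| * volume s := by
    intro n s; rw [hfe n]; exact vol_affine_image _ _ (ha0 n) s
  -- the closed union U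
  set U : Set ℝ := ⋃ n, f n '' Set.Icc (0 : ℝ) 1 with hU
  have hUclosed : IsClosed U := by
    apply isClosed_iUnion_of_finite
    intro n
    have : Continuous (f n) := by
      rw [hfe n]; exact (continuous_const.mul continuous_id).add continuous_const
    exact (isCompact_Icc.image this).isClosed
  have hUsub : U ⊆ Set.Icc (0 : ℝ) 1 := by
    refine iUnion_subset fun n => ?_
    rintro y ⟨x, hx, rfl⟩
    exact hmaps n hx
  -- find a point of Ioo 0 1 outside U
  obtain ⟨x, hxI, hxU⟩ : ∃ x ∈ Set.Icc (0 : ℝ) 1, x ∉ U := by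
    by_contra h
    push_neg at h
    exact hcover (Subset.antisymm hUsub h)
  obtain ⟨ε, hε, hball⟩ := Metric.isOpen_iff.1 hUclosed.isOpen_compl x hxU
  obtain ⟨y, hyIoo, hyU⟩ : ∃ y ∈ Set.Ioo (0 : ℝ) 1, y ∉ U := by
    rcases lt_or_eq_of_le hxI.2 with h1 | h1
    · refine ⟨x + min ε (1 - x) / 2, ⟨?_, ?_⟩, ?_⟩
      · have : (0:ℝ) < min ε (1 - x) / 2 := by
          have : (0:ℝ) < min ε (1 - x) := lt_min hε (by linarith)
          linarith
        linarith [hxI.1]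
      · have h2 : min ε (1 - x) ≤ 1 - x := min_le_right _ _
        have h3 : (0:ℝ) < min ε (1 - x) := lt_min hε (by linarith)
        linarith
      · intro hmem
        have hy : x + min ε (1 - x) / 2 ∈ Metric.ball x ε := by
          simp only [Metric.mem_ball, Real.dist_eq]
          have h3 : (0:ℝ) < min ε (1 - x) := lt_min hε (by linarith)
          have h4 : min ε (1 - x) ≤ ε := min_le_left _ _
          rw [abs_of_nonneg (by linarith)]
          linarith
        exact hball hy hmem
    · refine ⟨x - min ε 1 / 2, ⟨?_, ?_⟩, ?_⟩
      · have h2 : min ε 1 ≤ 1 := min_le_right _ _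
        have := hxI.2
        nlinarith [hxI.2, h1]
      · have h3 : (0:ℝ) < min ε 1 := lt_min hε one_pos
        linarith [hxI.2]
      · intro hmem
        have hy : x - min ε 1 / 2 ∈ Metric.ball x ε := by
          simp only [Metric.mem_ball, Real.dist_eq]
          have h3 : (0:ℝ) < min ε 1 := lt_min hε one_pos
          have h4 : min ε 1 ≤ ε := min_le_left _ _
          rw [abs_of_nonpos (by linarith)]
          linarith
        exact hball hy hmem
  -- the open images W n
  have hWopen : ∀ n, IsOpen (f n '' Set.Ioo (0 : ℝ) 1) := by
    intro n
    rw [hfe n, affine_image_eq_preimage _ _ (ha0 n)]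
    exact isOpen_Ioo.preimage ((continuous_id.sub continuous_const).mul continuous_const)
  have hWsub : ∀ n, f n '' Set.Ioo (0 : ℝ) 1 ⊆ Set.Ioo (0 : ℝ) 1 := by
    intro n
    have h1 : f n '' Set.Ioo (0 : ℝ) 1 ⊆ Set.Icc (0 : ℝ) 1 := by
      refine Subset.trans (image_mono Ioo_subset_Icc_self) ?_
      rintro y ⟨z, hz, rfl⟩; exact hmaps n hz
    have := (hWopen n).subset_interior_iff.2 h1
    rwa [interior_Icc] at this
  set W : Set ℝ := ⋃ n, f n '' Set.Ioo (0 : ℝ) 1 with hWdef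
  have hWmeas : MeasurableSet W :=
    MeasurableSet.iUnion fun n => (hWopen n).measurableSet
  have hWvol : volume W = ∑' n, ENNReal.ofReal |a n| := by
    rw [hWdef, measure_iUnion]
    · congr 1; ext n; rw [hvol_img, Real.volume_Ioo]; simp
    · intro i j hij
      exact Set.disjoint_iff_inter_eq_empty.2 (hdisj i j hij)
    · exact fun n => (hWopen n).measurableSet
  -- the gap set
  set V : Set ℝ := Set.Ioo (0 : ℝ) 1 ∩ Uᶜ with hVdef
  have hVopen : IsOpen V := isOpen_Ioo.inter hUclosed.isOpen_compl
  have hVne : V.Nonempty := ⟨y, hyIoo, hyU⟩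
  have hVpos : 0 < volume V := hVopen.measure_pos volume hVne
  have hWVdisj : Disjoint W V := by
    refine Set.disjoint_left.2 fun z hzW hzV => ?_
    have hzU : z ∈ U := by
      obtain ⟨n, hn⟩ := mem_iUnion.1 hzW
      exact mem_iUnion.2 ⟨n, image_mono Ioo_subset_Icc_self hn⟩
    exact hzV.2 hzU
  have hWVsub : W ∪ V ⊆ Set.Ioo (0 : ℝ) 1 :=
    union_subset (iUnion_subset hWsub) (inter_subset_left)
  have hsum_le : volume W + volume V ≤ 1 := by
    calc volume W + volume V = volume (W ∪ V) :=
          (measure_union hWVdisj hVopen.measurableSet).symm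
      _ ≤ volume (Set.Ioo (0 : ℝ) 1) := measure_mono hWVsub
      _ = 1 := by rw [Real.volume_Ioo]; norm_num
  have hWlt1 : volume W < 1 := by
    have hWle : volume W ≤ 1 := le_trans (le_add_right le_rfl) hsum_le
    have hWne_top : volume W ≠ ⊤ := ne_top_of_le_ne_top ENNReal.one_ne_top hWle
    calc volume W < volume W + volume V :=
          ENNReal.lt_add_right hWne_top (ne_of_gt hVpos)
      _ ≤ 1 := hsum_le
  -- final contraction argument
  set μ := volume A with hμ
  have hμle : μ ≤ 1 := by
    calc μ ≤ volume (Set.Icc (0 : ℝ) 1) := measure_mono hA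
      _ = 1 := by rw [Real.volume_Icc]; norm_num
  have hμtop : μ ≠ ⊤ := ne_top_of_le_ne_top ENNReal.one_ne_top hμle
  have hsub : μ ≤ volume W * μ := by
    calc μ = volume (⋃ n, f n '' A) := by rw [hμ, ← hfix]
      _ ≤ ∑' n, volume (f n '' A) := measure_iUnion_le _
      _ = ∑' n, ENNReal.ofReal |a n| * μ := by
          congr 1; ext n; rw [hvol_img]
      _ = (∑' n, ENNReal.ofReal |a n|) * μ := ENNReal.tsum_mul_right
      _ = volume W * μ := by rw [hWvol]
  by_contra hμ0
  have hμ0' : μ ≠ 0 := hμ0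
  have : volume W * μ < 1 * μ :=
    (ENNReal.mul_lt_mul_iff_left hμ0' hμtop).2 hWlt1
  rw [one_mul] at this
  exact absurd (lt_of_le_of_lt hsub this) (lt_irrefl μ)
end

section
/- For every k ∈ ℕ and every interval [a,b] ∈ 𝓘_k: if [a,b] ⊆ [0,1/3] then [a + 2/3, b + 2/3] ∈ 𝓘_k, and if [a,b] ⊆ [2/3,1] then [a − 2/3, b − 2/3] ∈ 𝓘_k. -/
open Set MeasureTheory Filter

theorem stmt_8
    (ε w : ℕ → ℝ)
    (hw1 : w 1 = 1) (hε1 : ε 1 = 1 / 6)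
    (hwrec : ∀ k, 1 ≤ k → w (k + 1) = w k / 2 - ε k)
    (hεpos : ∀ k, 1 ≤ k → 0 < ε (k + 1))
    (hεgeom : ∀ k, 1 ≤ k → 2 ^ k * ε (k + 1) < 1 / 2 * (1 / 4 ^ k))
    (hεquot : ∀ k, 1 ≤ k → ε (k + 1) / ε k < 1 / 2)
    (hεw : ∀ k, 1 ≤ k → ε (k + 1) < w k / 4 - ε k / 2)
    (I : ℕ → Set (ℝ × ℝ))
    (hI1 : I 1 = {((0 : ℝ), (1 : ℝ))})
    (hIrec : ∀ k, 1 ≤ k → I (k + 1) =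
      ⋃ p ∈ I k, {(p.1, (p.1 + p.2) / 2 - ε k), ((p.1 + p.2) / 2 + ε k, p.2)})
    :
    ∀ k, 1 ≤ k → ∀ p ∈ I k,
      (Set.Icc p.1 p.2 ⊆ Set.Icc (0 : ℝ) (1 / 3) → (p.1 + 2 / 3, p.2 + 2 / 3) ∈ I k) ∧
      (Set.Icc p.1 p.2 ⊆ Set.Icc (2 / 3 : ℝ) 1 → (p.1 - 2 / 3, p.2 - 2 / 3) ∈ I k) := by
  have hεp : ∀ k, 1 ≤ k → 0 < ε k := by
    intro k hk
    match k, hk with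
    | 1, _ => rw [hε1]; norm_num
    | (n+2), _ => exact hεpos (n+1) (by omega)
  have key : ∀ k, 1 ≤ k → ∀ p ∈ I k,
      (0 ≤ p.1 ∧ p.2 ≤ 1 ∧ p.2 - p.1 = w k) ∧
      (2 ≤ k → p.2 ≤ 1/3 ∨ 2/3 ≤ p.1) ∧
      (Set.Icc p.1 p.2 ⊆ Set.Icc (0 : ℝ) (1 / 3) → (p.1 + 2 / 3, p.2 + 2 / 3) ∈ I k) ∧
      (Set.Icc p.1 p.2 ⊆ Set.Icc (2 / 3 : ℝ) 1 → (p.1 - 2 / 3, p.2 - 2 / 3) ∈ I k) := by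
    intro k hk
    induction k, hk using Nat.le_induction with
    | base =>
      intro p hp
      rw [hI1, Set.mem_singleton_iff] at hp
      subst hp
      refine ⟨⟨le_refl _, le_refl _, by rw [hw1]; norm_num⟩, by omega, ?_, ?_⟩
      · intro h
        have h1 := h (show (1:ℝ) ∈ Set.Icc (0:ℝ) 1 by constructor <;> norm_num)
        norm_num [Set.mem_Icc] at h1
      · intro h
        have h1 := h (show (0:ℝ) ∈ Set.Icc (0:ℝ) 1 by constructor <;> norm_num)
        norm_num [Set.mem_Icc] at h1
    | succ n hn ih =>
      have hchild : ∀ q ∈ I n, (q.1, (q.1+q.2)/2 - ε n) ∈ I (n+1) ∧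
          ((q.1+q.2)/2 + ε n, q.2) ∈ I (n+1) := by
        intro q hq
        rw [hIrec n hn]
        constructor
        · exact Set.mem_biUnion hq (Set.mem_insert _ _)
        · exact Set.mem_biUnion hq (Set.mem_insert_of_mem _ rfl)
      have hw' : 2 * ε n < w n := by
        have h1 := hεw n hn
        have h2 := hεpos n hn
        linarith
      have hεn := hεp n hn
      have hwrec' := hwrec n hn
      have h01 : ((0:ℝ),(1:ℝ)) ∈ I 1 := by rw [hI1]; exact rfl
      intro p hp
      rw [hIrec n hn] at hp
      simp only [Set.mem_iUnion, Set.mem_insert_iff, Set.mem_singleton_iff] at hp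
      obtain ⟨q, hq, hpq⟩ := hp
      obtain ⟨⟨hq0, hq1, hqw⟩, hq13, hqL, hqR⟩ := ih q hq
      have hqle : q.1 ≤ q.2 := by linarith
      rcases hpq with rfl | rfl
      · -- left child (q.1, (q.1+q.2)/2 - ε n)
        refine ⟨⟨hq0, by dsimp only; linarith, by dsimp only; linarith⟩, ?_, ?_, ?_⟩
        · intro _
          dsimp only
          rcases Nat.lt_or_ge n 2 with h2 | h2
          · have hn1 : n = 1 := by omega
            subst hn1
            rw [hI1, Set.mem_singleton_iff] at hq
            subst hq
            left; norm_num [hε1]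
          · rcases hq13 h2 with h | h
            · left; linarith
            · right; linarith
        · intro hsub
          have hA := hsub (Set.left_mem_Icc.mpr (by dsimp only; linarith))
          have hB := hsub (Set.right_mem_Icc.mpr (by dsimp only; linarith))
          rw [Set.mem_Icc] at hA hB
          dsimp only at hA hB
          rcases Nat.lt_or_ge n 2 with h2 | h2
          · have hn1 : n = 1 := by omega
            subst hn1
            rw [hI1, Set.mem_singleton_iff] at hq
            subst hq
            convert (hchild _ h01).2 using 2 <;> norm_num [hε1]
          · rcases hq13 h2 with h | h
            · have hq' := hqL (by
                intro x hx
                rw [Set.mem_Icc] at hx ⊢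
                exact ⟨by linarith [hA.1], by linarith [hx.2]⟩)
              convert (hchild _ hq').1 using 2 <;> dsimp only <;> ring
            · exfalso; linarith [hA.2]
        · intro hsub
          have hA := hsub (Set.left_mem_Icc.mpr (by dsimp only; linarith))
          have hB := hsub (Set.right_mem_Icc.mpr (by dsimp only; linarith))
          rw [Set.mem_Icc] at hA hB
          dsimp only at hA hB
          rcases Nat.lt_or_ge n 2 with h2 | h2
          · have hn1 : n = 1 := by omega
            subst hn1
            rw [hI1, Set.mem_singleton_iff] at hq
            subst hq
            norm_num at hA
          · rcases hq13 h2 with h | h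
            · exfalso; linarith [hB.1]
            · have hq' := hqR (by
                intro x hx
                rw [Set.mem_Icc] at hx ⊢
                exact ⟨by linarith [hx.1], by linarith⟩)
              convert (hchild _ hq').1 using 2 <;> dsimp only <;> ring
      · -- right child ((q.1+q.2)/2 + ε n, q.2)
        refine ⟨⟨by dsimp only; linarith, hq1, by dsimp only; linarith⟩, ?_, ?_, ?_⟩
        · intro _
          dsimp only
          rcases Nat.lt_or_ge n 2 with h2 | h2
          · have hn1 : n = 1 := by omega
            subst hn1
            rw [hI1, Set.mem_singleton_iff] at hq
            subst hq
            right; norm_num [hε1]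
          · rcases hq13 h2 with h | h
            · left; linarith
            · right; linarith
        · intro hsub
          have hA := hsub (Set.left_mem_Icc.mpr (by dsimp only; linarith))
          have hB := hsub (Set.right_mem_Icc.mpr (by dsimp only; linarith))
          rw [Set.mem_Icc] at hA hB
          dsimp only at hA hB
          rcases Nat.lt_or_ge n 2 with h2 | h2
          · have hn1 : n = 1 := by omega
            subst hn1
            rw [hI1, Set.mem_singleton_iff] at hq
            subst hq
            norm_num at hB
          · rcases hq13 h2 with h | h
            · have hq' := hqL (by
                intro x hx
                rw [Set.mem_Icc] at hx ⊢
                exact ⟨by linarith, by linarith [hx.2]⟩)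
              convert (hchild _ hq').2 using 2 <;> dsimp only <;> ring
            · exfalso; linarith [hA.2]
        · intro hsub
          have hA := hsub (Set.left_mem_Icc.mpr (by dsimp only; linarith))
          have hB := hsub (Set.right_mem_Icc.mpr (by dsimp only; linarith))
          rw [Set.mem_Icc] at hA hB
          dsimp only at hA hB
          rcases Nat.lt_or_ge n 2 with h2 | h2
          · have hn1 : n = 1 := by omega
            subst hn1
            rw [hI1, Set.mem_singleton_iff] at hq
            subst hq
            convert (hchild _ h01).1 using 2 <;> norm_num [hε1]
          · rcases hq13 h2 with h | h
            · exfalso; linarith [hB.1]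
            · have hq' := hqR (by
                intro x hx
                rw [Set.mem_Icc] at hx ⊢
                exact ⟨by linarith [hx.1], by linarith⟩)
              convert (hchild _ hq').2 using 2 <;> dsimp only <;> ring
  intro k hk p hp
  exact ⟨(key k hk p hp).2.2.1, (key k hk p hp).2.2.2⟩
end

section
/- The set A_* = ⋂_{k∈ℕ} A_k satisfies λ([0,1] \ A_*) < 2/3, and hence λ(A_*) ≥ 1/3 > 0, where λ denotes one-dimensional Lebesgue measure. -/
open Set MeasureTheory Filter
open scoped ENNReal NNReal

theorem stmt_10
    (ε w : ℕ → ℝ)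
    (hw1 : w 1 = 1) (hε1 : ε 1 = 1 / 6)
    (hwrec : ∀ k, 1 ≤ k → w (k + 1) = w k / 2 - ε k)
    (hεpos : ∀ k, 1 ≤ k → 0 < ε (k + 1))
    (hεgeom : ∀ k, 1 ≤ k → 2 ^ k * ε (k + 1) < 1 / 2 * (1 / 4 ^ k))
    (hεquot : ∀ k, 1 ≤ k → ε (k + 1) / ε k < 1 / 2)
    (hεw : ∀ k, 1 ≤ k → ε (k + 1) < w k / 4 - ε k / 2)
    (I : ℕ → Set (ℝ × ℝ))
    (hI1 : I 1 = {((0 : ℝ), (1 : ℝ))})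
    (hIrec : ∀ k, 1 ≤ k → I (k + 1) =
      ⋃ p ∈ I k, {(p.1, (p.1 + p.2) / 2 - ε k), ((p.1 + p.2) / 2 + ε k, p.2)})
    (A : ℕ → Set ℝ)
    (hA : ∀ k, A k = ⋃ p ∈ I k, Set.Icc p.1 p.2)
    (Astar : Set ℝ)
    (hAstar : Astar = ⋂ k, A (k + 1))
    :
    volume (Set.Icc (0 : ℝ) 1 \ Astar) < 2 / 3 ∧
    1 / 3 ≤ volume Astar ∧ 0 < volume Astar := by
  classical
  have hA1 : A 1 = Set.Icc (0:ℝ) 1 := by rw [hA, hI1]; simp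
  -- finite sets of intervals
  have hfin : ∀ k : ℕ, ∃ s : Finset (ℝ × ℝ), ↑s = I (k+1) ∧ s.card ≤ 2 ^ k := by
    intro k
    induction k with
    | zero => exact ⟨{((0:ℝ),(1:ℝ))}, by simp [hI1], by simp⟩
    | succ n ih =>
      obtain ⟨s, hs, hcard⟩ := ih
      refine ⟨s.biUnion (fun p =>
        {(p.1, (p.1+p.2)/2 - ε (n+1)), ((p.1+p.2)/2 + ε (n+1), p.2)}), ?_, ?_⟩
      · rw [hIrec (n+1) (by omega), ← hs]
        rw [Finset.coe_biUnion]
        simp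
      · calc (s.biUnion (fun p =>
              ({(p.1, (p.1+p.2)/2 - ε (n+1)), ((p.1+p.2)/2 + ε (n+1), p.2)} : Finset (ℝ×ℝ)))).card
            ≤ ∑ p ∈ s, ({(p.1, (p.1+p.2)/2 - ε (n+1)), ((p.1+p.2)/2 + ε (n+1), p.2)} : Finset (ℝ×ℝ)).card :=
              Finset.card_biUnion_le
          _ ≤ ∑ p ∈ s, 2 := Finset.sum_le_sum (fun p _ => (Finset.card_insert_le _ _).trans (by simp))
          _ = 2 * s.card := by rw [Finset.sum_const, smul_eq_mul, mul_comm]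
          _ ≤ 2 * 2 ^ n := by omega
          _ = 2 ^ (n+1) := by ring
  -- measure of each removed layer
  have hdiff : ∀ k : ℕ, volume (A (k+1) \ A (k+2)) ≤ ENNReal.ofReal (2 ^ k * (2 * ε (k+1))) := by
    intro k
    obtain ⟨s, hs, hcard⟩ := hfin k
    have hsub : A (k+1) \ A (k+2) ⊆
        ⋃ p ∈ (s : Set (ℝ×ℝ)), Set.Ioo ((p.1+p.2)/2 - ε (k+1)) ((p.1+p.2)/2 + ε (k+1)) := by
      intro x hx
      obtain ⟨hx1, hx2⟩ := hx
      rw [hA] at hx1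
      rw [mem_iUnion₂] at hx1
      obtain ⟨p, hp, hxp⟩ := hx1
      simp only [Set.mem_Icc] at hxp
      have hnot : ∀ q ∈ ({(p.1, (p.1+p.2)/2 - ε (k+1)), ((p.1+p.2)/2 + ε (k+1), p.2)} : Set (ℝ×ℝ)),
          x ∉ Set.Icc q.1 q.2 := by
        intro q hq hxq
        apply hx2
        rw [hA, hIrec (k+1) (by omega)]
        exact mem_iUnion₂.2 ⟨q, mem_iUnion₂.2 ⟨p, hp, hq⟩, hxq⟩
      have h1 := hnot _ (Set.mem_insert _ _)
      have h2 := hnot _ (Set.mem_insert_of_mem _ (Set.mem_singleton_iff.2 rfl))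
      simp only [Set.mem_Icc, not_and, not_le] at h1 h2
      refine mem_iUnion₂.2 ⟨p, by rw [hs]; exact hp, ?_⟩
      constructor
      · exact h1 hxp.1
      · by_contra h
        push_neg at h
        exact absurd hxp.2 (not_le.2 (h2 h))
    calc volume (A (k+1) \ A (k+2))
        ≤ volume (⋃ p ∈ (s : Set (ℝ×ℝ)), Set.Ioo ((p.1+p.2)/2 - ε (k+1)) ((p.1+p.2)/2 + ε (k+1))) :=
          measure_mono hsub
      _ ≤ ∑ p ∈ s, volume (Set.Ioo ((p.1+p.2)/2 - ε (k+1)) ((p.1+p.2)/2 + ε (k+1))) :=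
          measure_biUnion_finset_le _ _
      _ = ∑ p ∈ s, ENNReal.ofReal (2 * ε (k+1)) := by
          refine Finset.sum_congr rfl fun p _ => ?_
          rw [Real.volume_Ioo]
          congr 1
          ring
      _ = (s.card : ℝ≥0∞) * ENNReal.ofReal (2 * ε (k+1)) := by
          rw [Finset.sum_const, nsmul_eq_mul]
      _ ≤ ((2^k : ℕ) : ℝ≥0∞) * ENNReal.ofReal (2 * ε (k+1)) :=
          mul_le_mul_left (by exact_mod_cast hcard) _
      _ = ENNReal.ofReal (2 ^ k * (2 * ε (k+1))) := by
          have hcast : ((2^k : ℕ) : ℝ≥0∞) = ENNReal.ofReal ((2:ℝ)^k) := by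
            rw [← ENNReal.ofReal_natCast]
            norm_num
          rw [hcast, ← ENNReal.ofReal_mul (by positivity)]
  -- covering of the complement
  have hcover : Set.Icc (0:ℝ) 1 \ Astar ⊆ ⋃ n : ℕ, (A (n+1) \ A (n+2)) := by
    intro x hx
    obtain ⟨hx1, hx2⟩ := hx
    rw [hAstar] at hx2
    simp only [Set.mem_iInter, not_forall] at hx2
    have hex : ∃ k, x ∉ A (k+1) := hx2
    have h0 : Nat.find hex ≠ 0 := by
      intro h
      exact (h ▸ Nat.find_spec hex) (hA1 ▸ hx1)
    obtain ⟨m, hm⟩ := Nat.exists_eq_succ_of_ne_zero h0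
    refine mem_iUnion.2 ⟨m, ?_, ?_⟩
    · by_contra h
      exact Nat.find_min hex (by rw [hm]; exact m.lt_succ_self) h
    · have hspec := Nat.find_spec hex
      rw [hm] at hspec
      exact hspec
  set f : ℕ → ℝ≥0∞ := fun n => volume (A (n+1) \ A (n+2)) with hf
  have hsum : volume (Set.Icc (0:ℝ) 1 \ Astar) ≤ ∑' n : ℕ, f n :=
    (measure_mono hcover).trans (measure_iUnion_le _)
  have hsplit : ∑' n, f n = f 0 + (f 1 + ∑' n, f (n+2)) := by
    rw [tsum_eq_zero_add' ENNReal.summable, tsum_eq_zero_add' ENNReal.summable]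
  -- bounds on pieces
  have hf0 : f 0 ≤ ENNReal.ofReal (1/3) := by
    refine (hdiff 0).trans_eq ?_
    rw [hε1]; norm_num
  have hf1 : f 1 < ENNReal.ofReal (1/4) := by
    refine lt_of_le_of_lt (hdiff 1) ?_
    rw [ENNReal.ofReal_lt_ofReal_iff (by norm_num)]
    have := hεgeom 1 (by norm_num)
    norm_num at this ⊢
    linarith
  have htail : ∑' n, f (n+2) ≤ ENNReal.ofReal (1/12) := by
    have hb : ∀ n : ℕ, f (n+2) ≤ ENNReal.ofReal ((1/4:ℝ)^(n+2)) := by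
      intro n
      refine (hdiff (n+2)).trans (ENNReal.ofReal_le_ofReal ?_)
      have hg := hεgeom (n+2) (by omega)
      have h4 : ((1:ℝ)/4)^(n+2) = 1/4^(n+2) := by rw [div_pow]; norm_num
      rw [h4]
      calc (2:ℝ)^(n+2) * (2 * ε (n+3)) = 2 * (2^(n+2) * ε (n+3)) := by ring
        _ ≤ 2 * (1/2 * (1/4^(n+2))) := by linarith
        _ = 1/4^(n+2) := by ring
    have hsummable : Summable (fun n : ℕ => (1/4:ℝ)^(n+2)) := by
      refine Summable.congr ((summable_geometric_of_lt_one (r := (1/4:ℝ)) (by norm_num) (by norm_num)).mul_left ((1/16 : ℝ))) ?_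
      intro n
      ring
    calc ∑' n, f (n+2) ≤ ∑' n : ℕ, ENNReal.ofReal ((1/4:ℝ)^(n+2)) := ENNReal.tsum_le_tsum hb
      _ = ENNReal.ofReal (∑' n : ℕ, (1/4:ℝ)^(n+2)) :=
          (ENNReal.ofReal_tsum_of_nonneg (fun n => by positivity) hsummable).symm
      _ = ENNReal.ofReal (1/12) := by
          congr 1
          have h : ∑' n : ℕ, (1/4:ℝ)^(n+2) = ∑' n : ℕ, (1/16) * (1/4:ℝ)^n := by
            congr 1
            funext n
            ring
          rw [h, tsum_mul_left, tsum_geometric_of_lt_one (by norm_num) (by norm_num)]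
          norm_num
  have h23 : ENNReal.ofReal (1/3) + (ENNReal.ofReal (1/4) + ENNReal.ofReal (1/12)) = 2/3 := by
    rw [← ENNReal.ofReal_add (by norm_num) (by norm_num),
      ← ENNReal.ofReal_add (by norm_num) (by norm_num)]
    have : (1/3 : ℝ) + (1/4 + 1/12) = 2/3 := by norm_num
    rw [this, ENNReal.ofReal_div_of_pos (by norm_num), ENNReal.ofReal_ofNat,
      ENNReal.ofReal_ofNat]
  have hmain : volume (Set.Icc (0:ℝ) 1 \ Astar) < 2/3 := by
    calc volume (Set.Icc (0:ℝ) 1 \ Astar) ≤ f 0 + (f 1 + ∑' n, f (n+2)) := hsum.trans_eq hsplit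
      _ < ENNReal.ofReal (1/3) + (ENNReal.ofReal (1/4) + ENNReal.ofReal (1/12)) := by
          refine ENNReal.add_lt_add_of_le_of_lt (ne_top_of_le_ne_top ENNReal.ofReal_ne_top hf0) hf0 ?_
          exact ENNReal.add_lt_add_of_lt_of_le (ne_top_of_le_ne_top ENNReal.ofReal_ne_top htail) hf1 htail
      _ = 2/3 := h23
  have h1le : (1:ℝ≥0∞) ≤ volume (Set.Icc (0:ℝ) 1 \ Astar) + volume Astar := by
    have hsub' : Set.Icc (0:ℝ) 1 ⊆ (Set.Icc (0:ℝ) 1 \ Astar) ∪ Astar := by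
      intro x hx
      by_cases h : x ∈ Astar
      · exact Or.inr h
      · exact Or.inl ⟨hx, h⟩
    calc (1:ℝ≥0∞) = volume (Set.Icc (0:ℝ) 1) := by rw [Real.volume_Icc]; norm_num
      _ ≤ volume ((Set.Icc (0:ℝ) 1 \ Astar) ∪ Astar) := measure_mono hsub'
      _ ≤ volume (Set.Icc (0:ℝ) 1 \ Astar) + volume Astar := measure_union_le _ _
  have hA13 : 1/3 ≤ volume Astar := by
    by_contra h
    push_neg at h
    have hlt : volume (Set.Icc (0:ℝ) 1 \ Astar) + volume Astar < 2/3 + 1/3 :=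
      ENNReal.add_lt_add hmain h
    have h1 : (2/3 : ℝ≥0∞) + 1/3 = 1 := by
      rw [ENNReal.div_add_div_same, show (2:ℝ≥0∞)+1 = 3 by norm_num]
      exact ENNReal.div_self (by norm_num) (by norm_num)
    rw [h1] at hlt
    exact absurd (h1le.trans_lt hlt) (lt_irrefl _)
  exact ⟨hmain, hA13, lt_of_lt_of_le (ENNReal.div_pos (by norm_num) (by norm_num)) hA13⟩
end

section
/- For every k ∈ ℕ, the function f_k : [0,1] → [0,1] is strictly increasing and is Lipschitz with a Lipschitz constant strictly smaller than 1/2. -/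
open Set MeasureTheory Filter


private lemma chainB {g : ℝ → ℝ} {c L u v w : ℝ}
    (h1 : c * (v - u) ≤ g v - g u ∧ g v - g u ≤ L * (v - u))
    (h2 : c * (w - v) ≤ g w - g v ∧ g w - g v ≤ L * (w - v)) :
    c * (w - u) ≤ g w - g u ∧ g w - g u ≤ L * (w - u) := by
  obtain ⟨a1, a2⟩ := h1; obtain ⟨b1, b2⟩ := h2
  have e1 : c * (w - u) = c * (v - u) + c * (w - v) := by ring
  have e2 : L * (w - u) = L * (v - u) + L * (w - v) := by ring
  constructor <;> linarith

private lemma slopeB {g : ℝ → ℝ} {c L s u v : ℝ} (hc : c ≤ s) (hL : s ≤ L)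
    (hs : ∀ x y : ℝ, u ≤ x → x ≤ y → y ≤ v → g y - g x = s * (y - x)) :
    ∀ x y : ℝ, u ≤ x → x ≤ y → y ≤ v →
      c * (y - x) ≤ g y - g x ∧ g y - g x ≤ L * (y - x) := by
  intro x y hx hxy hy
  rw [hs x y hx hxy hy]
  have h0 : 0 ≤ y - x := by linarith
  exact ⟨mul_le_mul_of_nonneg_right hc h0, mul_le_mul_of_nonneg_right hL h0⟩

private lemma weakenB {g : ℝ → ℝ} {c c' L L' u v : ℝ} (hc : c ≤ c') (hL : L' ≤ L)
    (huv : u ≤ v)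
    (h : c' * (v - u) ≤ g v - g u ∧ g v - g u ≤ L' * (v - u)) :
    c * (v - u) ≤ g v - g u ∧ g v - g u ≤ L * (v - u) := by
  have h0 : 0 ≤ v - u := by linarith
  exact ⟨le_trans (mul_le_mul_of_nonneg_right hc h0) h.1,
    le_trans h.2 (mul_le_mul_of_nonneg_right hL h0)⟩

private lemma goodStep
    (ε w : ℕ → ℝ) (I : ℕ → Set (ℝ × ℝ)) (f : ℕ → ℝ → ℝ) (k : ℕ)
    (hεk : 0 < ε k) (hεk1 : 0 < ε (k+1))
    (hwk : 0 < w k) (hwk1 : 0 < w (k+1)) (hwk2 : 0 < w (k+2))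
    (h2ε : 2 * ε k < w k)
    (hwreck : w (k+1) = w k / 2 - ε k)
    (hwreck1 : w (k+2) = w (k+1) / 2 - ε (k+1))
    (hεq : ε (k+1) / ε k < 1/2)
    (hfleft : ∀ p ∈ I k, ∀ x : ℝ, p.1 ≤ x → x ≤ (p.1 + p.2) / 2 - ε k →
      f k x = w (k + 2) / w (k + 1) * (x - p.1) + f (k - 1) p.1)
    (hfmid : ∀ p ∈ I k, ∀ x : ℝ, |x - (p.1 + p.2) / 2| < ε k →
      f k x = ε (k + 1) / ε k * (x - (p.1 + p.2) / 2 + ε k) + f (k - 1) p.1 + w (k + 2))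
    (hfright : ∀ p ∈ I k, ∀ x : ℝ, (p.1 + p.2) / 2 + ε k ≤ x → x ≤ p.2 →
      f k x = w (k + 2) / w (k + 1) * (x - (p.1 + p.2) / 2 - ε k) + f (k - 1) p.1
        + w (k + 2) + 2 * ε (k + 1))
    (hfout : ∀ x ∈ Set.Icc (0 : ℝ) 1 \ (⋃ p ∈ I k, Set.Icc p.1 p.2),
      f k x = f (k - 1) x)
    (hSA : ∀ p ∈ I k, 0 ≤ p.1 ∧ p.2 = p.1 + w k ∧ p.2 ≤ 1 ∧
      ∀ x : ℝ, p.1 ≤ x → x ≤ p.2 → f (k-1) x = w (k+1) / w k * (x - p.1) + f (k-1) p.1)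
    (hSB : ∀ p ∈ I k, ∀ q ∈ I k, p ≠ q → p.2 < q.1 ∨ q.2 < p.1)
    (c' L' : ℝ) (hc' : 0 < c') (hL'0 : 0 ≤ L') (hL' : L' < 1/2)
    (hG : ∀ x y : ℝ, x ∈ Set.Icc (0:ℝ) 1 → y ∈ Set.Icc (0:ℝ) 1 → x ≤ y →
      c' * (y - x) ≤ f (k-1) y - f (k-1) x ∧ f (k-1) y - f (k-1) x ≤ L' * (y - x)) :
    ∃ c L : ℝ, 0 < c ∧ 0 ≤ L ∧ L < 1/2 ∧ ∀ x y : ℝ, x ∈ Set.Icc (0:ℝ) 1 → y ∈ Set.Icc (0:ℝ) 1 →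
      x ≤ y → c * (y - x) ≤ f k y - f k x ∧ f k y - f k x ≤ L * (y - x) := by
  set s1 : ℝ := w (k+2) / w (k+1) with hs1def
  set s2 : ℝ := ε (k+1) / ε k with hs2def
  have hs1pos : 0 < s1 := div_pos hwk2 hwk1
  have hs2pos : 0 < s2 := div_pos hεk1 hεk
  have hs1half : s1 < 1/2 := by
    rw [hs1def, div_lt_iff₀ hwk1]; linarith
  refine ⟨min c' (min s1 s2), max L' (max s1 s2), lt_min hc' (lt_min hs1pos hs2pos),
    le_trans hL'0 (le_max_left _ _), max_lt hL' (max_lt hs1half hεq), ?_⟩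
  set c : ℝ := min c' (min s1 s2) with hcdef
  set L : ℝ := max L' (max s1 s2) with hLdef
  have hcpos : 0 < c := lt_min hc' (lt_min hs1pos hs2pos)
  have hcc' : c ≤ c' := min_le_left _ _
  have hcs1 : c ≤ s1 := le_trans (min_le_right _ _) (min_le_left _ _)
  have hcs2 : c ≤ s2 := le_trans (min_le_right _ _) (min_le_right _ _)
  have hLL' : L' ≤ L := le_max_left _ _
  have hLs1 : s1 ≤ L := le_trans (le_max_left _ _) (le_max_right _ _)
  have hLs2 : s2 ≤ L := le_trans (le_max_right _ _) (le_max_right _ _)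
  -- within-interval bounds
  have within : ∀ p ∈ I k, ∀ x y : ℝ, p.1 ≤ x → x ≤ y → y ≤ p.2 →
      c * (y - x) ≤ f k y - f k x ∧ f k y - f k x ≤ L * (y - x) := by
    intro p hp
    obtain ⟨ha0, hlen, hb1, haff⟩ := hSA p hp
    set m : ℝ := (p.1 + p.2) / 2 with hmdef
    have hm : m = p.1 + w k / 2 := by rw [hmdef, hlen]; ring
    have hm1 : p.1 ≤ m - ε k := by rw [hm]; linarith
    have hm2 : m + ε k ≤ p.2 := by rw [hm, hlen]; linarith
    have hlen1 : m - ε k - p.1 = w (k+1) := by rw [hm, hwreck]; ring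
    have e2 : s2 * (2 * ε k) = 2 * ε (k+1) := by
      rw [hs2def]; field_simp
    -- mid-piece closed formula
    have midf : ∀ x : ℝ, m - ε k ≤ x → x ≤ m + ε k →
        f k x = s2 * (x - m + ε k) + f (k-1) p.1 + w (k+2) := by
      intro x h1 h2
      rcases eq_or_lt_of_le h1 with he | h1'
      · rw [← he, hfleft p hp _ hm1 le_rfl, hlen1, div_mul_cancel₀ _ (ne_of_gt hwk1)]
        ring
      rcases eq_or_lt_of_le h2 with he | h2'
      · rw [he, hfright p hp _ le_rfl hm2]
        linear_combination -e2
      · rw [hfmid p hp _ (abs_lt.mpr ⟨by linarith, by linarith⟩)]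
    have B1 := slopeB (g := f k) (u := p.1) (v := m - ε k) hcs1 hLs1 (by
      intro x y hx hxy hy
      rw [hfleft p hp x hx (by linarith), hfleft p hp y (by linarith) hy]; ring)
    have B2 := slopeB (g := f k) (u := m - ε k) (v := m + ε k) hcs2 hLs2 (by
      intro x y hx hxy hy
      rw [midf x hx (by linarith), midf y (by linarith) hy]; ring)
    have B3 := slopeB (g := f k) (u := m + ε k) (v := p.2) hcs1 hLs1 (by
      intro x y hx hxy hy
      rw [hfright p hp x hx (by linarith), hfright p hp y (by linarith) hy]; ring)
    intro x y hx hxy hy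
    rcases le_or_gt y (m - ε k) with h | h
    · exact B1 x y hx hxy h
    rcases le_or_gt (m - ε k) x with h2 | h2
    · rcases le_or_gt y (m + ε k) with h3 | h3
      · exact B2 x y h2 hxy h3
      rcases le_or_gt (m + ε k) x with h4 | h4
      · exact B3 x y h4 hxy hy
      · exact chainB (B2 x (m + ε k) h2 h4.le (le_refl _))
          (B3 (m + ε k) y (le_refl _) h3.le hy)
    · rcases le_or_gt y (m + ε k) with h3 | h3
      · exact chainB (B1 x (m - ε k) hx h2.le (le_refl _))
          (B2 (m - ε k) y (le_refl _) h.le h3)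
      · exact chainB (B1 x (m - ε k) hx h2.le (le_refl _))
          (chainB (B2 (m - ε k) (m + ε k) (le_refl _) (by linarith) (le_refl _))
            (B3 (m + ε k) y (le_refl _) h3.le hy))
  -- endpoint values
  have fka : ∀ p ∈ I k, f k p.1 = f (k-1) p.1 := by
    intro p hp
    obtain ⟨ha0, hlen, hb1, haff⟩ := hSA p hp
    rw [hfleft p hp p.1 le_rfl (by rw [hlen]; linarith)]; ring
  have fkb : ∀ p ∈ I k, f k p.2 = f (k-1) p.2 := by
    intro p hp
    obtain ⟨ha0, hlen, hb1, haff⟩ := hSA p hp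
    rw [hfright p hp p.2 (by rw [hlen]; linarith) le_rfl,
      haff p.2 (by rw [hlen]; linarith) le_rfl]
    have e1 : p.2 - (p.1 + p.2)/2 - ε k = w (k+1) := by rw [hlen, hwreck]; ring
    have e3 : p.2 - p.1 = w k := by rw [hlen]; ring
    rw [e1, e3, div_mul_cancel₀ _ (ne_of_gt hwk1), div_mul_cancel₀ _ (ne_of_gt hwk)]
    linarith [hwreck1]
  -- interval endpoints in [0,1], and a ≤ b
  have hmem : ∀ p ∈ I k, 0 ≤ p.1 ∧ p.1 ≤ p.2 ∧ p.2 ≤ 1 := by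
    intro p hp
    obtain ⟨ha0, hlen, hb1, _⟩ := hSA p hp
    exact ⟨ha0, by rw [hlen]; linarith, hb1⟩
  -- main global argument
  intro x y hx hy hxy
  by_cases hxin : ∃ p ∈ I k, p.1 ≤ x ∧ x ≤ p.2
  · obtain ⟨p, hp, hpx1, hpx2⟩ := hxin
    by_cases hyin : ∃ q ∈ I k, q.1 ≤ y ∧ y ≤ q.2
    · obtain ⟨q, hq, hqy1, hqy2⟩ := hyin
      by_cases hpq : p = q
      · subst hpq; exact within p hp x y hpx1 hxy hqy2
      · rcases hSB p hp q hq hpq with hord | hord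
        · -- p.2 < q.1 : chain x → p.2 → q.1 → y
          obtain ⟨_, hpab, hp1⟩ := hmem p hp
          obtain ⟨hq0, hqab, hq1⟩ := hmem q hq
          have t1 := within p hp x p.2 hpx1 hpx2 le_rfl
          have t2 := hG p.2 q.1 ⟨by linarith, by linarith⟩ ⟨hq0, by linarith⟩ hord.le
          have t3 := within q hq q.1 y le_rfl hqy1 hqy2
          rw [← fkb p hp, ← fka q hq] at t2
          exact chainB (chainB t1 (weakenB hcc' hLL' hord.le t2)) t3
        · exact absurd (by linarith : q.2 < q.2) (lt_irrefl _)
    · -- x in p, y outside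
      push_neg at hyin
      have hyb : p.2 < y := hyin p hp (hpx1.trans hxy)
      have hfy : f k y = f (k-1) y := by
        apply hfout
        refine ⟨hy, ?_⟩
        simp only [Set.mem_iUnion, Set.mem_Icc, not_exists, not_and, not_le]
        exact fun q hq h1 => hyin q hq h1
      obtain ⟨_, hpab, hp1⟩ := hmem p hp
      have t1 := within p hp x p.2 hpx1 hpx2 le_rfl
      have t2 := hG p.2 y ⟨by linarith, hp1⟩ hy hyb.le
      rw [← fkb p hp, ← hfy] at t2
      exact chainB t1 (weakenB hcc' hLL' hyb.le t2)
  · push_neg at hxin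
    have hfx : f k x = f (k-1) x := by
      apply hfout
      refine ⟨hx, ?_⟩
      simp only [Set.mem_iUnion, Set.mem_Icc, not_exists, not_and, not_le]
      exact fun q hq h1 => hxin q hq h1
    by_cases hyin : ∃ q ∈ I k, q.1 ≤ y ∧ y ≤ q.2
    · obtain ⟨q, hq, hqy1, hqy2⟩ := hyin
      have hxa : x < q.1 := by
        by_contra hcon
        push_neg at hcon
        have := hxin q hq hcon
        linarith
      obtain ⟨hq0, hqab, hq1⟩ := hmem q hq
      have t1 := hG x q.1 hx ⟨hq0, by linarith⟩ hxa.le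
      have t2 := within q hq q.1 y le_rfl hqy1 hqy2
      rw [← hfx, ← fka q hq] at t1
      exact chainB (weakenB hcc' hLL' hxa.le t1) t2
    · push_neg at hyin
      have hfy : f k y = f (k-1) y := by
        apply hfout
        refine ⟨hy, ?_⟩
        simp only [Set.mem_iUnion, Set.mem_Icc, not_exists, not_and, not_le]
        exact fun q hq h1 => hyin q hq h1
      have t := hG x y hx hy hxy
      rw [← hfx, ← hfy] at t
      have h0 : 0 ≤ y - x := by linarith
      exact ⟨le_trans (mul_le_mul_of_nonneg_right hcc' h0) t.1,
        le_trans t.2 (mul_le_mul_of_nonneg_right hLL' h0)⟩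

private lemma structStep
    (ε w : ℕ → ℝ) (I : ℕ → Set (ℝ × ℝ)) (f : ℕ → ℝ → ℝ) (k : ℕ)
    (hεk : 0 < ε k) (hεk1 : 0 < ε (k+1))
    (hwk : 0 < w k) (h2ε : 2 * ε k < w k)
    (hwreck : w (k+1) = w k / 2 - ε k)
    (hI : I (k+1) = ⋃ p ∈ I k, {(p.1, (p.1 + p.2) / 2 - ε k), ((p.1 + p.2) / 2 + ε k, p.2)})
    (hfleft : ∀ p ∈ I k, ∀ x : ℝ, p.1 ≤ x → x ≤ (p.1 + p.2) / 2 - ε k →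
      f k x = w (k + 2) / w (k + 1) * (x - p.1) + f (k - 1) p.1)
    (hfright : ∀ p ∈ I k, ∀ x : ℝ, (p.1 + p.2) / 2 + ε k ≤ x → x ≤ p.2 →
      f k x = w (k + 2) / w (k + 1) * (x - (p.1 + p.2) / 2 - ε k) + f (k - 1) p.1
        + w (k + 2) + 2 * ε (k + 1))
    (hSA : ∀ p ∈ I k, 0 ≤ p.1 ∧ p.2 = p.1 + w k ∧ p.2 ≤ 1 ∧
      ∀ x : ℝ, p.1 ≤ x → x ≤ p.2 → f (k-1) x = w (k+1) / w k * (x - p.1) + f (k-1) p.1)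
    (hSB : ∀ p ∈ I k, ∀ q ∈ I k, p ≠ q → p.2 < q.1 ∨ q.2 < p.1) :
    (∀ p ∈ I (k+1), 0 ≤ p.1 ∧ p.2 = p.1 + w (k+1) ∧ p.2 ≤ 1 ∧
      ∀ x : ℝ, p.1 ≤ x → x ≤ p.2 → f k x = w (k+2) / w (k+1) * (x - p.1) + f k p.1) ∧
    (∀ p ∈ I (k+1), ∀ q ∈ I (k+1), p ≠ q → p.2 < q.1 ∨ q.2 < p.1) := by
  have hmem : ∀ p' : ℝ × ℝ, p' ∈ I (k+1) ↔ ∃ p ∈ I k,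
      p' = (p.1, (p.1 + p.2) / 2 - ε k) ∨ p' = ((p.1 + p.2) / 2 + ε k, p.2) := by
    intro p'
    rw [hI]
    simp [Set.mem_iUnion, Set.mem_insert_iff, Set.mem_singleton_iff]
  constructor
  · intro p' hp'
    obtain ⟨p, hp, hc⟩ := (hmem p').1 hp'
    obtain ⟨ha0, hlen, hb1, haff⟩ := hSA p hp
    have hm : (p.1 + p.2) / 2 = p.1 + w k / 2 := by rw [hlen]; ring
    rcases hc with hc | hc <;> subst hc <;> simp only []
    · -- left child
      have hm1 : p.1 ≤ (p.1 + p.2) / 2 - ε k := by rw [hm]; linarith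
      refine ⟨ha0, by rw [hm, hwreck]; ring, by linarith [hm], ?_⟩
      intro x hx1 hx2
      rw [hfleft p hp x hx1 hx2, hfleft p hp p.1 le_rfl hm1]
      ring
    · -- right child
      have hm2 : (p.1 + p.2) / 2 + ε k ≤ p.2 := by rw [hm, hlen]; linarith
      refine ⟨by rw [hm]; linarith, by rw [hm, hlen, hwreck]; ring, hb1, ?_⟩
      intro x hx1 hx2
      rw [hfright p hp x hx1 hx2, hfright p hp _ le_rfl hm2]
      ring
  · -- disjointness / ordering
    have hchild : ∀ p ∈ I k, ∀ p' : ℝ × ℝ,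
        (p' = (p.1, (p.1 + p.2) / 2 - ε k) ∨ p' = ((p.1 + p.2) / 2 + ε k, p.2)) →
        p.1 ≤ p'.1 ∧ p'.2 ≤ p.2 := by
      intro p hp p' h
      obtain ⟨ha0, hlen, hb1, _⟩ := hSA p hp
      rcases h with h | h <;> subst h <;> constructor <;> simp only [] <;>
        nlinarith [hlen, hεk.le, hwk.le]
    intro p' hp' q' hq' hne
    obtain ⟨p, hp, hcp⟩ := (hmem p').1 hp'
    obtain ⟨q, hq, hcq⟩ := (hmem q').1 hq'
    by_cases hpq : p = q
    · subst hpq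
      obtain ⟨ha0, hlen, hb1, _⟩ := hSA p hp
      rcases hcp with h1 | h1 <;> rcases hcq with h2 | h2
      · exact absurd (h1.trans h2.symm) hne
      · subst h1; subst h2; left; simp only []; linarith
      · subst h1; subst h2; right; simp only []; linarith
      · exact absurd (h1.trans h2.symm) hne
    · rcases hSB p hp q hq hpq with hord | hord
      · left
        have c1 := (hchild p hp p' hcp).2
        have c2 := (hchild q hq q' hcq).1
        linarith
      · right
        have c1 := (hchild q hq q' hcq).2
        have c2 := (hchild p hp p' hcp).1
        linarith
theorem stmt_12
    (ε w : ℕ → ℝ)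
    (hw1 : w 1 = 1) (hε1 : ε 1 = 1 / 6)
    (hwrec : ∀ k, 1 ≤ k → w (k + 1) = w k / 2 - ε k)
    (hεpos : ∀ k, 1 ≤ k → 0 < ε (k + 1))
    (hεgeom : ∀ k, 1 ≤ k → 2 ^ k * ε (k + 1) < 1 / 2 * (1 / 4 ^ k))
    (hεquot : ∀ k, 1 ≤ k → ε (k + 1) / ε k < 1 / 2)
    (hεw : ∀ k, 1 ≤ k → ε (k + 1) < w k / 4 - ε k / 2)
    (I : ℕ → Set (ℝ × ℝ))
    (hI1 : I 1 = {((0 : ℝ), (1 : ℝ))})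
    (hIrec : ∀ k, 1 ≤ k → I (k + 1) =
      ⋃ p ∈ I k, {(p.1, (p.1 + p.2) / 2 - ε k), ((p.1 + p.2) / 2 + ε k, p.2)})
    (f : ℕ → ℝ → ℝ)
    (hf0 : ∀ x, f 0 x = x / 3)
    (hfmaps : ∀ k, Set.MapsTo (f k) (Set.Icc (0 : ℝ) 1) (Set.Icc (0 : ℝ) 1))
    (hfleft : ∀ k, 1 ≤ k → ∀ p ∈ I k, ∀ x : ℝ, p.1 ≤ x → x ≤ (p.1 + p.2) / 2 - ε k →
      f k x = w (k + 2) / w (k + 1) * (x - p.1) + f (k - 1) p.1)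
    (hfmid : ∀ k, 1 ≤ k → ∀ p ∈ I k, ∀ x : ℝ, |x - (p.1 + p.2) / 2| < ε k →
      f k x = ε (k + 1) / ε k * (x - (p.1 + p.2) / 2 + ε k) + f (k - 1) p.1 + w (k + 2))
    (hfright : ∀ k, 1 ≤ k → ∀ p ∈ I k, ∀ x : ℝ, (p.1 + p.2) / 2 + ε k ≤ x → x ≤ p.2 →
      f k x = w (k + 2) / w (k + 1) * (x - (p.1 + p.2) / 2 - ε k) + f (k - 1) p.1
        + w (k + 2) + 2 * ε (k + 1))
    (hfout : ∀ k, 1 ≤ k → ∀ x ∈ Set.Icc (0 : ℝ) 1 \ (⋃ p ∈ I k, Set.Icc p.1 p.2),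
      f k x = f (k - 1) x)
    :
    ∀ k, 1 ≤ k →
      StrictMonoOn (f k) (Set.Icc (0 : ℝ) 1) ∧
      ∃ L : ℝ, L < 1 / 2 ∧ ∀ x ∈ Set.Icc (0 : ℝ) 1, ∀ y ∈ Set.Icc (0 : ℝ) 1,
        |f k x - f k y| ≤ L * |x - y| := by
  -- positivity of ε
  have hεpos' : ∀ k, 1 ≤ k → 0 < ε k := by
    intro k hk
    match k, hk with
    | 1, _ => rw [hε1]; norm_num
    | (n+2), _ => exact hεpos (n+1) (by omega)
  -- positivity of w and the gap bound
  have hwfacts : ∀ k, 1 ≤ k → 0 < w k ∧ 2 * ε k < w k := by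
    intro k hk
    induction k, hk using Nat.le_induction with
    | base => rw [hw1, hε1]; norm_num
    | succ n hn _ =>
      have h1 := hεw n hn
      have h2 := hεpos n hn
      have h3 := hwrec n hn
      constructor <;> linarith
  -- main induction: structure of I k plus two-sided slope bounds for f (k-1)
  have main : ∀ k, 1 ≤ k →
      ((∀ p ∈ I k, 0 ≤ p.1 ∧ p.2 = p.1 + w k ∧ p.2 ≤ 1 ∧
          ∀ x : ℝ, p.1 ≤ x → x ≤ p.2 →
            f (k-1) x = w (k+1) / w k * (x - p.1) + f (k-1) p.1) ∧
        (∀ p ∈ I k, ∀ q ∈ I k, p ≠ q → p.2 < q.1 ∨ q.2 < p.1)) ∧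
      (∃ c L : ℝ, 0 < c ∧ 0 ≤ L ∧ L < 1/2 ∧ ∀ x y : ℝ,
          x ∈ Set.Icc (0:ℝ) 1 → y ∈ Set.Icc (0:ℝ) 1 → x ≤ y →
          c * (y - x) ≤ f (k-1) y - f (k-1) x ∧ f (k-1) y - f (k-1) x ≤ L * (y - x)) := by
    intro k hk
    induction k, hk using Nat.le_induction with
    | base =>
      have hw2 : w 2 = 1/3 := by
        have := hwrec 1 le_rfl
        rw [hw1, hε1] at this
        norm_num at this
        exact this
      refine ⟨⟨?_, ?_⟩, ?_⟩
      · intro p hp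
        rw [hI1] at hp
        simp only [Set.mem_singleton_iff] at hp
        subst hp
        refine ⟨le_rfl, by rw [hw1]; norm_num, le_rfl, ?_⟩
        intro x hx1 hx2
        simp only [Nat.sub_self]
        rw [hf0, hf0, hw2, hw1]
        norm_num
        ring
      · intro p hp q hq hne
        rw [hI1] at hp hq
        simp only [Set.mem_singleton_iff] at hp hq
        exact absurd (hp.trans hq.symm) hne
      · refine ⟨1/3, 1/3, by norm_num, by norm_num, by norm_num, ?_⟩
        intro x y hx hy hxy
        simp only [Nat.sub_self]
        rw [hf0, hf0]
        constructor <;> linarith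
    | succ n hn ih =>
      obtain ⟨⟨hSAn, hSBn⟩, c', L', hc', hL'0, hL', hG⟩ := ih
      have hεn := hεpos' n hn
      have hεn1 := hεpos' (n+1) (by omega)
      have hwn := hwfacts n hn
      have hwn1 := hwfacts (n+1) (by omega)
      have hwn2 := hwfacts (n+2) (by omega)
      have hGoodn := goodStep ε w I f n hεn hεn1 hwn.1 hwn1.1 hwn2.1 hwn.2
        (hwrec n hn) (hwrec (n+1) (by omega)) (hεquot n hn)
        (hfleft n hn) (hfmid n hn) (hfright n hn) (hfout n hn)
        hSAn hSBn c' L' hc' hL'0 hL' hG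
      have hstruct := structStep ε w I f n hεn hεn1 hwn.1 hwn.2
        (hwrec n hn) (hIrec n hn) (hfleft n hn) (hfright n hn) hSAn hSBn
      simp only [Nat.add_sub_cancel]
      exact ⟨hstruct, hGoodn⟩
  -- conclude
  intro k hk
  have hGk := (main (k+1) (by omega)).2
  simp only [Nat.add_sub_cancel] at hGk
  obtain ⟨c, L, hc, hL0, hL, hB⟩ := hGk
  constructor
  · intro x hx y hy hxy
    have h1 := (hB x y hx hy hxy.le).1
    nlinarith [mul_pos hc (sub_pos.mpr hxy)]
  · refine ⟨L, hL, ?_⟩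
    intro x hx y hy
    rcases le_total x y with h | h
    · obtain ⟨h1, h2⟩ := hB x y hx hy h
      have h0 : (0:ℝ) ≤ f k y - f k x :=
        le_trans (mul_nonneg hc.le (by linarith)) h1
      have habs : |x - y| = y - x := by
        rw [abs_sub_comm]; exact abs_of_nonneg (by linarith)
      have habs2 : |f k x - f k y| = f k y - f k x := by
        rw [abs_sub_comm]; exact abs_of_nonneg h0
      rw [habs, habs2]; exact h2
    · obtain ⟨h1, h2⟩ := hB y x hy hx h
      have h0 : (0:ℝ) ≤ f k x - f k y :=
        le_trans (mul_nonneg hc.le (by linarith)) h1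
      have habs : |x - y| = x - y := abs_of_nonneg (by linarith)
      have habs2 : |f k x - f k y| = f k x - f k y := abs_of_nonneg h0
      rw [habs, habs2]; exact h2
end

section
/- For every k ∈ ℕ, f_k([0,1]) = [0, 1/3]; in particular f_k(0) = 0 and f_k(1) = 1/3. -/
open Set MeasureTheory Filter

lemma affImage (c d a b : ℝ) (hc : 0 < c) (hab : a ≤ b) (g : ℝ → ℝ)
    (hg : ∀ x ∈ Set.Icc a b, g x = c * (x - a) + d) :
    g '' Set.Icc a b = Set.Icc d (c * (b - a) + d) := by
  ext y
  constructor
  · rintro ⟨x, hx, rfl⟩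
    rw [hg x hx]
    constructor
    · nlinarith [hx.1]
    · nlinarith [hx.2]
  · rintro ⟨h1, h2⟩
    have h3 : 0 ≤ (y - d) / c := div_nonneg (by linarith) hc.le
    have h4 : (y - d) / c ≤ b - a := by
      rw [div_le_iff₀ hc]
      nlinarith
    refine ⟨a + (y - d) / c, ⟨by linarith, by linarith⟩, ?_⟩
    rw [hg _ ⟨by linarith, by linarith⟩]
    have hy : c * ((y - d) / c) = y - d := mul_div_cancel₀ _ hc.ne'
    rw [show a + (y - d) / c - a = (y - d) / c by ring, hy]
    ring

theorem stmt_13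
    (ε w : ℕ → ℝ)
    (hw1 : w 1 = 1) (hε1 : ε 1 = 1 / 6)
    (hwrec : ∀ k, 1 ≤ k → w (k + 1) = w k / 2 - ε k)
    (hεpos : ∀ k, 1 ≤ k → 0 < ε (k + 1))
    (hεgeom : ∀ k, 1 ≤ k → 2 ^ k * ε (k + 1) < 1 / 2 * (1 / 4 ^ k))
    (hεquot : ∀ k, 1 ≤ k → ε (k + 1) / ε k < 1 / 2)
    (hεw : ∀ k, 1 ≤ k → ε (k + 1) < w k / 4 - ε k / 2)
    (I : ℕ → Set (ℝ × ℝ))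
    (hI1 : I 1 = {((0 : ℝ), (1 : ℝ))})
    (hIrec : ∀ k, 1 ≤ k → I (k + 1) =
      ⋃ p ∈ I k, {(p.1, (p.1 + p.2) / 2 - ε k), ((p.1 + p.2) / 2 + ε k, p.2)})
    (f : ℕ → ℝ → ℝ)
    (hf0 : ∀ x, f 0 x = x / 3)
    (hfmaps : ∀ k, Set.MapsTo (f k) (Set.Icc (0 : ℝ) 1) (Set.Icc (0 : ℝ) 1))
    (hfleft : ∀ k, 1 ≤ k → ∀ p ∈ I k, ∀ x : ℝ, p.1 ≤ x → x ≤ (p.1 + p.2) / 2 - ε k →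
      f k x = w (k + 2) / w (k + 1) * (x - p.1) + f (k - 1) p.1)
    (hfmid : ∀ k, 1 ≤ k → ∀ p ∈ I k, ∀ x : ℝ, |x - (p.1 + p.2) / 2| < ε k →
      f k x = ε (k + 1) / ε k * (x - (p.1 + p.2) / 2 + ε k) + f (k - 1) p.1 + w (k + 2))
    (hfright : ∀ k, 1 ≤ k → ∀ p ∈ I k, ∀ x : ℝ, (p.1 + p.2) / 2 + ε k ≤ x → x ≤ p.2 →
      f k x = w (k + 2) / w (k + 1) * (x - (p.1 + p.2) / 2 - ε k) + f (k - 1) p.1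
        + w (k + 2) + 2 * ε (k + 1))
    (hfout : ∀ k, 1 ≤ k → ∀ x ∈ Set.Icc (0 : ℝ) 1 \ (⋃ p ∈ I k, Set.Icc p.1 p.2),
      f k x = f (k - 1) x)
    :
    ∀ k, 1 ≤ k →
      f k '' Set.Icc (0 : ℝ) 1 = Set.Icc (0 : ℝ) (1 / 3) ∧ f k 0 = 0 ∧ f k 1 = 1 / 3 := by
  -- basic positivity facts
  have εpos : ∀ k, 1 ≤ k → 0 < ε k := by
    intro k hk
    rcases eq_or_lt_of_le hk with h | h
    · rw [← h, hε1]; norm_num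
    · obtain ⟨j, rfl⟩ : ∃ j, k = j + 1 := ⟨k - 1, by omega⟩
      exact hεpos j (by omega)
  have wpos : ∀ k, 1 ≤ k → 0 < w k := by
    intro k hk
    have h1 := hεw k hk
    have h2 := hεpos k hk
    have h3 := εpos k hk
    linarith
  have hεlt : ∀ k, 1 ≤ k → ε k < w k / 2 := by
    intro k hk
    have h1 := hεw k hk
    have h2 := hεpos k hk
    linarith
  -- structural invariant about the intervals
  have Inv : ∀ k, 1 ≤ k → ∀ p ∈ I k, 0 ≤ p.1 ∧ p.2 ≤ 1 ∧ p.2 - p.1 = w k ∧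
      ∀ x ∈ Set.Icc p.1 p.2, f (k - 1) x = w (k + 1) / w k * (x - p.1) + f (k - 1) p.1 := by
    intro k hk
    induction k, hk using Nat.le_induction with
    | base =>
      intro p hp
      rw [hI1, Set.mem_singleton_iff] at hp
      subst hp
      have hw2 : w 2 = 1 / 3 := by
        have := hwrec 1 le_rfl
        rw [hw1, hε1] at this
        norm_num at this
        exact this
      refine ⟨le_refl 0, le_refl 1, by rw [hw1]; norm_num, ?_⟩
      intro x hx
      simp only [hf0, hw2, hw1]
      norm_num
      ring
    | succ k hk ih =>
      intro p hp
      rw [hIrec k hk] at hp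
      simp only [Set.mem_iUnion, Set.mem_insert_iff, Set.mem_singleton_iff, exists_prop] at hp
      obtain ⟨q, hq, hpq⟩ := hp
      obtain ⟨h0, h1, hlen, _⟩ := ih q hq
      have hwk := wpos k hk
      have hwk1 := wpos (k + 1) (by omega)
      have hek := εpos k hk
      have hrec := hwrec k hk
      have hl : ε k < w k / 2 := hεlt k hk
      have hm1 : q.1 ≤ (q.1 + q.2) / 2 - ε k := by linarith
      have hm2 : (q.1 + q.2) / 2 + ε k ≤ q.2 := by linarith
      rcases hpq with rfl | rfl
      · -- left child
        dsimp only
        refine ⟨h0, by linarith, by rw [hrec]; linarith, ?_⟩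
        intro x hx
        simp only [Nat.add_sub_cancel]
        have hfa := hfleft k hk q hq q.1 le_rfl hm1
        have hfx := hfleft k hk q hq x hx.1 hx.2
        rw [hfx, hfa]
        ring_nf
      · -- right child
        dsimp only
        refine ⟨by linarith, h1, by rw [hrec]; linarith, ?_⟩
        intro x hx
        simp only [Nat.add_sub_cancel]
        have hfa := hfright k hk q hq ((q.1 + q.2) / 2 + ε k) le_rfl hm2
        have hfx := hfright k hk q hq x hx.1 hx.2
        rw [hfx, hfa]
        ring_nf
  -- image of f k and f (k-1) on an interval of I k coincide
  have imgA : ∀ k, 1 ≤ k → ∀ p ∈ I k,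
      f k '' Set.Icc p.1 p.2 = Set.Icc (f (k - 1) p.1) (f (k - 1) p.1 + w (k + 1)) ∧
      f (k - 1) '' Set.Icc p.1 p.2 = Set.Icc (f (k - 1) p.1) (f (k - 1) p.1 + w (k + 1)) := by
    intro k hk p hp
    obtain ⟨h0, h1, hlen, haff⟩ := Inv k hk p hp
    have hwk := wpos k hk
    have hwk1 := wpos (k + 1) (by omega)
    have hwk2 := wpos (k + 2) (by omega)
    have hek := εpos k hk
    have hek1 := hεpos k hk
    have hrec := hwrec k hk
    have hrec1 : w (k + 2) = w (k + 1) / 2 - ε (k + 1) := hwrec (k + 1) (by omega)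
    have hl := hεlt k hk
    have hab : p.1 ≤ p.2 := by linarith
    have e1 : (p.1 + p.2) / 2 - ε k - p.1 = w (k + 1) := by rw [hrec]; linarith
    have e3 : p.2 - ((p.1 + p.2) / 2 + ε k) = w (k + 1) := by rw [hrec]; linarith
    have hm1 : p.1 ≤ (p.1 + p.2) / 2 - ε k := by linarith
    have hm2 : (p.1 + p.2) / 2 - ε k ≤ (p.1 + p.2) / 2 + ε k := by linarith
    have hm3 : (p.1 + p.2) / 2 + ε k ≤ p.2 := by linarith
    constructor
    · -- image of f k
      have p1 : f k '' Set.Icc p.1 ((p.1 + p.2) / 2 - ε k) =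
          Set.Icc (f (k - 1) p.1) (f (k - 1) p.1 + w (k + 2)) := by
        rw [affImage (w (k + 2) / w (k + 1)) (f (k - 1) p.1) _ _ (div_pos hwk2 hwk1) hm1 (f k)
          (fun x hx => hfleft k hk p hp x hx.1 hx.2)]
        congr 1
        rw [e1, div_mul_cancel₀ _ hwk1.ne']
        ring
      have p2 : f k '' Set.Icc ((p.1 + p.2) / 2 - ε k) ((p.1 + p.2) / 2 + ε k) =
          Set.Icc (f (k - 1) p.1 + w (k + 2)) (f (k - 1) p.1 + w (k + 2) + 2 * ε (k + 1)) := by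
        have hg2 : ∀ x ∈ Set.Icc ((p.1 + p.2) / 2 - ε k) ((p.1 + p.2) / 2 + ε k),
            f k x = ε (k + 1) / ε k * (x - ((p.1 + p.2) / 2 - ε k)) +
              (f (k - 1) p.1 + w (k + 2)) := by
          intro x hx
          rcases eq_or_lt_of_le hx.1 with h | h
          · rw [← h, hfleft k hk p hp _ hm1 le_rfl, e1, div_mul_cancel₀ _ hwk1.ne']
            ring
          rcases eq_or_lt_of_le hx.2 with h2 | h2
          · rw [h2, hfright k hk p hp _ le_rfl hm3]
            have : ε (k + 1) / ε k * ((p.1 + p.2) / 2 + ε k - ((p.1 + p.2) / 2 - ε k)) =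
                2 * ε (k + 1) := by
              field_simp
              ring
            rw [this]
            ring
          · rw [hfmid k hk p hp x (abs_lt.mpr ⟨by linarith, by linarith⟩)]
            ring
        rw [affImage (ε (k + 1) / ε k) (f (k - 1) p.1 + w (k + 2)) _ _
          (div_pos hek1 hek) hm2 (f k) hg2]
        congr 1
        have : ε (k + 1) / ε k * ((p.1 + p.2) / 2 + ε k - ((p.1 + p.2) / 2 - ε k)) =
            2 * ε (k + 1) := by
          field_simp
          ring
        rw [this]
        ring
      have p3 : f k '' Set.Icc ((p.1 + p.2) / 2 + ε k) p.2 =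
          Set.Icc (f (k - 1) p.1 + w (k + 2) + 2 * ε (k + 1)) (f (k - 1) p.1 + w (k + 1)) := by
        have hg3 : ∀ x ∈ Set.Icc ((p.1 + p.2) / 2 + ε k) p.2,
            f k x = w (k + 2) / w (k + 1) * (x - ((p.1 + p.2) / 2 + ε k)) +
              (f (k - 1) p.1 + w (k + 2) + 2 * ε (k + 1)) := by
          intro x hx
          rw [hfright k hk p hp x hx.1 hx.2]
          ring
        rw [affImage (w (k + 2) / w (k + 1)) (f (k - 1) p.1 + w (k + 2) + 2 * ε (k + 1)) _ _
          (div_pos hwk2 hwk1) hm3 (f k) hg3]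
        rw [e3, div_mul_cancel₀ _ hwk1.ne',
          show w (k + 2) + (f (k - 1) p.1 + w (k + 2) + 2 * ε (k + 1)) =
            f (k - 1) p.1 + w (k + 1) by linarith]
      have hsplit : Set.Icc p.1 p.2 =
          Set.Icc p.1 ((p.1 + p.2) / 2 - ε k) ∪
            Set.Icc ((p.1 + p.2) / 2 - ε k) ((p.1 + p.2) / 2 + ε k) ∪
            Set.Icc ((p.1 + p.2) / 2 + ε k) p.2 := by
        rw [Set.Icc_union_Icc_eq_Icc hm1 hm2, Set.Icc_union_Icc_eq_Icc (hm1.trans hm2) hm3]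
      rw [hsplit, Set.image_union, Set.image_union, p1, p2, p3,
        Set.Icc_union_Icc_eq_Icc (by linarith) (by linarith),
        Set.Icc_union_Icc_eq_Icc (by linarith) (by linarith)]
    · -- image of f (k-1)
      rw [affImage (w (k + 1) / w k) (f (k - 1) p.1) _ _ (div_pos hwk1 hwk) hab (f (k - 1)) haff]
      congr 1
      rw [hlen, div_mul_cancel₀ _ hwk.ne']
      ring
  -- the image over [0,1] is unchanged at each step
  have step : ∀ k, 1 ≤ k → f k '' Set.Icc 0 1 = f (k - 1) '' Set.Icc 0 1 := by
    intro k hk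
    have hU : (⋃ p ∈ I k, Set.Icc p.1 p.2) ⊆ Set.Icc (0 : ℝ) 1 := by
      intro x hx
      simp only [Set.mem_iUnion, exists_prop] at hx
      obtain ⟨p, hp, hx⟩ := hx
      obtain ⟨h0, h1, _, _⟩ := Inv k hk p hp
      exact ⟨le_trans h0 hx.1, le_trans hx.2 h1⟩
    have hdecomp : Set.Icc (0 : ℝ) 1 =
        (Set.Icc (0 : ℝ) 1 \ (⋃ p ∈ I k, Set.Icc p.1 p.2)) ∪ (⋃ p ∈ I k, Set.Icc p.1 p.2) :=
      (Set.diff_union_of_subset hU).symm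
    rw [hdecomp, Set.image_union, Set.image_union]
    congr 1
    · exact Set.image_congr (fun x hx => hfout k hk x hx)
    · rw [Set.image_iUnion₂, Set.image_iUnion₂]
      apply Set.iUnion_congr
      intro p
      apply Set.iUnion_congr
      intro hp
      rw [(imgA k hk p hp).1, (imgA k hk p hp).2]
  -- endpoints exist in each generation
  have hex0 : ∀ k, 1 ≤ k → ∃ p ∈ I k, p.1 = 0 := by
    intro k hk
    induction k, hk using Nat.le_induction with
    | base => exact ⟨(0, 1), by rw [hI1]; rfl, rfl⟩
    | succ k hk ih =>
      obtain ⟨p, hp, h0⟩ := ih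
      refine ⟨(p.1, (p.1 + p.2) / 2 - ε k), ?_, h0⟩
      rw [hIrec k hk]
      exact Set.mem_biUnion hp (Set.mem_insert _ _)
  have hex1 : ∀ k, 1 ≤ k → ∃ p ∈ I k, p.2 = 1 := by
    intro k hk
    induction k, hk using Nat.le_induction with
    | base => exact ⟨(0, 1), by rw [hI1]; rfl, rfl⟩
    | succ k hk ih =>
      obtain ⟨p, hp, h1⟩ := ih
      refine ⟨((p.1 + p.2) / 2 + ε k, p.2), ?_, h1⟩
      rw [hIrec k hk]
      exact Set.mem_biUnion hp (Set.mem_insert_iff.mpr (Or.inr rfl))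
  -- values at the endpoints are unchanged at each step
  have hv0 : ∀ k, 1 ≤ k → f k 0 = f (k - 1) 0 := by
    intro k hk
    obtain ⟨p, hp, h0⟩ := hex0 k hk
    obtain ⟨_, _, hlen, _⟩ := Inv k hk p hp
    have hek := εpos k hk
    have hl := hεlt k hk
    have h := hfleft k hk p hp p.1 le_rfl (by linarith)
    rw [h0] at h
    rw [h]
    ring
  have hv1 : ∀ k, 1 ≤ k → f k 1 = f (k - 1) 1 := by
    intro k hk
    obtain ⟨p, hp, h1⟩ := hex1 k hk
    obtain ⟨h0p, _, hlen, haff⟩ := Inv k hk p hp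
    have hek := εpos k hk
    have hl := hεlt k hk
    have hwk := wpos k hk
    have hwk1 := wpos (k + 1) (by omega)
    have hle : (p.1 + p.2) / 2 + ε k ≤ p.2 := by linarith
    have hr := hfright k hk p hp p.2 hle le_rfl
    have ha := haff p.2 ⟨by linarith, le_rfl⟩
    rw [h1] at hr ha hlen
    have e : (1 : ℝ) - (p.1 + 1) / 2 - ε k = w (k + 1) := by rw [hwrec k hk]; linarith
    rw [hr, ha, e, hlen, div_mul_cancel₀ _ hwk1.ne', div_mul_cancel₀ _ hwk.ne']
    have h2 : w (k + 2) = w (k + 1) / 2 - ε (k + 1) := hwrec (k + 1) (by omega)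
    linarith
  -- base image
  have F0 : f 0 '' Set.Icc 0 1 = Set.Icc 0 (1 / 3) := by
    have h := affImage (1 / 3) 0 0 1 (by norm_num) (by norm_num) (f 0)
      (fun x _ => by rw [hf0]; ring)
    norm_num at h
    exact h
  -- main induction
  intro k hk
  induction k, hk using Nat.le_induction with
  | base =>
    refine ⟨?_, ?_, ?_⟩
    · have := step 1 le_rfl
      norm_num at this
      rw [this, F0]
    · have := hv0 1 le_rfl
      norm_num at this
      rw [this, hf0]
      norm_num
    · have := hv1 1 le_rfl
      norm_num at this
      rw [this, hf0]
  | succ k hk ih =>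
    obtain ⟨hImg, h0, h1⟩ := ih
    have e : k + 1 - 1 = k := by omega
    refine ⟨?_, ?_, ?_⟩
    · have := step (k + 1) (by omega)
      rw [e] at this
      rw [this, hImg]
    · have := hv0 (k + 1) (by omega)
      rw [e] at this
      rw [this, h0]
    · have := hv1 (k + 1) (by omega)
      rw [e] at this
      rw [this, h1]
end

section
/- For every k ∈ ℕ: (a) if [a,b] ∈ 𝓘_k then [f_{k−1}(a), f_{k−1}(b)] ∈ 𝓘_{k+1}; and (b) if [a,b] ∈ 𝓘_{k+1} then there exists an interval [c,d] ∈ 𝓘_k such that either [a,b] = [f_{k−1}(c), f_{k−1}(d)] or [a,b] = [f_{k−1}(c) + 2/3, f_{k−1}(d) + 2/3]. -/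
open Set MeasureTheory Filter

theorem stmt_14
    (ε w : ℕ → ℝ)
    (hw1 : w 1 = 1) (hε1 : ε 1 = 1 / 6)
    (hwrec : ∀ k, 1 ≤ k → w (k + 1) = w k / 2 - ε k)
    (hεpos : ∀ k, 1 ≤ k → 0 < ε (k + 1))
    (hεgeom : ∀ k, 1 ≤ k → 2 ^ k * ε (k + 1) < 1 / 2 * (1 / 4 ^ k))
    (hεquot : ∀ k, 1 ≤ k → ε (k + 1) / ε k < 1 / 2)
    (hεw : ∀ k, 1 ≤ k → ε (k + 1) < w k / 4 - ε k / 2)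
    (I : ℕ → Set (ℝ × ℝ))
    (hI1 : I 1 = {((0 : ℝ), (1 : ℝ))})
    (hIrec : ∀ k, 1 ≤ k → I (k + 1) =
      ⋃ p ∈ I k, {(p.1, (p.1 + p.2) / 2 - ε k), ((p.1 + p.2) / 2 + ε k, p.2)})
    (f : ℕ → ℝ → ℝ)
    (hf0 : ∀ x, f 0 x = x / 3)
    (hfmaps : ∀ k, Set.MapsTo (f k) (Set.Icc (0 : ℝ) 1) (Set.Icc (0 : ℝ) 1))
    (hfleft : ∀ k, 1 ≤ k → ∀ p ∈ I k, ∀ x : ℝ, p.1 ≤ x → x ≤ (p.1 + p.2) / 2 - ε k →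
      f k x = w (k + 2) / w (k + 1) * (x - p.1) + f (k - 1) p.1)
    (hfmid : ∀ k, 1 ≤ k → ∀ p ∈ I k, ∀ x : ℝ, |x - (p.1 + p.2) / 2| < ε k →
      f k x = ε (k + 1) / ε k * (x - (p.1 + p.2) / 2 + ε k) + f (k - 1) p.1 + w (k + 2))
    (hfright : ∀ k, 1 ≤ k → ∀ p ∈ I k, ∀ x : ℝ, (p.1 + p.2) / 2 + ε k ≤ x → x ≤ p.2 →
      f k x = w (k + 2) / w (k + 1) * (x - (p.1 + p.2) / 2 - ε k) + f (k - 1) p.1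
        + w (k + 2) + 2 * ε (k + 1))
    (hfout : ∀ k, 1 ≤ k → ∀ x ∈ Set.Icc (0 : ℝ) 1 \ (⋃ p ∈ I k, Set.Icc p.1 p.2),
      f k x = f (k - 1) x)
    :
    ∀ k, 1 ≤ k →
      (∀ p ∈ I k, (f (k - 1) p.1, f (k - 1) p.2) ∈ I (k + 1)) ∧
      (∀ p ∈ I (k + 1), ∃ q ∈ I k,
        p = (f (k - 1) q.1, f (k - 1) q.2) ∨
        p = (f (k - 1) q.1 + 2 / 3, f (k - 1) q.2 + 2 / 3)) := by
 -- positivity of ε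
  have hεp : ∀ k, 1 ≤ k → 0 < ε k := by
    intro k hk
    rcases k with _ | _ | m
    · omega
    · rw [hε1]; norm_num
    · exact hεpos (m + 1) (by omega)
  have hwe : ∀ k, 1 ≤ k → 2 * ε k < w k := by
    intro k hk
    rcases k with _ | _ | m
    · omega
    · rw [hε1, hw1]; norm_num
    · have h1 := hεw (m + 1) (by omega)
      have h2 := hwrec (m + 1) (by omega)
      have h3 := hεpos (m + 1) (by omega)
      linarith
  have hwp : ∀ k, 1 ≤ k → 0 < w k := by
    intro k hk
    have h1 := hεp k hk
    have h2 := hwe k hk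
    linarith
  have hlen : ∀ k, 1 ≤ k → ∀ p ∈ I k, p.2 - p.1 = w k := by
    intro k hk
    induction k, hk using Nat.le_induction with
    | base =>
      intro p hp
      rw [hI1, Set.mem_singleton_iff] at hp
      subst hp
      simp [hw1]
    | succ k hk IH =>
      intro p hp
      rw [hIrec k hk] at hp
      simp only [Set.mem_iUnion, Set.mem_insert_iff, Set.mem_singleton_iff] at hp
      obtain ⟨q, hq, hc⟩ := hp
      have hql := IH q hq
      have hwr := hwrec k hk
      rcases hc with h | h <;> subst h <;> simp only [Prod.fst, Prod.snd] <;> linarith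
  have hw21 : ∀ k, 1 ≤ k → w (k + 1) = 2 * w (k + 2) + 2 * ε (k + 1) := by
    intro k hk
    have := hwrec (k + 1) (by omega)
    linarith
  have key : ∀ k, 1 ≤ k → ∀ q ∈ I k,
      f k q.1 = f (k - 1) q.1 ∧
      f k ((q.1 + q.2) / 2 - ε k) = f (k - 1) q.1 + w (k + 2) ∧
      f k ((q.1 + q.2) / 2 + ε k) = f (k - 1) q.1 + w (k + 2) + 2 * ε (k + 1) ∧
      f k q.2 = f (k - 1) q.1 + 2 * w (k + 2) + 2 * ε (k + 1) := by
    intro k hk q hq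
    have hl := hlen k hk q hq
    have he := hεp k hk
    have hwk := hwe k hk
    have hw1p := hwp (k + 1) (by omega)
    have hwr := hwrec k hk
    have h1 : f k q.1 = f (k - 1) q.1 := by
      rw [hfleft k hk q hq q.1 le_rfl (by linarith)]; ring
    have h2 : f k ((q.1 + q.2) / 2 - ε k) = f (k - 1) q.1 + w (k + 2) := by
      rw [hfleft k hk q hq _ (by linarith) le_rfl]
      have hx : (q.1 + q.2) / 2 - ε k - q.1 = w (k + 1) := by rw [hwr]; linarith
      rw [hx, div_mul_cancel₀ _ (ne_of_gt hw1p)]; ring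
    have h3 : f k ((q.1 + q.2) / 2 + ε k)
        = f (k - 1) q.1 + w (k + 2) + 2 * ε (k + 1) := by
      rw [hfright k hk q hq _ le_rfl (by linarith)]
      have hx : (q.1 + q.2) / 2 + ε k - (q.1 + q.2) / 2 - ε k = 0 := by ring
      rw [hx, mul_zero, zero_add]
    have h4 : f k q.2 = f (k - 1) q.1 + 2 * w (k + 2) + 2 * ε (k + 1) := by
      rw [hfright k hk q hq q.2 (by linarith) le_rfl]
      have hx : q.2 - (q.1 + q.2) / 2 - ε k = w (k + 1) := by rw [hwr]; linarith
      rw [hx, div_mul_cancel₀ _ (ne_of_gt hw1p)]; ring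
    exact ⟨h1, h2, h3, h4⟩
  intro k hk
  induction k, hk using Nat.le_induction with
  | base =>
    constructor
    · intro p hp
      rw [hI1, Set.mem_singleton_iff] at hp
      subst hp
      rw [hIrec 1 le_rfl, hI1]
      simp only [Set.mem_iUnion, Set.mem_insert_iff, Set.mem_singleton_iff,
        Set.mem_singleton_iff]
      refine ⟨(0, 1), rfl, Or.inl ?_⟩
      simp only [Prod.mk.injEq]
      norm_num [hf0, hε1]
    · intro p hp
      rw [hIrec 1 le_rfl, hI1] at hp
      simp only [Set.mem_iUnion, Set.mem_insert_iff, Set.mem_singleton_iff] at hp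
      obtain ⟨q, hq, hc⟩ := hp
      subst hq
      refine ⟨(0, 1), by rw [hI1]; rfl, ?_⟩
      rcases hc with h | h <;> subst h
      · left; simp only [Prod.mk.injEq]; norm_num [hf0, hε1]
      · right; simp only [Prod.mk.injEq]; norm_num [hf0, hε1]
  | succ k hk IH =>
    obtain ⟨IHa, IHb⟩ := IH
    have hk1 : 1 ≤ k + 1 := by omega
    constructor
    · intro p hp
      rw [hIrec k hk] at hp
      simp only [Set.mem_iUnion, Set.mem_insert_iff, Set.mem_singleton_iff] at hp
      obtain ⟨q, hq, hc⟩ := hp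
      obtain ⟨h1, h2, h3, h4⟩ := key k hk q hq
      have hp' := IHa q hq
      have hlp' := hlen (k + 1) hk1 _ hp'
      simp only at hlp'
      have hw2 := hw21 k hk
      rw [hIrec (k + 1) hk1]
      simp only [Set.mem_iUnion, Set.mem_insert_iff, Set.mem_singleton_iff]
      refine ⟨(f (k - 1) q.1, f (k - 1) q.2), hp', ?_⟩
      rcases hc with h | h <;> subst h
      · left
        simp only [Nat.add_sub_cancel, Prod.mk.injEq]
        exact ⟨h1, by linarith⟩
      · right
        simp only [Nat.add_sub_cancel, Prod.mk.injEq]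
        exact ⟨by linarith, by linarith⟩
    · intro p hp
      rw [hIrec (k + 1) hk1] at hp
      simp only [Set.mem_iUnion, Set.mem_insert_iff, Set.mem_singleton_iff] at hp
      obtain ⟨p', hp', hc⟩ := hp
      obtain ⟨q, hq, hqc⟩ := IHb p' hp'
      obtain ⟨h1, h2, h3, h4⟩ := key k hk q hq
      have hp'' := IHa q hq
      have hlp' := hlen (k + 1) hk1 _ hp''
      simp only at hlp'
      have hw2 := hw21 k hk
      have hmemL : (q.1, (q.1 + q.2) / 2 - ε k) ∈ I (k + 1) := by
        rw [hIrec k hk]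
        simp only [Set.mem_iUnion, Set.mem_insert_iff, Set.mem_singleton_iff]
        exact ⟨q, hq, Or.inl rfl⟩
      have hmemR : ((q.1 + q.2) / 2 + ε k, q.2) ∈ I (k + 1) := by
        rw [hIrec k hk]
        simp only [Set.mem_iUnion, Set.mem_insert_iff, Set.mem_singleton_iff]
        exact ⟨q, hq, Or.inr rfl⟩
      rcases hqc with h' | h' <;> subst h' <;> simp only at hc <;>
          rcases hc with h | h <;> subst h
      · exact ⟨_, hmemL, Or.inl (by
          simp only [Nat.add_sub_cancel, Prod.mk.injEq]
          exact ⟨h1.symm, by linarith⟩)⟩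
      · exact ⟨_, hmemR, Or.inl (by
          simp only [Nat.add_sub_cancel, Prod.mk.injEq]
          exact ⟨by linarith, by linarith⟩)⟩
      · exact ⟨_, hmemL, Or.inr (by
          simp only [Nat.add_sub_cancel, Prod.mk.injEq]
          exact ⟨by linarith, by linarith⟩)⟩
      · exact ⟨_, hmemR, Or.inr (by
          simp only [Nat.add_sub_cancel, Prod.mk.injEq]
          exact ⟨by linarith, by linarith⟩)⟩
end

section
/- For every k ∈ ℕ, sup_{x∈[0,1]} |f_k(x) − f_{k−1}(x)| ≤ 1/2^k; consequently the sequence (f_k) is a Cauchy sequence with respect to the supremum norm and converges uniformly on [0,1]. -/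
open Set MeasureTheory Filter

theorem stmt_15
    (ε w : ℕ → ℝ)
    (hw1 : w 1 = 1) (hε1 : ε 1 = 1 / 6)
    (hwrec : ∀ k, 1 ≤ k → w (k + 1) = w k / 2 - ε k)
    (hεpos : ∀ k, 1 ≤ k → 0 < ε (k + 1))
    (hεgeom : ∀ k, 1 ≤ k → 2 ^ k * ε (k + 1) < 1 / 2 * (1 / 4 ^ k))
    (hεquot : ∀ k, 1 ≤ k → ε (k + 1) / ε k < 1 / 2)
    (hεw : ∀ k, 1 ≤ k → ε (k + 1) < w k / 4 - ε k / 2)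
    (I : ℕ → Set (ℝ × ℝ))
    (hI1 : I 1 = {((0 : ℝ), (1 : ℝ))})
    (hIrec : ∀ k, 1 ≤ k → I (k + 1) =
      ⋃ p ∈ I k, {(p.1, (p.1 + p.2) / 2 - ε k), ((p.1 + p.2) / 2 + ε k, p.2)})
    (f : ℕ → ℝ → ℝ)
    (hf0 : ∀ x, f 0 x = x / 3)
    (hfmaps : ∀ k, Set.MapsTo (f k) (Set.Icc (0 : ℝ) 1) (Set.Icc (0 : ℝ) 1))
    (hfleft : ∀ k, 1 ≤ k → ∀ p ∈ I k, ∀ x : ℝ, p.1 ≤ x → x ≤ (p.1 + p.2) / 2 - ε k →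
      f k x = w (k + 2) / w (k + 1) * (x - p.1) + f (k - 1) p.1)
    (hfmid : ∀ k, 1 ≤ k → ∀ p ∈ I k, ∀ x : ℝ, |x - (p.1 + p.2) / 2| < ε k →
      f k x = ε (k + 1) / ε k * (x - (p.1 + p.2) / 2 + ε k) + f (k - 1) p.1 + w (k + 2))
    (hfright : ∀ k, 1 ≤ k → ∀ p ∈ I k, ∀ x : ℝ, (p.1 + p.2) / 2 + ε k ≤ x → x ≤ p.2 →
      f k x = w (k + 2) / w (k + 1) * (x - (p.1 + p.2) / 2 - ε k) + f (k - 1) p.1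
        + w (k + 2) + 2 * ε (k + 1))
    (hfout : ∀ k, 1 ≤ k → ∀ x ∈ Set.Icc (0 : ℝ) 1 \ (⋃ p ∈ I k, Set.Icc p.1 p.2),
      f k x = f (k - 1) x)
    :
    (∀ k, 1 ≤ k → ∀ x ∈ Set.Icc (0 : ℝ) 1, |f k x - f (k - 1) x| ≤ 1 / 2 ^ k) ∧
    (∀ e : ℝ, 0 < e → ∃ N : ℕ, ∀ m ≥ N, ∀ n ≥ N, ∀ x ∈ Set.Icc (0 : ℝ) 1,
      |f m x - f n x| ≤ e) ∧
    ∃ F : ℝ → ℝ, TendstoUniformlyOn (fun k => f k) F Filter.atTop (Set.Icc (0 : ℝ) 1) := by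
  classical
  -- basic positivity facts
  have hεp : ∀ k, 1 ≤ k → 0 < ε k := by
    intro k hk
    match k, hk with
    | 1, _ => rw [hε1]; norm_num
    | (n+2), _ => exact hεpos (n+1) (by omega)
  have hwε : ∀ k, 1 ≤ k → 2 * ε k < w k := by
    intro k hk
    have h1 := hεw k hk
    have h2 := hεpos k hk
    linarith
  have hwpos : ∀ k, 1 ≤ k → 0 < w k := by
    intro k hk
    have := hwε k hk
    have := hεp k hk
    linarith
  have hεhalf : ∀ k, 1 ≤ k → ε (k + 1) < ε k / 2 := by
    intro k hk
    have h := hεquot k hk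
    have hp := hεp k hk
    rw [div_lt_iff₀ hp] at h
    linarith
  have hεb : ∀ k, 1 ≤ k → ε k ≤ 1 / 3 * (1 / 2 : ℝ) ^ k := by
    intro k hk
    induction k, hk using Nat.le_induction with
    | base => rw [hε1]; norm_num
    | succ n hn ih =>
      have h := hεhalf n hn
      rw [pow_succ]
      linarith
  -- structural lemma about the intervals
  have hstruct : ∀ k, 1 ≤ k → ∀ p ∈ I k, 0 ≤ p.1 ∧ p.2 ≤ 1 ∧ p.2 - p.1 = w k ∧
      ∀ x : ℝ, p.1 ≤ x → x ≤ p.2 →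
        f (k - 1) x = w (k + 1) / w k * (x - p.1) + f (k - 1) p.1 := by
    intro k hk
    induction k, hk using Nat.le_induction with
    | base =>
      intro p hp
      rw [hI1, Set.mem_singleton_iff] at hp
      subst hp
      have hw2 : w 2 = 1 / 3 := by
        have h := hwrec 1 le_rfl
        rw [hw1, hε1] at h
        rw [h]; norm_num
      refine ⟨le_refl (0:ℝ), le_refl (1:ℝ), ?_, ?_⟩
      · show (1:ℝ) - 0 = w 1
        rw [hw1]; norm_num
      · intro x hx1 hx2
        show f 0 x = w 2 / w 1 * (x - 0) + f 0 0
        rw [hf0 x, hf0 0, hw2, hw1]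
        ring
    | succ n hn ih =>
      intro p hp
      rw [hIrec n hn] at hp
      simp only [Set.mem_iUnion, Set.mem_insert_iff, Set.mem_singleton_iff] at hp
      obtain ⟨q, hq, hpq⟩ := hp
      obtain ⟨a, b⟩ := q
      obtain ⟨ha0, hb1, hlen, _⟩ := ih (a, b) hq
      simp only at ha0 hb1 hlen
      have hwn := hwpos n hn
      have hεn := hεp n hn
      have hεwn := hwε n hn
      have hwrecn := hwrec n hn
      rcases hpq with h | h
      · subst h
        refine ⟨ha0, ?_, ?_, ?_⟩
        · show (a + b) / 2 - ε n ≤ 1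
          linarith
        · show (a + b) / 2 - ε n - a = w (n + 1)
          rw [hwrecn]; linarith
        · intro x hx1 hx2
          simp only at hx1 hx2
          have hfx := hfleft n hn (a, b) hq x hx1 hx2
          have hfa := hfleft n hn (a, b) hq a le_rfl (by show a ≤ (a + b) / 2 - ε n; linarith)
          simp only at hfx hfa
          show f n x = w (n + 2) / w (n + 1) * (x - a) + f n a
          rw [hfx, hfa]
          ring
      · subst h
        refine ⟨?_, hb1, ?_, ?_⟩
        · show (0:ℝ) ≤ (a + b) / 2 + ε n
          linarith
        · show b - ((a + b) / 2 + ε n) = w (n + 1)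
          rw [hwrecn]; linarith
        · intro x hx1 hx2
          simp only at hx1 hx2
          have hfx := hfright n hn (a, b) hq x hx1 hx2
          have hfa := hfright n hn (a, b) hq ((a + b) / 2 + ε n) le_rfl
            (by show (a + b) / 2 + ε n ≤ b; linarith)
          simp only at hfx hfa
          show f n x = w (n + 2) / w (n + 1) * (x - ((a + b) / 2 + ε n))
            + f n ((a + b) / 2 + ε n)
          rw [hfx, hfa]
          ring
  -- the main pointwise bound
  have hbound : ∀ k, 1 ≤ k → ∀ x ∈ Set.Icc (0 : ℝ) 1, |f k x - f (k - 1) x| ≤ 1 / 2 ^ k := by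
    intro k hk x hx
    have hwk := hwpos k hk
    have hεk := hεp k hk
    have hεk1 := hεpos k hk
    have hεh := hεhalf k hk
    have hwr : w (k + 1) = w k / 2 - ε k := hwrec k hk
    have hwr1 : w (k + 2) = w (k + 1) / 2 - ε (k + 1) := hwrec (k + 1) (by omega)
    have hW1 : (0:ℝ) < w k / 2 - ε k := by linarith [hwε k hk]
    have hwk1 : (0:ℝ) < w (k + 1) := by rw [hwr]; exact hW1
    have hfin : ε k / 2 ≤ 1 / 2 ^ k := by
      have h1 := hεb k hk
      have h2 : (1 / 2 : ℝ) ^ k = 1 / 2 ^ k := by rw [div_pow, one_pow]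
      have h3 : (0:ℝ) < (1 / 2 : ℝ) ^ k := by positivity
      linarith
    suffices hm : |f k x - f (k - 1) x| ≤ ε k / 2 from hm.trans hfin
    by_cases hcase : ∃ p ∈ I k, x ∈ Set.Icc p.1 p.2
    · obtain ⟨p, hp, hxp⟩ := hcase
      obtain ⟨a, b⟩ := p
      obtain ⟨ha0, hb1, hlen, haff⟩ := hstruct k hk (a, b) hp
      simp only at ha0 hb1 hlen haff
      have hb' : b = a + w k := by linarith
      subst hb'
      have hxa : a ≤ x := hxp.1
      have hxb : x ≤ a + w k := hxp.2
      have hwkne : w k ≠ 0 := ne_of_gt hwk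
      have hwk1ne : w (k + 1) ≠ 0 := ne_of_gt hwk1
      have hεkne : ε k ≠ 0 := ne_of_gt hεk
      have hBB : |w (k + 1) * ε k - ε (k + 1) * w k| ≤ w k * ε k / 2 := by
        have h1 : (0:ℝ) ≤ (w k / 2 - ε k) * ε k := mul_nonneg hW1.le hεk.le
        have h2 : (0:ℝ) ≤ (ε k / 2 - ε (k + 1)) * w k := mul_nonneg (by linarith) hwk.le
        have h3 : (0:ℝ) ≤ ε (k + 1) * w k := mul_nonneg hεk1.le hwk.le
        have h4 : (0:ℝ) ≤ ε k * ε k := mul_nonneg hεk.le hεk.le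
        rw [hwr, abs_le]
        constructor <;> nlinarith
      have hcore : ∀ u M : ℝ, 0 < M → |u| * (w k * ε k / 2) ≤ ε k / 2 * M →
          (f k x - f (k - 1) x) * M = u * (w (k + 1) * ε k - ε (k + 1) * w k) →
          |f k x - f (k - 1) x| ≤ ε k / 2 := by
        intro u M hM hu hkey
        have h1 : |f k x - f (k - 1) x| * M ≤ ε k / 2 * M := by
          calc |f k x - f (k - 1) x| * M = |(f k x - f (k - 1) x) * M| := by
                rw [abs_mul, abs_of_pos hM]
            _ = |u| * |w (k + 1) * ε k - ε (k + 1) * w k| := by rw [hkey, abs_mul]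
            _ ≤ |u| * (w k * ε k / 2) := mul_le_mul_of_nonneg_left hBB (abs_nonneg u)
            _ ≤ ε k / 2 * M := hu
        exact le_of_mul_le_mul_right h1 hM
      have hMpos : (0:ℝ) < w (k + 1) * w k := mul_pos hwk1 hwk
      have hA2 : (f (k - 1) x - f (k - 1) a) * w k = w (k + 1) * (x - a) := by
        rw [haff x hxa hxb]
        field_simp
        ring
      rcases le_or_gt x ((a + (a + w k)) / 2 - ε k) with hle | hgt
      · -- left piece
        have hfx := hfleft k hk (a, a + w k) hp x hxa hle
        simp only at hfx
        have hA1 : (f k x - f (k - 1) a) * w (k + 1) = w (k + 2) * (x - a) := by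
          rw [hfx]; field_simp; ring
        refine hcore (x - a) (w (k + 1) * w k) hMpos ?_ ?_
        · calc |x - a| * (w k * ε k / 2)
              ≤ (w k / 2 - ε k) * (w k * ε k / 2) := by
                apply mul_le_mul_of_nonneg_right _ (by positivity)
                rw [abs_le]; constructor <;> linarith
            _ = ε k / 2 * (w (k + 1) * w k) := by rw [hwr]; ring
        · linear_combination w k * hA1 - w (k + 1) * hA2 + (x - a) * w k * hwr1
            + (a - x) * w (k + 1) * hwr
      rcases le_or_gt ((a + (a + w k)) / 2 + ε k) x with hge | hlt
      · -- right piece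
        have hfx := hfright k hk (a, a + w k) hp x hge hxb
        simp only at hfx
        have hA1 : (f k x - f (k - 1) a - w (k + 2) - 2 * ε (k + 1)) * w (k + 1)
            = w (k + 2) * (x - (a + (a + w k)) / 2 - ε k) := by
          rw [hfx]; field_simp; ring
        refine hcore (x - (a + w k)) (w (k + 1) * w k) hMpos ?_ ?_
        · calc |x - (a + w k)| * (w k * ε k / 2)
              ≤ (w k / 2 - ε k) * (w k * ε k / 2) := by
                apply mul_le_mul_of_nonneg_right _ (by positivity)
                rw [abs_le]; constructor <;> linarith
            _ = ε k / 2 * (w (k + 1) * w k) := by rw [hwr]; ring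
        · linear_combination w k * hA1 - w (k + 1) * hA2
            + (w k * (x - a - ε k + w (k + 1) - w k / 2)) * hwr1
            + (w (k + 1) * (a - x) + w k * ε (k + 1) + w k * w (k + 1) / 2) * hwr
      · -- middle piece
        have hfx := hfmid k hk (a, a + w k) hp x (by
          show |x - (a + (a + w k)) / 2| < ε k
          rw [abs_lt]
          constructor <;> linarith)
        simp only at hfx
        have hA1 : (f k x - f (k - 1) a - w (k + 2)) * ε k
            = ε (k + 1) * (x - (a + (a + w k)) / 2 + ε k) := by
          rw [hfx]; field_simp; ring
        refine hcore ((a + (a + w k)) / 2 - x) (ε k * w k) (mul_pos hεk hwk) ?_ ?_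
        · calc |(a + (a + w k)) / 2 - x| * (w k * ε k / 2)
              ≤ ε k * (w k * ε k / 2) := by
                apply mul_le_mul_of_nonneg_right _ (by positivity)
                rw [abs_le]; constructor <;> linarith
            _ = ε k / 2 * (ε k * w k) := by ring
        · linear_combination w k * hA1 - ε k * hA2 + (w k * ε k) * hwr1
    · -- outside all intervals
      have hx' : x ∈ Set.Icc (0:ℝ) 1 \ ⋃ p ∈ I k, Set.Icc p.1 p.2 := by
        refine ⟨hx, ?_⟩
        intro hmem
        simp only [Set.mem_iUnion] at hmem
        obtain ⟨p, hp, hxp⟩ := hmem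
        exact hcase ⟨p, hp, hxp⟩
      rw [hfout k hk x hx', sub_self, abs_zero]
      linarith
  -- telescoping estimates
  have hstep : ∀ j : ℕ, ∀ x ∈ Set.Icc (0:ℝ) 1, |f (j + 1) x - f j x| ≤ (1 / 2 : ℝ) ^ (j + 1) := by
    intro j x hx
    have h := hbound (j + 1) (by omega) x hx
    simp only [Nat.add_sub_cancel] at h
    rw [div_pow, one_pow]
    exact h
  have htel : ∀ n m : ℕ, n ≤ m → ∀ x ∈ Set.Icc (0:ℝ) 1,
      |f m x - f n x| ≤ (1 / 2 : ℝ) ^ n - (1 / 2 : ℝ) ^ m := by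
    intro n m hnm
    induction m, hnm using Nat.le_induction with
    | base => intro x hx; simp
    | succ m hm ih =>
      intro x hx
      have h1 := hstep m x hx
      have h2 := ih x hx
      have hpow : (1 / 2 : ℝ) ^ (m + 1) = (1 / 2 : ℝ) ^ m * (1 / 2) := pow_succ _ _
      have h3 := abs_sub_le (f (m + 1) x) (f m x) (f n x)
      linarith
  have hcauchy : ∀ e : ℝ, 0 < e → ∃ N : ℕ, ∀ m ≥ N, ∀ n ≥ N, ∀ x ∈ Set.Icc (0:ℝ) 1,
      |f m x - f n x| ≤ e := by
    intro e he
    obtain ⟨N, hN⟩ := exists_pow_lt_of_lt_one he (by norm_num : (1 / 2 : ℝ) < 1)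
    refine ⟨N, ?_⟩
    have hp : ∀ i j : ℕ, N ≤ i → i ≤ j → ∀ x ∈ Set.Icc (0:ℝ) 1, |f j x - f i x| ≤ e := by
      intro i j hi hij x hx
      have h := htel i j hij x hx
      have h2 : (1 / 2 : ℝ) ^ i ≤ (1 / 2 : ℝ) ^ N :=
        pow_le_pow_of_le_one (by norm_num) (by norm_num) hi
      have h3 : (0:ℝ) ≤ (1 / 2 : ℝ) ^ j := by positivity
      linarith
    intro m hm n hn x hx
    rcases le_total n m with h | h
    · exact hp n m hn h x hx
    · rw [abs_sub_comm]; exact hp m n hm h x hx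
  refine ⟨hbound, hcauchy, ?_⟩
  have hUC : UniformCauchySeqOn (fun k => f k) atTop (Set.Icc (0:ℝ) 1) := by
    rw [Metric.uniformCauchySeqOn_iff]
    intro e he
    obtain ⟨N, hN⟩ := hcauchy (e / 2) (by linarith)
    exact ⟨N, fun m hm n hn x hx =>
      lt_of_le_of_lt (by simpa [Real.dist_eq] using hN m hm n hn x hx) (by linarith)⟩
  have hptlim : ∀ x ∈ Set.Icc (0:ℝ) 1, ∃ L, Tendsto (fun k => f k x) atTop (nhds L) := by
    intro x hx
    have hc : CauchySeq (fun k => f k x) := by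
      rw [Metric.cauchySeq_iff]
      intro e he
      obtain ⟨N, hN⟩ := hcauchy (e / 2) (by linarith)
      exact ⟨N, fun m hm n hn =>
        lt_of_le_of_lt (by simpa [Real.dist_eq] using hN m hm n hn x hx) (by linarith)⟩
    exact cauchySeq_tendsto_of_complete hc
  refine ⟨fun x => if hx : x ∈ Set.Icc (0:ℝ) 1 then (hptlim x hx).choose else 0,
    hUC.tendstoUniformlyOn_of_tendsto ?_⟩
  intro x hx
  have hFx : (if hx' : x ∈ Set.Icc (0:ℝ) 1 then (hptlim x hx').choose else 0)
      = (hptlim x hx).choose := dif_pos hx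
  rw [hFx]
  exact (hptlim x hx).choose_spec
end

section
/- The pointwise limit f(x) = lim_{k→∞} f_k(x) defines a function f : [0,1] → [0,1] that is strictly increasing and satisfies |f(x) − f(y)| ≤ (1/2)|x − y| for all x, y ∈ [0,1]; in particular f is a contraction. -/
open Set MeasureTheory Filter

set_option maxHeartbeats 4000000 in
theorem stmt_16
    (ε w : ℕ → ℝ)
    (hw1 : w 1 = 1) (hε1 : ε 1 = 1 / 6)
    (hwrec : ∀ k, 1 ≤ k → w (k + 1) = w k / 2 - ε k)
    (hεpos : ∀ k, 1 ≤ k → 0 < ε (k + 1))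
    (hεgeom : ∀ k, 1 ≤ k → 2 ^ k * ε (k + 1) < 1 / 2 * (1 / 4 ^ k))
    (hεquot : ∀ k, 1 ≤ k → ε (k + 1) / ε k < 1 / 2)
    (hεw : ∀ k, 1 ≤ k → ε (k + 1) < w k / 4 - ε k / 2)
    (I : ℕ → Set (ℝ × ℝ))
    (hI1 : I 1 = {((0 : ℝ), (1 : ℝ))})
    (hIrec : ∀ k, 1 ≤ k → I (k + 1) =
      ⋃ p ∈ I k, {(p.1, (p.1 + p.2) / 2 - ε k), ((p.1 + p.2) / 2 + ε k, p.2)})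
    (f : ℕ → ℝ → ℝ)
    (hf0 : ∀ x, f 0 x = x / 3)
    (hfmaps : ∀ k, Set.MapsTo (f k) (Set.Icc (0 : ℝ) 1) (Set.Icc (0 : ℝ) 1))
    (hfleft : ∀ k, 1 ≤ k → ∀ p ∈ I k, ∀ x : ℝ, p.1 ≤ x → x ≤ (p.1 + p.2) / 2 - ε k →
      f k x = w (k + 2) / w (k + 1) * (x - p.1) + f (k - 1) p.1)
    (hfmid : ∀ k, 1 ≤ k → ∀ p ∈ I k, ∀ x : ℝ, |x - (p.1 + p.2) / 2| < ε k →
      f k x = ε (k + 1) / ε k * (x - (p.1 + p.2) / 2 + ε k) + f (k - 1) p.1 + w (k + 2))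
    (hfright : ∀ k, 1 ≤ k → ∀ p ∈ I k, ∀ x : ℝ, (p.1 + p.2) / 2 + ε k ≤ x → x ≤ p.2 →
      f k x = w (k + 2) / w (k + 1) * (x - (p.1 + p.2) / 2 - ε k) + f (k - 1) p.1
        + w (k + 2) + 2 * ε (k + 1))
    (hfout : ∀ k, 1 ≤ k → ∀ x ∈ Set.Icc (0 : ℝ) 1 \ (⋃ p ∈ I k, Set.Icc p.1 p.2),
      f k x = f (k - 1) x)
    (F : ℝ → ℝ)
    (hFlim : ∀ x ∈ Set.Icc (0 : ℝ) 1, Filter.Tendsto (fun k => f k x) Filter.atTop (nhds (F x)))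
    :
    Set.MapsTo F (Set.Icc (0 : ℝ) 1) (Set.Icc (0 : ℝ) 1) ∧
    StrictMonoOn F (Set.Icc (0 : ℝ) 1) ∧
    ∀ x ∈ Set.Icc (0 : ℝ) 1, ∀ y ∈ Set.Icc (0 : ℝ) 1,
      |F x - F y| ≤ 1 / 2 * |x - y| := by
  -- ============ scalar facts ============
  have hεp : ∀ k, 1 ≤ k → 0 < ε k := by
    intro k hk
    rcases k with _ | k
    · omega
    · rcases k with _ | m
      · norm_num [hε1]
      · exact hεpos (m + 1) (by omega)
  have hwε : ∀ k, 1 ≤ k → 2 * ε k < w k := by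
    intro k hk
    have h1 := hεw k hk
    have h2 := hεpos k hk
    linarith
  have hwp : ∀ k, 1 ≤ k → 0 < w k := by
    intro k hk; have := hwε k hk; have := hεp k hk; linarith
  have hσ : ∀ k, 1 ≤ k → 0 < w (k + 2) / w (k + 1) ∧ w (k + 2) / w (k + 1) < 1 / 2 := by
    intro k hk
    have hk1 : 1 ≤ k + 1 := Nat.le_add_left 1 k
    have hw1p := hwp (k + 1) hk1
    have hw2p : 0 < w (k + 2) := hwp (k + 2) (Nat.le_add_left 1 (k + 1))
    have hrec : w (k + 1 + 1) = w (k + 1) / 2 - ε (k + 1) := hwrec (k + 1) hk1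
    have hεp1 := hεp (k + 1) hk1
    constructor
    · positivity
    · rw [div_lt_iff₀ hw1p]
      have : w (k + 2) = w (k + 1) / 2 - ε (k + 1) := by simpa using hrec
      linarith
  have hτ : ∀ k, 1 ≤ k → 0 < ε (k + 1) / ε k ∧ ε (k + 1) / ε k < 1 / 2 := by
    intro k hk
    refine ⟨div_pos (hεpos k hk) (hεp k hk), hεquot k hk⟩
  -- ============ membership in I (k+1) ============
  have memI : ∀ k, 1 ≤ k → ∀ p : ℝ × ℝ, p ∈ I (k + 1) ↔
      ∃ q ∈ I k, p = (q.1, (q.1 + q.2) / 2 - ε k) ∨ p = ((q.1 + q.2) / 2 + ε k, q.2) := by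
    intro k hk p
    rw [hIrec k hk]
    simp [Set.mem_iUnion]
  -- ============ geometry ============
  have geom : ∀ k, 1 ≤ k → ∀ p ∈ I k, 0 ≤ p.1 ∧ p.2 ≤ 1 ∧ p.2 - p.1 = w k := by
    intro k hk
    induction k with
    | zero => omega
    | succ n ih =>
      rcases Nat.eq_zero_or_pos n with rfl | hn
      · intro p hp
        rw [hI1] at hp
        rw [Set.mem_singleton_iff] at hp
        subst hp
        simp [hw1]
      · intro p hp
        rcases (memI n hn p).1 hp with ⟨q, hq, hcase⟩
        obtain ⟨hq1, hq2, hqw⟩ := ih hn q hq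
        have hεn := hεp n hn
        have hwn := hwε n hn
        have hrec := hwrec n hn
        rcases hcase with rfl | rfl <;> simp only [Prod.fst, Prod.snd] <;>
          refine ⟨by linarith, by linarith, by linarith⟩
  have hIcc : ∀ k, 1 ≤ k → ∀ p ∈ I k, p.1 ∈ Set.Icc (0:ℝ) 1 ∧ p.2 ∈ Set.Icc (0:ℝ) 1 := by
    intro k hk p hp
    obtain ⟨h1, h2, h3⟩ := geom k hk p hp
    have := hwp k hk
    constructor <;> constructor <;> linarith
  -- ============ disjointness ============
  -- each child is inside its parent
  have sub : ∀ k, 1 ≤ k → ∀ p ∈ I (k + 1), ∃ P ∈ I k, P.1 ≤ p.1 ∧ p.2 ≤ P.2 := by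
    intro k hk p hp
    rcases (memI k hk p).1 hp with ⟨P, hP, hc⟩
    refine ⟨P, hP, ?_⟩
    obtain ⟨h1, h2, h3⟩ := geom k hk P hP
    have hε := hεp k hk
    have hw := hwε k hk
    rcases hc with rfl | rfl <;> constructor <;> simp <;> linarith
  have disj : ∀ k, 1 ≤ k → ∀ p ∈ I k, ∀ q ∈ I k, p ≠ q → p.2 < q.1 ∨ q.2 < p.1 := by
    intro k
    induction k with
    | zero => omega
    | succ n ih =>
      intro _ p hp q hq hne
      rcases Nat.eq_zero_or_pos n with rfl | hn
      · rw [hI1, Set.mem_singleton_iff] at hp hq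
        exact absurd (hp.trans hq.symm) hne
      · rcases (memI n hn p).1 hp with ⟨P, hP, hPc⟩
        rcases (memI n hn q).1 hq with ⟨Q, hQ, hQc⟩
        by_cases hPQ : P = Q
        · subst hPQ
          have hε := hεp n hn
          rcases hPc with rfl | rfl <;> rcases hQc with rfl | rfl
          · exact absurd rfl hne
          · left; simp; linarith
          · right; simp; linarith
          · exact absurd rfl hne
        · have hbp : P.1 ≤ p.1 ∧ p.2 ≤ P.2 := by
            obtain ⟨h1, h2, h3⟩ := geom n hn P hP
            have hε := hεp n hn
            have hw := hwε n hn
            rcases hPc with rfl | rfl <;> constructor <;> simp <;> linarith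
          have hbq : Q.1 ≤ q.1 ∧ q.2 ≤ Q.2 := by
            obtain ⟨h1, h2, h3⟩ := geom n hn Q hQ
            have hε := hεp n hn
            have hw := hwε n hn
            rcases hQc with rfl | rfl <;> constructor <;> simp <;> linarith
          rcases ih hn P hP Q hQ hPQ with h | h
          · left; linarith [hbp.2, hbq.1]
          · right; linarith [hbq.2, hbp.1]
  -- ============ containment ============
  have cont : ∀ m, 1 ≤ m → ∀ j, m ≤ j → ∀ p ∈ I j, ∃ q ∈ I m, q.1 ≤ p.1 ∧ p.2 ≤ q.2 := by
    intro m hm j hj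
    induction j, hj using Nat.le_induction with
    | base => intro p hp; exact ⟨p, hp, le_rfl, le_rfl⟩
    | succ j hj ih =>
      intro p hp
      obtain ⟨P, hP, h1, h2⟩ := sub j (hm.trans hj) p hp
      obtain ⟨q, hq, h3, h4⟩ := ih P hP
      exact ⟨q, hq, h3.trans h1, h2.trans h4⟩
  -- ============ value computations ============
  have Vleft : ∀ k, 1 ≤ k → ∀ p ∈ I k, f k p.1 = f (k - 1) p.1 := by
    intro k hk p hp
    have hba := (geom k hk p hp).2.2
    have hε := hεp k hk
    have hw := hwε k hk
    rw [hfleft k hk p hp p.1 le_rfl (by linarith)]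
    ring
  have Vm1 : ∀ k, 1 ≤ k → ∀ p ∈ I k,
      f k ((p.1 + p.2) / 2 - ε k) = f (k - 1) p.1 + w (k + 2) := by
    intro k hk p hp
    have hba := (geom k hk p hp).2.2
    have hε := hεp k hk
    have hw := hwε k hk
    have hw1p := hwp (k + 1) (by omega)
    rw [hfleft k hk p hp _ (by linarith) le_rfl]
    rw [show (p.1 + p.2) / 2 - ε k - p.1 = w (k + 1) from by rw [hwrec k hk]; linarith]
    rw [div_mul_cancel₀ _ (ne_of_gt hw1p)]
    ring
  have Vm2 : ∀ k, 1 ≤ k → ∀ p ∈ I k,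
      f k ((p.1 + p.2) / 2 + ε k) = f (k - 1) p.1 + w (k + 2) + 2 * ε (k + 1) := by
    intro k hk p hp
    have hba := (geom k hk p hp).2.2
    have hε := hεp k hk
    have hw := hwε k hk
    rw [hfright k hk p hp _ le_rfl (by linarith)]
    ring
  have Vright : ∀ k, 1 ≤ k → ∀ p ∈ I k, f k p.2 = f (k - 1) p.1 + w (k + 1) := by
    intro k hk p hp
    have hba := (geom k hk p hp).2.2
    have hε := hεp k hk
    have hw := hwε k hk
    have hw1p := hwp (k + 1) (by omega)
    have hr2 : w (k + 2) = w (k + 1) / 2 - ε (k + 1) := by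
      simpa using hwrec (k + 1) (by omega)
    rw [hfright k hk p hp p.2 (by linarith) le_rfl]
    rw [show p.2 - (p.1 + p.2) / 2 - ε k = w (k + 1) from by rw [hwrec k hk]; linarith]
    rw [div_mul_cancel₀ _ (ne_of_gt hw1p)]
    linarith
  -- ============ endpoint persistence ============
  have epl : ∀ k, 1 ≤ k → ∀ p ∈ I k, ∀ j, k ≤ j → ∃ b', ((p.1, b') : ℝ × ℝ) ∈ I j := by
    intro k hk p hp j hj
    induction j, hj using Nat.le_induction with
    | base => exact ⟨p.2, hp⟩
    | succ j hj ih =>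
      obtain ⟨b', hb'⟩ := ih
      refine ⟨(p.1 + b') / 2 - ε j, ?_⟩
      rw [memI j (hk.trans hj)]
      exact ⟨(p.1, b'), hb', Or.inl rfl⟩
  have epr : ∀ k, 1 ≤ k → ∀ p ∈ I k, ∀ j, k ≤ j → ∃ a', ((a', p.2) : ℝ × ℝ) ∈ I j := by
    intro k hk p hp j hj
    induction j, hj using Nat.le_induction with
    | base => exact ⟨p.1, hp⟩
    | succ j hj ih =>
      obtain ⟨a', ha'⟩ := ih
      refine ⟨(a' + p.2) / 2 + ε j, ?_⟩
      rw [memI j (hk.trans hj)]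
      exact ⟨(a', p.2), ha', Or.inr rfl⟩
  -- ============ endpoint stability ============
  have S : ∀ j : ℕ, ∀ k, 1 ≤ k → k ≤ j + 1 → ∀ p ∈ I k,
      f j p.1 = f (k - 1) p.1 ∧ f j p.2 = f (k - 1) p.2 ∧
      f (k - 1) p.2 - f (k - 1) p.1 = w (k + 1) := by
    intro j
    induction j with
    | zero =>
      intro k hk hk1 p hp
      interval_cases k
      rw [hI1, Set.mem_singleton_iff] at hp
      subst hp
      have h2 : w 2 = w 1 / 2 - ε 1 := by simpa using hwrec 1 le_rfl
      rw [hw1, hε1] at h2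
      simp only [hf0]
      norm_num [h2]
    | succ j ih =>
      intro k hk hk1 p hp
      rcases Nat.lt_or_ge k (j + 2) with hkj | hkj
      · -- k ≤ j + 1 : endpoints persist from level j to j + 1
        have hkj' : k ≤ j + 1 := by omega
        obtain ⟨e1, e2, e3⟩ := ih k hk hkj' p hp
        obtain ⟨b', hb'⟩ := epl k hk p hp (j + 1) hkj'
        obtain ⟨a', ha'⟩ := epr k hk p hp (j + 1) hkj'
        have hL : f (j + 1) p.1 = f j p.1 := by
          have := Vleft (j + 1) (by omega) _ hb'
          simpa using this
        have hR : f (j + 1) p.2 = f j p.2 := by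
          have h1 : f (j + 1) p.2 = f j a' + w (j + 2) := by
            have := Vright (j + 1) (by omega) _ ha'
            simpa using this
          have h2 := (ih (j + 1) (by omega) le_rfl _ ha').2.2
          simp only [Nat.add_sub_cancel] at h2
          linarith
        exact ⟨hL.trans e1, hR.trans e2, e3⟩
      · -- k = j + 2 : new intervals
        have hkj' : k = j + 2 := by omega
        subst hkj'
        refine ⟨by simp, by simp, ?_⟩
        rcases (memI (j + 1) (by omega) p).1 hp with ⟨P, hP, hc⟩
        have hr3 : w (j + 3) = w (j + 2) / 2 - ε (j + 2) := by
          simpa using hwrec (j + 2) (by omega)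
        rcases hc with rfl | rfl
        · have h1 := Vleft (j + 1) (by omega) P hP
          have h2 := Vm1 (j + 1) (by omega) P hP
          simp only [Nat.add_sub_cancel] at h1 h2
          simp only [show j + 2 - 1 = j + 1 from rfl]
          rw [h1, h2]
          ring_nf
        · have h1 := Vm2 (j + 1) (by omega) P hP
          have h2 := Vright (j + 1) (by omega) P hP
          simp only [Nat.add_sub_cancel] at h1 h2
          simp only [show j + 2 - 1 = j + 1 from rfl]
          rw [h1, h2]
          linarith
  -- ============ local Lipschitz/monotone on an interval ============
  have Loc : ∀ k, 1 ≤ k → ∀ p ∈ I k, ∀ x y : ℝ, p.1 ≤ x → x ≤ y → y ≤ p.2 →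
      0 ≤ f k y - f k x ∧ f k y - f k x ≤ 1 / 2 * (y - x) := by
    intro k hk p hp x y hax hxy hyb
    obtain ⟨h0a, hb1, hba⟩ := geom k hk p hp
    have hε := hεp k hk
    have hε1 := hεpos k hk
    have hw := hwε k hk
    have hw1p := hwp (k + 1) (by omega)
    have hσ' := hσ k hk
    have hτ' := hτ k hk
    have hτε : ε (k + 1) / ε k * ε k = ε (k + 1) := div_mul_cancel₀ _ (ne_of_gt hε)
    have key : w (k + 2) / w (k + 1) * ((p.1 + p.2) / 2 - ε k - p.1) = w (k + 2) := by
      rw [show (p.1 + p.2) / 2 - ε k - p.1 = w (k + 1) from by rw [hwrec k hk]; linarith]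
      exact div_mul_cancel₀ _ (ne_of_gt hw1p)
    have hay : p.1 ≤ y := hax.trans hxy
    have hxb : x ≤ p.2 := hxy.trans hyb
    have hfL := hfleft k hk p hp
    have hfM := hfmid k hk p hp
    have hfR := hfright k hk p hp
    clear hfleft hfmid hfright hfout hFlim hIrec hI1 memI geom sub disj cont
    clear Vleft Vm1 Vm2 Vright epl epr S hfmaps hf0 hεgeom hIcc hεw hεquot hεpos hwrec
    rcases le_or_gt x ((p.1 + p.2) / 2 - ε k) with hxL | hx1
    · rcases le_or_gt y ((p.1 + p.2) / 2 - ε k) with hyL | hy1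
      · -- x L, y L
        rw [hfL x hax hxL, hfL y hay hyL]
        constructor <;> linarith [mul_nonneg (le_of_lt hσ'.1) (sub_nonneg.2 hxy),
          mul_nonneg (by linarith [hσ'.2] : (0:ℝ) ≤ 1 / 2 - w (k + 2) / w (k + 1))
            (sub_nonneg.2 hxy)]
      · rcases lt_or_ge y ((p.1 + p.2) / 2 + ε k) with hyM | hyR
        · -- x L, y M
          rw [hfL x hax hxL,
            hfM y (abs_lt.2 ⟨by linarith, by linarith⟩)]
          have l1 : (0:ℝ) ≤ y - ((p.1 + p.2) / 2 - ε k) := by linarith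
          have l2 : (0:ℝ) ≤ (p.1 + p.2) / 2 - ε k - x := by linarith
          constructor <;>
            linarith [mul_nonneg (le_of_lt hτ'.1) l1, mul_nonneg (le_of_lt hσ'.1) l2,
              mul_nonneg (by linarith [hτ'.2] : (0:ℝ) ≤ 1 / 2 - ε (k + 1) / ε k) l1,
              mul_nonneg (by linarith [hσ'.2] : (0:ℝ) ≤ 1 / 2 - w (k + 2) / w (k + 1)) l2, key]
        · -- x L, y R
          rw [hfL x hax hxL, hfR y hyR hyb]
          have l1 : (0:ℝ) ≤ y - ((p.1 + p.2) / 2 + ε k) := by linarith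
          have l2 : (0:ℝ) ≤ (p.1 + p.2) / 2 - ε k - x := by linarith
          constructor <;>
            linarith [mul_nonneg (le_of_lt hσ'.1) l1, mul_nonneg (le_of_lt hσ'.1) l2,
              mul_nonneg (by linarith [hσ'.2] : (0:ℝ) ≤ 1 / 2 - w (k + 2) / w (k + 1)) l1,
              mul_nonneg (by linarith [hσ'.2] : (0:ℝ) ≤ 1 / 2 - w (k + 2) / w (k + 1)) l2,
              mul_nonneg (by linarith [hτ'.2] : (0:ℝ) ≤ 1 / 2 - ε (k + 1) / ε k)
                (by linarith : (0:ℝ) ≤ 2 * ε k), hτε, key]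
    · rcases lt_or_ge x ((p.1 + p.2) / 2 + ε k) with hxM | hxR
      · rcases lt_or_ge y ((p.1 + p.2) / 2 + ε k) with hyM | hyR
        · -- x M, y M
          rw [hfM x (abs_lt.2 ⟨by linarith, by linarith⟩),
            hfM y (abs_lt.2 ⟨by linarith, by linarith⟩)]
          constructor <;> linarith [mul_nonneg (le_of_lt hτ'.1) (sub_nonneg.2 hxy),
            mul_nonneg (by linarith [hτ'.2] : (0:ℝ) ≤ 1 / 2 - ε (k + 1) / ε k)
              (sub_nonneg.2 hxy)]
        · -- x M, y R
          rw [hfM x (abs_lt.2 ⟨by linarith, by linarith⟩),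
            hfR y hyR hyb]
          have l1 : (0:ℝ) ≤ y - ((p.1 + p.2) / 2 + ε k) := by linarith
          have l2 : (0:ℝ) ≤ (p.1 + p.2) / 2 + ε k - x := by linarith
          constructor <;>
            linarith [mul_nonneg (le_of_lt hσ'.1) l1, mul_nonneg (le_of_lt hτ'.1) l2,
              mul_nonneg (by linarith [hσ'.2] : (0:ℝ) ≤ 1 / 2 - w (k + 2) / w (k + 1)) l1,
              mul_nonneg (by linarith [hτ'.2] : (0:ℝ) ≤ 1 / 2 - ε (k + 1) / ε k) l2, hτε, key]
      · -- x R, y R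
        rw [hfR x hxR hxb, hfR y (hxR.trans hxy) hyb]
        constructor <;> linarith [mul_nonneg (le_of_lt hσ'.1) (sub_nonneg.2 hxy),
          mul_nonneg (by linarith [hσ'.2] : (0:ℝ) ≤ 1 / 2 - w (k + 2) / w (k + 1))
            (sub_nonneg.2 hxy)]
  -- ============ global monotone/Lipschitz for each f j ============
  have M : ∀ j : ℕ, ∀ x ∈ Set.Icc (0:ℝ) 1, ∀ y ∈ Set.Icc (0:ℝ) 1, x ≤ y →
      0 ≤ f j y - f j x ∧ f j y - f j x ≤ 1 / 2 * (y - x) := by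
    intro j
    induction j with
    | zero =>
      intro x _ y _ hxy
      rw [hf0, hf0]
      constructor <;> linarith
    | succ j ihM =>
      intro x hx y hy hxy
      have hj1 : 1 ≤ j + 1 := by omega
      by_cases hxU : ∃ p ∈ I (j + 1), x ∈ Set.Icc p.1 p.2
      · obtain ⟨p, hp, hxp⟩ := hxU
        by_cases hyp : y ≤ p.2
        · exact Loc (j + 1) hj1 p hp x y hxp.1 hxy hyp
        · push_neg at hyp
          have hS := S (j + 1) (j + 1) hj1 (by omega) p hp
          simp only [Nat.add_sub_cancel] at hS
          have h1 := Loc (j + 1) hj1 p hp x p.2 hxp.1 hxp.2 le_rfl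
          by_cases hyU : ∃ q ∈ I (j + 1), y ∈ Set.Icc q.1 q.2
          · obtain ⟨q, hq, hyq⟩ := hyU
            rcases le_or_gt q.1 p.2 with hq1 | hq1
            · have h2 := Loc (j + 1) hj1 q hq p.2 y hq1 (le_of_lt hyp) hyq.2
              exact ⟨by linarith [h1.1, h2.1], by linarith [h1.2, h2.2]⟩
            · have h2 := Loc (j + 1) hj1 q hq q.1 y le_rfl hyq.1 hyq.2
              have hSq := S (j + 1) (j + 1) hj1 (by omega) q hq
              simp only [Nat.add_sub_cancel] at hSq
              have h3 := ihM p.2 (hIcc (j + 1) hj1 p hp).2 q.1 (hIcc (j + 1) hj1 q hq).1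
                (le_of_lt hq1)
              exact ⟨by linarith [h1.1, h2.1, h3.1, hS.2.1, hSq.1],
                by linarith [h1.2, h2.2, h3.2, hS.2.1, hSq.1]⟩
          · have hyout : f (j + 1) y = f j y := by
              have hnot : y ∉ ⋃ q ∈ I (j + 1), Set.Icc q.1 q.2 := by
                simp only [Set.mem_iUnion, exists_prop, not_exists, not_and]
                intro q hq hmem
                exact hyU ⟨q, hq, hmem⟩
              have := hfout (j + 1) hj1 y ⟨hy, hnot⟩
              simpa using this
            have h3 := ihM p.2 (hIcc (j + 1) hj1 p hp).2 y hy (le_of_lt hyp)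
            exact ⟨by linarith [h1.1, h3.1, hS.2.1], by linarith [h1.2, h3.2, hS.2.1]⟩
      · have hxout : f (j + 1) x = f j x := by
          have hnot : x ∉ ⋃ q ∈ I (j + 1), Set.Icc q.1 q.2 := by
            simp only [Set.mem_iUnion, exists_prop, not_exists, not_and]
            intro q hq hmem
            exact hxU ⟨q, hq, hmem⟩
          have := hfout (j + 1) hj1 x ⟨hx, hnot⟩
          simpa using this
        by_cases hyU : ∃ q ∈ I (j + 1), y ∈ Set.Icc q.1 q.2
        · obtain ⟨q, hq, hyq⟩ := hyU
          have hxq : x < q.1 := by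
            by_contra h
            push_neg at h
            exact hxU ⟨q, hq, h, hxy.trans hyq.2⟩
          have h2 := Loc (j + 1) hj1 q hq q.1 y le_rfl hyq.1 hyq.2
          have hSq := S (j + 1) (j + 1) hj1 (by omega) q hq
          simp only [Nat.add_sub_cancel] at hSq
          have h3 := ihM x hx q.1 (hIcc (j + 1) hj1 q hq).1 (le_of_lt hxq)
          exact ⟨by linarith [h2.1, h3.1, hSq.1], by linarith [h2.2, h3.2, hSq.1]⟩
        · have hyout : f (j + 1) y = f j y := by
            have hnot : y ∉ ⋃ q ∈ I (j + 1), Set.Icc q.1 q.2 := by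
              simp only [Set.mem_iUnion, exists_prop, not_exists, not_and]
              intro q hq hmem
              exact hyU ⟨q, hq, hmem⟩
            have := hfout (j + 1) hj1 y ⟨hy, hnot⟩
            simpa using this
          have h3 := ihM x hx y hy hxy
          exact ⟨by linarith [h3.1], by linarith [h3.2]⟩
  -- ============ gap stability ============
  have gapstab : ∀ m, 1 ≤ m → ∀ p ∈ I m, ∀ u : ℝ, |u - (p.1 + p.2) / 2| < ε m →
      ∀ j, m ≤ j → f j u = f m u := by
    intro m hm p hp u hu j hj
    obtain ⟨h0a, hb1, hba⟩ := geom m hm p hp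
    have hε := hεp m hm
    have hw := hwε m hm
    have hu' := abs_lt.1 hu
    induction j, hj using Nat.le_induction with
    | base => rfl
    | succ j hj ih =>
      have hstep : f (j + 1) u = f j u := by
        have hnot : u ∉ ⋃ q ∈ I (j + 1), Set.Icc q.1 q.2 := by
          simp only [Set.mem_iUnion, exists_prop, not_exists, not_and]
          intro q hq hmem
          obtain ⟨r, hr, hr1, hr2⟩ := cont (m + 1) (by omega) (j + 1) (by omega) q hq
          rcases (memI m hm r).1 hr with ⟨P, hP, hc⟩
          by_cases hPp : P = p
          · subst hPp
            rcases hc with rfl | rfl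
            · simp only at hr1 hr2
              linarith [hmem.1, hmem.2, hu'.1, hu'.2]
            · simp only at hr1 hr2
              linarith [hmem.1, hmem.2, hu'.1, hu'.2]
          · obtain ⟨hP0, hP1, hPw⟩ := geom m hm P hP
            have hrP : P.1 ≤ r.1 ∧ r.2 ≤ P.2 := by
              have hεP := hεp m hm
              have hwP := hwε m hm
              rcases hc with rfl | rfl <;> constructor <;> simp <;> linarith
            rcases disj m hm P hP p hp hPp with h | h <;>
              linarith [hmem.1, hmem.2, hu'.1, hu'.2, hrP.1, hrP.2]
        have := hfout (j + 1) (by omega) u ⟨⟨by linarith, by linarith⟩, hnot⟩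
        simpa using this
      rw [hstep, ih]
  -- ============ limit-level facts ============
  have Fmono : ∀ x ∈ Set.Icc (0:ℝ) 1, ∀ y ∈ Set.Icc (0:ℝ) 1, x ≤ y → F x ≤ F y := by
    intro x hx y hy hxy
    have hT : Filter.Tendsto (fun j => f j y - f j x) Filter.atTop (nhds (F y - F x)) :=
      (hFlim y hy).sub (hFlim x hx)
    have h1 : (0:ℝ) ≤ F y - F x :=
      le_of_tendsto_of_tendsto' tendsto_const_nhds hT fun j => (M j x hx y hy hxy).1
    linarith
  have Fval : ∀ x ∈ Set.Icc (0:ℝ) 1, ∀ m c, (∀ j, m ≤ j → f j x = c) → F x = c := by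
    intro x hx m c h
    refine tendsto_nhds_unique (hFlim x hx) (Filter.Tendsto.congr' ?_ tendsto_const_nhds)
    filter_upwards [Filter.eventually_ge_atTop m] with j hj using (h j hj).symm
  -- strictness
  have strict : ∀ n : ℕ, ∀ m, 1 ≤ m → ∀ p ∈ I m, ∀ x y : ℝ,
      p.1 ≤ x → x < y → y ≤ p.2 → w m ≤ (y - x) * 2 ^ n → F x < F y := by
    intro n
    induction n with
    | zero =>
      intro m hm p hp x y hax hxy hyb hwn
      obtain ⟨h0a, hb1, hba⟩ := geom m hm p hp
      rw [pow_zero, mul_one] at hwn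
      have hxa : x = p.1 := by linarith
      have hyb' : y = p.2 := by linarith
      subst hxa
      subst hyb'
      have hp1I := (hIcc m hm p hp).1
      have hp2I := (hIcc m hm p hp).2
      have e1 : F p.1 = f (m - 1) p.1 :=
        Fval p.1 hp1I (m - 1) _ (fun j hj => (S j m hm (by omega) p hp).1)
      have e2 : F p.2 = f (m - 1) p.2 :=
        Fval p.2 hp2I (m - 1) _ (fun j hj => (S j m hm (by omega) p hp).2.1)
      have e3 := (S (m - 1) m hm (by omega) p hp).2.2
      have hwm1 := hwp (m + 1) (by omega)
      rw [e1, e2]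
      linarith
    | succ n ihn =>
      intro m hm p hp x y hax hxy hyb hwn
      obtain ⟨h0a, hb1, hba⟩ := geom m hm p hp
      have hε := hεp m hm
      have hεs := hεpos m hm
      have hw := hwε m hm
      have hrec := hwrec m hm
      have hτ' := hτ m hm
      have hτε : ε (m + 1) / ε m * ε m = ε (m + 1) := div_mul_cancel₀ _ (ne_of_gt hε)
      have h2n : (0:ℝ) < 2 ^ n := by positivity
      have hpow : (y - x) * 2 ^ (n + 1) = ((y - x) * 2 ^ n) * 2 := by ring
      rcases le_or_gt y ((p.1 + p.2) / 2 - ε m) with hyL | hy1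
      · -- recurse into left child
        have hchild : ((p.1, (p.1 + p.2) / 2 - ε m) : ℝ × ℝ) ∈ I (m + 1) := by
          rw [memI m hm]
          exact ⟨p, hp, Or.inl rfl⟩
        refine ihn (m + 1) (by omega) _ hchild x y hax hxy hyL ?_
        rw [hrec]
        nlinarith [hwn]
      · rcases le_or_gt ((p.1 + p.2) / 2 + ε m) x with hxR | hx1
        · -- recurse into right child
          have hchild : (((p.1 + p.2) / 2 + ε m, p.2) : ℝ × ℝ) ∈ I (m + 1) := by
            rw [memI m hm]
            exact ⟨p, hp, Or.inr rfl⟩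
          refine ihn (m + 1) (by omega) _ hchild x y hxR hxy hyb ?_
          rw [hrec]
          nlinarith [hwn]
        · -- the middle gap of p is involved
          have hxI : x ∈ Set.Icc (0:ℝ) 1 := ⟨by linarith, by linarith⟩
          have hyI : y ∈ Set.Icc (0:ℝ) 1 := ⟨by linarith, by linarith⟩
          have hglI : (p.1 + p.2) / 2 - ε m ∈ Set.Icc (0:ℝ) 1 := ⟨by linarith, by linarith⟩
          have hgrI : (p.1 + p.2) / 2 + ε m ∈ Set.Icc (0:ℝ) 1 := ⟨by linarith, by linarith⟩
          have hchildL : ((p.1, (p.1 + p.2) / 2 - ε m) : ℝ × ℝ) ∈ I (m + 1) := by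
            rw [memI m hm]
            exact ⟨p, hp, Or.inl rfl⟩
          have hchildR : (((p.1 + p.2) / 2 + ε m, p.2) : ℝ × ℝ) ∈ I (m + 1) := by
            rw [memI m hm]
            exact ⟨p, hp, Or.inr rfl⟩
          have hgl : F ((p.1 + p.2) / 2 - ε m) = f m ((p.1 + p.2) / 2 - ε m) := by
            refine Fval _ hglI m _ (fun j hj => ?_)
            have := (S j (m + 1) (by omega) (by omega) _ hchildL).2.1
            simpa using this
          have hgr : F ((p.1 + p.2) / 2 + ε m) = f m ((p.1 + p.2) / 2 + ε m) := by
            refine Fval _ hgrI m _ (fun j hj => ?_)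
            have := (S j (m + 1) (by omega) (by omega) _ hchildR).1
            simpa using this
          have hvl : f m ((p.1 + p.2) / 2 - ε m) = f (m - 1) p.1 + w (m + 2) := Vm1 m hm p hp
          have hvr : f m ((p.1 + p.2) / 2 + ε m)
              = f (m - 1) p.1 + w (m + 2) + 2 * ε (m + 1) := Vm2 m hm p hp
          rcases le_or_gt x ((p.1 + p.2) / 2 - ε m) with hxL | hxG
          · rcases le_or_gt ((p.1 + p.2) / 2 + ε m) y with hyR | hyG
            · -- (A) gap strictly inside [x,y]
              have m1 := Fmono x hxI _ hglI hxL
              have m2 := Fmono _ hgrI y hyI hyR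
              have := hεpos m hm
              calc F x ≤ F ((p.1 + p.2) / 2 - ε m) := m1
                _ < F ((p.1 + p.2) / 2 + ε m) := by rw [hgl, hgr, hvl, hvr]; linarith
                _ ≤ F y := m2
            · -- (B) y strictly inside the gap
              have hyg : F y = f m y :=
                Fval y hyI m _ (gapstab m hm p hp y (abs_lt.2 ⟨by linarith, by linarith⟩))
              have hfy := hfmid m hm p hp y (abs_lt.2 ⟨by linarith, by linarith⟩)
              have m1 := Fmono x hxI _ hglI hxL
              have key : (0:ℝ) < ε (m + 1) / ε m * (y - (p.1 + p.2) / 2 + ε m) :=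
                mul_pos hτ'.1 (by linarith)
              calc F x ≤ F ((p.1 + p.2) / 2 - ε m) := m1
                _ < F y := by rw [hgl, hvl, hyg, hfy]; linarith
          · rcases le_or_gt ((p.1 + p.2) / 2 + ε m) y with hyR | hyG
            · -- (C1) x strictly inside the gap
              have hxg : F x = f m x :=
                Fval x hxI m _ (gapstab m hm p hp x (abs_lt.2 ⟨by linarith, by linarith⟩))
              have hfx := hfmid m hm p hp x (abs_lt.2 ⟨by linarith, by linarith⟩)
              have m2 := Fmono _ hgrI y hyI hyR
              have key : (0:ℝ) < ε (m + 1) / ε m * ((p.1 + p.2) / 2 + ε m - x) :=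
                mul_pos hτ'.1 (by linarith)
              calc F x < F ((p.1 + p.2) / 2 + ε m) := by
                    rw [hgr, hvr, hxg, hfx]
                    linarith [hτε]
                _ ≤ F y := m2
            · -- (C2) both inside the gap
              have hxg : F x = f m x :=
                Fval x hxI m _ (gapstab m hm p hp x (abs_lt.2 ⟨by linarith, by linarith⟩))
              have hyg : F y = f m y :=
                Fval y hyI m _ (gapstab m hm p hp y (abs_lt.2 ⟨by linarith, by linarith⟩))
              have hfx := hfmid m hm p hp x (abs_lt.2 ⟨by linarith, by linarith⟩)
              have hfy := hfmid m hm p hp y (abs_lt.2 ⟨by linarith, by linarith⟩)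
              have key : (0:ℝ) < ε (m + 1) / ε m * (y - x) := mul_pos hτ'.1 (by linarith)
              rw [hxg, hyg, hfx, hfy]
              linarith
  -- ============ conclusion ============
  refine ⟨?_, ?_, ?_⟩
  · intro x hx
    have hT := hFlim x hx
    exact isClosed_Icc.mem_of_tendsto hT (Filter.Eventually.of_forall fun k => hfmaps k hx)
  · intro x hx y hy hxy
    obtain ⟨n, hn⟩ : ∃ n : ℕ, w 1 ≤ (y - x) * 2 ^ n := by
      obtain ⟨n, hn⟩ := pow_unbounded_of_one_lt (w 1 / (y - x)) (by norm_num : (1:ℝ) < 2)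
      exact ⟨n, by rw [div_lt_iff₀ (by linarith : (0:ℝ) < y - x)] at hn; linarith [hn]⟩
    have h01 : ((0:ℝ), (1:ℝ)) ∈ I 1 := by rw [hI1]; rfl
    exact strict n 1 le_rfl _ h01 x y hx.1 hxy hy.2 hn
  · intro x hx y hy
    have main : ∀ u ∈ Set.Icc (0:ℝ) 1, ∀ v ∈ Set.Icc (0:ℝ) 1, u ≤ v →
        |F u - F v| ≤ 1 / 2 * |u - v| := by
      intro u hu v hv huv
      have hT : Filter.Tendsto (fun j => f j v - f j u) Filter.atTop (nhds (F v - F u)) :=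
        (hFlim v hv).sub (hFlim u hu)
      have h1 : (0:ℝ) ≤ F v - F u :=
        le_of_tendsto_of_tendsto' tendsto_const_nhds hT fun j => (M j u hu v hv huv).1
      have h2 : F v - F u ≤ 1 / 2 * (v - u) :=
        le_of_tendsto_of_tendsto' hT tendsto_const_nhds fun j => (M j u hu v hv huv).2
      rw [abs_sub_comm, abs_of_nonneg h1, abs_sub_comm, abs_of_nonneg (by linarith)]
      linarith
    rcases le_total x y with h | h
    · exact main x hx y hy h
    · rw [abs_sub_comm, abs_sub_comm x y]
      exact main y hy x hx h
end

section
/- If x is an endpoint of an interval belonging to 𝓘_k for some k ∈ ℕ, then f(x) = f_{k−1}(x), where f is the uniform limit of the sequence (f_k). -/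
open Set MeasureTheory Filter

theorem stmt_17
    (ε w : ℕ → ℝ)
    (hw1 : w 1 = 1) (hε1 : ε 1 = 1 / 6)
    (hwrec : ∀ k, 1 ≤ k → w (k + 1) = w k / 2 - ε k)
    (hεpos : ∀ k, 1 ≤ k → 0 < ε (k + 1))
    (hεgeom : ∀ k, 1 ≤ k → 2 ^ k * ε (k + 1) < 1 / 2 * (1 / 4 ^ k))
    (hεquot : ∀ k, 1 ≤ k → ε (k + 1) / ε k < 1 / 2)
    (hεw : ∀ k, 1 ≤ k → ε (k + 1) < w k / 4 - ε k / 2)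
    (I : ℕ → Set (ℝ × ℝ))
    (hI1 : I 1 = {((0 : ℝ), (1 : ℝ))})
    (hIrec : ∀ k, 1 ≤ k → I (k + 1) =
      ⋃ p ∈ I k, {(p.1, (p.1 + p.2) / 2 - ε k), ((p.1 + p.2) / 2 + ε k, p.2)})
    (f : ℕ → ℝ → ℝ)
    (hf0 : ∀ x, f 0 x = x / 3)
    (hfmaps : ∀ k, Set.MapsTo (f k) (Set.Icc (0 : ℝ) 1) (Set.Icc (0 : ℝ) 1))
    (hfleft : ∀ k, 1 ≤ k → ∀ p ∈ I k, ∀ x : ℝ, p.1 ≤ x → x ≤ (p.1 + p.2) / 2 - ε k →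
      f k x = w (k + 2) / w (k + 1) * (x - p.1) + f (k - 1) p.1)
    (hfmid : ∀ k, 1 ≤ k → ∀ p ∈ I k, ∀ x : ℝ, |x - (p.1 + p.2) / 2| < ε k →
      f k x = ε (k + 1) / ε k * (x - (p.1 + p.2) / 2 + ε k) + f (k - 1) p.1 + w (k + 2))
    (hfright : ∀ k, 1 ≤ k → ∀ p ∈ I k, ∀ x : ℝ, (p.1 + p.2) / 2 + ε k ≤ x → x ≤ p.2 →
      f k x = w (k + 2) / w (k + 1) * (x - (p.1 + p.2) / 2 - ε k) + f (k - 1) p.1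
        + w (k + 2) + 2 * ε (k + 1))
    (hfout : ∀ k, 1 ≤ k → ∀ x ∈ Set.Icc (0 : ℝ) 1 \ (⋃ p ∈ I k, Set.Icc p.1 p.2),
      f k x = f (k - 1) x)
    (F : ℝ → ℝ)
    (hFlim : ∀ x ∈ Set.Icc (0 : ℝ) 1, Filter.Tendsto (fun k => f k x) Filter.atTop (nhds (F x)))
    :
    ∀ k, 1 ≤ k → ∀ p ∈ I k, F p.1 = f (k - 1) p.1 ∧ F p.2 = f (k - 1) p.2 := by
  -- ε is positive
  have hεpos' : ∀ m, 1 ≤ m → 0 < ε m := by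
    intro m hm
    obtain ⟨n, rfl⟩ : ∃ n, m = n + 1 := ⟨m - 1, by omega⟩
    cases n with
    | zero => rw [hε1]; norm_num
    | succ n => exact hεpos (n + 1) (by omega)
  -- ε m < w m / 2
  have hεw' : ∀ m, 1 ≤ m → ε m < w m / 2 := by
    intro m hm
    have h1 := hεpos m hm
    have h2 := hεw m hm
    linarith
  have hwpos : ∀ m, 1 ≤ m → 0 < w m := by
    intro m hm
    have := hεpos' m hm
    have := hεw' m hm
    linarith
  -- Lemma A : endpoints in [0,1] and length = w m
  have hA : ∀ m, 1 ≤ m → ∀ p ∈ I m, 0 ≤ p.1 ∧ p.2 ≤ 1 ∧ p.2 - p.1 = w m := by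
    intro m
    induction m with
    | zero => intro h; omega
    | succ n ih =>
      intro _ p hp
      rcases Nat.eq_zero_or_pos n with h0 | hpos
      · subst h0
        rw [hI1] at hp
        simp only [Set.mem_singleton_iff] at hp
        subst hp
        refine ⟨le_refl _, le_refl _, ?_⟩
        simp [hw1]
      · rw [hIrec n hpos] at hp
        simp only [Set.mem_iUnion, Set.mem_insert_iff, Set.mem_singleton_iff] at hp
        obtain ⟨q, hq, hcase⟩ := hp
        obtain ⟨hq1, hq2, hqlen⟩ := ih hpos q hq
        have hwr := hwrec n hpos
        have hε := hεw' n hpos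
        have hwn := hwpos n hpos
        have hεp := hεpos' n hpos
        rcases hcase with rfl | rfl
        · exact ⟨hq1, by simp only; linarith, by simp only; linarith⟩
        · exact ⟨by simp only; linarith, hq2, by simp only; linarith⟩
  -- f m fixes left endpoints
  have hB1 : ∀ m, 1 ≤ m → ∀ p ∈ I m, f m p.1 = f (m - 1) p.1 := by
    intro m hm p hp
    obtain ⟨h1, h2, hlen⟩ := hA m hm p hp
    have hε := hεw' m hm
    have := hfleft m hm p hp p.1 le_rfl (by linarith)
    rw [this]; ring
  -- Lemma D : f (m-1) p.2 = f (m-1) p.1 + w (m+1)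
  have hD : ∀ m, 1 ≤ m → ∀ p ∈ I m, f (m - 1) p.2 = f (m - 1) p.1 + w (m + 1) := by
    intro m hm p hp
    obtain ⟨n, rfl⟩ : ∃ n, m = n + 1 := ⟨m - 1, by omega⟩
    rcases Nat.eq_zero_or_pos n with h0 | hpos
    · subst h0
      rw [hI1] at hp
      simp only [Set.mem_singleton_iff] at hp
      subst hp
      have hwr := hwrec 1 le_rfl
      simp only [Nat.add_sub_cancel, hf0]
      rw [hwr, hw1, hε1]
      norm_num
    · rw [hIrec n hpos] at hp
      simp only [Set.mem_iUnion, Set.mem_insert_iff, Set.mem_singleton_iff] at hp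
      obtain ⟨q, hq, hcase⟩ := hp
      obtain ⟨hq1, hq2, hqlen⟩ := hA n hpos q hq
      have hwr := hwrec n hpos
      have hε := hεw' n hpos
      have hwn := hwpos n hpos
      have hwn1 : 0 < w (n + 1) := hwpos (n + 1) (by omega)
      have hwn1' : w (n + 1) ≠ 0 := ne_of_gt hwn1
      simp only [Nat.add_sub_cancel]
      rcases hcase with rfl | rfl
      · -- left child (q.1, mid - ε n)
        have e1 := hfleft n hpos q hq q.1 le_rfl (by linarith)
        have e2 := hfleft n hpos q hq ((q.1 + q.2) / 2 - ε n) (by linarith) le_rfl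
        simp only at e1 e2 ⊢
        rw [e1, e2]
        have : (q.1 + q.2) / 2 - ε n - q.1 = w (n + 1) := by linarith
        rw [this, div_mul_cancel₀ _ hwn1']
        ring
      · -- right child (mid + ε n, q.2)
        have e1 := hfright n hpos q hq ((q.1 + q.2) / 2 + ε n) le_rfl (by linarith)
        have e2 := hfright n hpos q hq q.2 (by linarith) le_rfl
        simp only at e1 e2 ⊢
        rw [e1, e2]
        have : q.2 - (q.1 + q.2) / 2 - ε n = w (n + 1) := by linarith
        rw [this, div_mul_cancel₀ _ hwn1']
        ring
  -- f m fixes right endpoints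
  have hB2 : ∀ m, 1 ≤ m → ∀ p ∈ I m, f m p.2 = f (m - 1) p.2 := by
    intro m hm p hp
    obtain ⟨h1, h2, hlen⟩ := hA m hm p hp
    have hε := hεw' m hm
    have hwm := hwpos m hm
    have hwm1 : 0 < w (m + 1) := hwpos (m + 1) (by omega)
    have hwr := hwrec m hm
    have hwr2 := hwrec (m + 1) (by omega)
    have e := hfright m hm p hp p.2 (by linarith) le_rfl
    rw [e, hD m hm p hp]
    have : p.2 - (p.1 + p.2) / 2 - ε m = w (m + 1) := by linarith
    rw [this, div_mul_cancel₀ _ (ne_of_gt hwm1)]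
    rw [hwr2]
    ring
  -- endpoints persist to later generations
  have hH : ∀ k, 1 ≤ k → ∀ p ∈ I k, ∀ m, k ≤ m →
      (∃ q ∈ I m, q.1 = p.1) ∧ (∃ q ∈ I m, q.2 = p.2) := by
    intro k hk p hp m hm
    induction m, hm using Nat.le_induction with
    | base => exact ⟨⟨p, hp, rfl⟩, ⟨p, hp, rfl⟩⟩
    | succ n hn ih =>
      obtain ⟨⟨q, hq, hq1⟩, ⟨r, hr, hr2⟩⟩ := ih
      have hn1 : 1 ≤ n := le_trans hk hn
      rw [hIrec n hn1]
      constructor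
      · refine ⟨(q.1, (q.1 + q.2) / 2 - ε n), ?_, hq1⟩
        simp only [Set.mem_iUnion, Set.mem_insert_iff, Set.mem_singleton_iff]
        exact ⟨q, hq, Or.inl rfl⟩
      · refine ⟨((r.1 + r.2) / 2 + ε n, r.2), ?_, hr2⟩
        simp only [Set.mem_iUnion, Set.mem_insert_iff, Set.mem_singleton_iff]
        exact ⟨r, hr, Or.inr rfl⟩
  -- eventual constancy
  have hconst1 : ∀ k, 1 ≤ k → ∀ p ∈ I k, ∀ m, k - 1 ≤ m → f m p.1 = f (k - 1) p.1 := by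
    intro k hk p hp m hm
    induction m, hm using Nat.le_induction with
    | base => rfl
    | succ n hn ih =>
      obtain ⟨⟨q, hq, hq1⟩, -⟩ := hH k hk p hp (n + 1) (by omega)
      calc f (n + 1) p.1 = f (n + 1) q.1 := by rw [hq1]
        _ = f n q.1 := hB1 (n + 1) (by omega) q hq
        _ = f n p.1 := by rw [hq1]
        _ = f (k - 1) p.1 := ih
  have hconst2 : ∀ k, 1 ≤ k → ∀ p ∈ I k, ∀ m, k - 1 ≤ m → f m p.2 = f (k - 1) p.2 := by
    intro k hk p hp m hm
    induction m, hm using Nat.le_induction with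
    | base => rfl
    | succ n hn ih =>
      obtain ⟨-, ⟨q, hq, hq2⟩⟩ := hH k hk p hp (n + 1) (by omega)
      calc f (n + 1) p.2 = f (n + 1) q.2 := by rw [hq2]
        _ = f n q.2 := hB2 (n + 1) (by omega) q hq
        _ = f n p.2 := by rw [hq2]
        _ = f (k - 1) p.2 := ih
  intro k hk p hp
  obtain ⟨h1, h2, hlen⟩ := hA k hk p hp
  have hwk := hwpos k hk
  have hmem1 : p.1 ∈ Set.Icc (0 : ℝ) 1 := ⟨h1, by linarith⟩
  have hmem2 : p.2 ∈ Set.Icc (0 : ℝ) 1 := ⟨by linarith, h2⟩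
  constructor
  · have t1 := hFlim p.1 hmem1
    have ev1 : (fun m => f m p.1) =ᶠ[Filter.atTop] (fun _ => f (k - 1) p.1) :=
      Filter.eventually_atTop.mpr ⟨k - 1, fun m hm => hconst1 k hk p hp m hm⟩
    exact tendsto_nhds_unique t1 (Filter.Tendsto.congr' ev1.symm tendsto_const_nhds)
  · have t2 := hFlim p.2 hmem2
    have ev2 : (fun m => f m p.2) =ᶠ[Filter.atTop] (fun _ => f (k - 1) p.2) :=
      Filter.eventually_atTop.mpr ⟨k - 1, fun m hm => hconst2 k hk p hp m hm⟩
    exact tendsto_nhds_unique t2 (Filter.Tendsto.congr' ev2.symm tendsto_const_nhds)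
end
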